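/- arXiv:2205.13078 — 9 statements merged into one kernel-verified Lean document; each statement's English description precedes it below -/
import Mathlib

section
/- Let X be a locally compact Hausdorff space and let f ∈ C₀(X). Then f is a left-symmetric point of C₀(X) if and only if either f is identically zero, or there exists x₀ ∈ X such that M_f = {x₀} and f(x) = 0 for every x ≠ x₀. -/
open scoped ZeroAtInfty
open Complex

section LeftSymAux

variable {X : Type*} [TopologicalSpace X] [T2Space X] [LocallyCompactSpace X]

private lemma norm_apply_le' (f : C₀(X, ℂ)) (x : X) : ‖f x‖ ≤ ‖f‖ :=
  f.toBCF.norm_coe_le_norm x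

private lemma norm_le_of_forall' {f : C₀(X, ℂ)} {C : ℝ} (hC : 0 ≤ C)
    (h : ∀ x, ‖f x‖ ≤ C) : ‖f‖ ≤ C := by
  rw [← ZeroAtInftyContinuousMap.norm_toBCF_eq_norm]
  exact (BoundedContinuousFunction.norm_le hC).2 h

private lemma exists_norm_attain' {f : C₀(X, ℂ)} (hf : f ≠ 0) : ∃ x, ‖f x‖ = ‖f‖ := by
  have hpos : 0 < ‖f‖ := norm_pos_iff.mpr hf
  have hmem : {x : X | ‖f x‖ < ‖f‖ / 2} ∈ Filter.cocompact X := by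
    have h1 : ∀ᶠ x in Filter.cocompact X, dist (f x) 0 < ‖f‖ / 2 :=
      Metric.tendsto_nhds.mp (ZeroAtInftyContinuousMap.zero_at_infty' f) (‖f‖/2) (by linarith)
    exact (by simpa [dist_zero_right] using h1 : ∀ᶠ x in Filter.cocompact X, ‖f x‖ < ‖f‖ / 2)
  obtain ⟨K, hK, hKs⟩ := Filter.mem_cocompact.mp hmem
  have hKne : K.Nonempty := by
    by_contra h
    rw [Set.not_nonempty_iff_eq_empty] at h
    have hb : ∀ x, ‖f x‖ ≤ ‖f‖ / 2 := fun x =>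
      le_of_lt (hKs (by simp [h]))
    have := norm_le_of_forall' (by linarith) hb
    linarith
  obtain ⟨x₀, hx₀K, hmax⟩ := hK.exists_isMaxOn hKne ((map_continuous f).norm.continuousOn)
  rcases le_or_gt (‖f‖ / 2) (‖f x₀‖) with h | h
  · refine ⟨x₀, le_antisymm (norm_apply_le' f x₀) ?_⟩
    refine norm_le_of_forall' (norm_nonneg _) fun x => ?_
    by_cases hx : x ∈ K
    · exact hmax hx
    · exact le_trans (le_of_lt (hKs hx)) h
  · exfalso
    have hb : ∀ x, ‖f x‖ ≤ ‖f‖ / 2 := fun x => by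
      by_cases hx : x ∈ K
      · exact le_trans (hmax hx) (le_of_lt h)
      · exact le_of_lt (hKs hx)
    have := norm_le_of_forall' (by linarith) hb
    linarith

/-- If `f` is left-symmetric, `z` attains the norm of `f`, and `y ≠ z` has `f y ≠ 0`,
we get a contradiction. -/
private lemma key_lemma (f : C₀(X, ℂ))
    (hsym : ∀ g : C₀(X, ℂ), (∀ c : ℂ, ‖f‖ ≤ ‖f + c • g‖) → (∀ c : ℂ, ‖g‖ ≤ ‖g + c • f‖))
    {y z : X} (hz : ‖f z‖ = ‖f‖) (hy : f y ≠ 0) (hyz : y ≠ z) : False := by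
  set a : ℂ := f y with ha_def
  have hna : 0 < ‖a‖ := norm_pos_iff.mpr hy
  have hnf : ‖a‖ ≤ ‖f‖ := norm_apply_le' f y
  have hfpos : 0 < ‖f‖ := lt_of_lt_of_le hna hnf
  set ε : ℝ := ‖a‖ / (2 * ‖f‖) with hε_def
  have hε : 0 < ε := div_pos hna (by linarith)
  have hε2 : ε ≤ 1 / 2 := by
    rw [hε_def, div_le_div_iff₀ (by linarith) (by norm_num)]
    linarith
  -- separate y from z and localize where f is close to f y
  obtain ⟨U, V, hU, hV, hyU, hzV, hUV⟩ := t2_separation hyz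
  set W : Set X := U ∩ {x : X | ‖f x - a‖ < ‖a‖ / 2} with hW_def
  have hWopen : IsOpen W :=
    hU.inter (isOpen_lt (((map_continuous f).sub continuous_const).norm) continuous_const)
  have hyW : y ∈ W := by
    refine ⟨hyU, ?_⟩
    simp only [Set.mem_setOf_eq, ← ha_def, sub_self, norm_zero]
    exact half_pos hna
  have hzW : z ∉ W := fun hzw => Set.disjoint_left.mp hUV hzw.1 hzV
  obtain ⟨g₀, hg1, hg0, hgc, hg01⟩ := exists_continuous_one_zero_of_isCompact
    (isCompact_singleton : IsCompact ({y} : Set X)) hWopen.isClosed_compl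
    (by rw [Set.disjoint_compl_right_iff_subset, Set.singleton_subset_iff]; exact hyW)
  set G : C₀(X, ℂ) := ⟨⟨fun x => ((g₀ x : ℝ) : ℂ), Complex.continuous_ofReal.comp g₀.continuous⟩,
    (hgc.comp_left (g := Complex.ofReal) Complex.ofReal_zero).is_zero_at_infty⟩ with hG_def
  have hGapp : ∀ x, G x = ((g₀ x : ℝ) : ℂ) := fun x => rfl
  have hGy : G y = 1 := by rw [hGapp, hg1 (Set.mem_singleton y)]; norm_num
  have hGz : ∀ x, x ∉ W → G x = 0 := fun x hx => by rw [hGapp, hg0 hx]; norm_num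
  have hGnorm : 1 ≤ ‖G‖ := by
    have := norm_apply_le' G y
    rwa [hGy, norm_one] at this
  -- f is Birkhoff orthogonal to G
  have hperp : ∀ c : ℂ, ‖f‖ ≤ ‖f + c • G‖ := by
    intro c
    have h1 : (f + c • G) z = f z := by
      simp [ZeroAtInftyContinuousMap.add_apply, ZeroAtInftyContinuousMap.smul_apply,
        hGz z hzW]
    calc ‖f‖ = ‖(f + c • G) z‖ := by rw [h1, hz]
      _ ≤ ‖f + c • G‖ := norm_apply_le' _ z
  -- but G is not Birkhoff orthogonal to f
  set c : ℂ := -(ε : ℂ) / a with hc_def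
  have hbound : ∀ x, ‖(G + c • f) x‖ ≤ 1 - ε / 2 := by
    intro x
    have happ : (G + c • f) x = G x + c * f x := by
      simp [ZeroAtInftyContinuousMap.add_apply, ZeroAtInftyContinuousMap.smul_apply,
        smul_eq_mul]
    rw [happ]
    by_cases hx : x ∈ W
    · have hfx : ‖f x - a‖ < ‖a‖ / 2 := hx.2
      have hrw : G x + c * f x = ((g₀ x - ε : ℝ) : ℂ) - (ε : ℂ) * (f x - a) / a := by
        rw [hGapp, hc_def]
        field_simp
        push_cast
        ring
      rw [hrw]
      have h1 : ‖((g₀ x - ε : ℝ) : ℂ)‖ ≤ 1 - ε := by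
        rw [Complex.norm_real, Real.norm_eq_abs, abs_le]
        constructor
        · have := (hg01 x).1; linarith
        · have := (hg01 x).2; linarith
      have h2 : ‖(ε : ℂ) * (f x - a) / a‖ ≤ ε / 2 := by
        rw [norm_div, norm_mul, Complex.norm_real, Real.norm_eq_abs, abs_of_pos hε]
        rw [div_le_iff₀ hna]
        calc ε * ‖f x - a‖ ≤ ε * (‖a‖ / 2) := by
              exact mul_le_mul_of_nonneg_left (le_of_lt hfx) (le_of_lt hε)
          _ = ε / 2 * ‖a‖ := by ring
      calc ‖((g₀ x - ε : ℝ) : ℂ) - (ε : ℂ) * (f x - a) / a‖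
          ≤ ‖((g₀ x - ε : ℝ) : ℂ)‖ + ‖(ε : ℂ) * (f x - a) / a‖ := norm_sub_le _ _
        _ ≤ (1 - ε) + ε / 2 := add_le_add h1 h2
        _ = 1 - ε / 2 := by ring
    · rw [hGz x hx, zero_add]
      have hc_norm : ‖c‖ = ε / ‖a‖ := by
        rw [hc_def, norm_div, norm_neg, Complex.norm_real, Real.norm_eq_abs, abs_of_pos hε]
      calc ‖c * f x‖ = ε / ‖a‖ * ‖f x‖ := by rw [norm_mul, hc_norm]
        _ ≤ ε / ‖a‖ * ‖f‖ := by
            exact mul_le_mul_of_nonneg_left (norm_apply_le' f x)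
              (le_of_lt (div_pos hε hna))
        _ = 1 / 2 := by
            have h1 : ‖a‖ ≠ 0 := hna.ne'
            have h2 : ‖f‖ ≠ 0 := hfpos.ne'
            rw [hε_def]; field_simp
        _ ≤ 1 - ε / 2 := by linarith
  have hle : ‖G + c • f‖ ≤ 1 - ε / 2 := norm_le_of_forall' (by linarith) hbound
  have := hsym G hperp c
  linarith

end LeftSymAux

/-- **Left-symmetric points of `C₀(X)`.**
For a locally compact Hausdorff space `X`, `f ∈ C₀(X, ℂ)` is a left-symmetric point for
Birkhoff-James orthogonality iff `f = 0`, or `M_f` is a singleton `{x₀}` and `f`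
vanishes outside `x₀`. -/
theorem left_symmetric_points_C0 (X : Type*) [TopologicalSpace X] [T2Space X]
    [LocallyCompactSpace X] (f : C₀(X, ℂ)) :
    (∀ g : C₀(X, ℂ), (∀ c : ℂ, ‖f‖ ≤ ‖f + c • g‖) → (∀ c : ℂ, ‖g‖ ≤ ‖g + c • f‖)) ↔
      (f = 0 ∨ ∃ x₀ : X, {x : X | ‖f x‖ = ‖f‖} = {x₀} ∧
        ∀ x : X, x ≠ x₀ → f x = 0) := by
  constructor
  · intro hsym
    by_cases hf : f = 0
    · exact Or.inl hf
    · right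
      have hfpos : 0 < ‖f‖ := norm_pos_iff.mpr hf
      obtain ⟨x₀, hx₀⟩ := exists_norm_attain' hf
      have hvanish : ∀ x : X, x ≠ x₀ → f x = 0 := by
        intro x hx
        by_contra hfx
        exact key_lemma f hsym hx₀ hfx hx
      refine ⟨x₀, ?_, hvanish⟩
      ext z
      simp only [Set.mem_setOf_eq, Set.mem_singleton_iff]
      constructor
      · intro hzM
        by_contra hzx
        have h0 : f z = 0 := hvanish z hzx
        rw [h0] at hzM
        simp at hzM
        linarith
      · intro h; subst h
        exact hx₀
  · rintro (rfl | ⟨x₀, hM, hvanish⟩)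
    · intro g _ c
      simp
    · intro g hg c
      by_cases hf0 : f = 0
      · subst hf0; simp
      by_cases hg0 : g = 0
      · subst hg0; simp
      have hfpos : 0 < ‖f‖ := norm_pos_iff.mpr hf0
      have hgpos : 0 < ‖g‖ := norm_pos_iff.mpr hg0
      have hx₀M : ‖f x₀‖ = ‖f‖ := by
        have : x₀ ∈ ({x : X | ‖f x‖ = ‖f‖}) := by rw [hM]; rfl
        exact this
      have hfx₀ : ‖f x₀‖ = ‖f‖ := by exact hx₀M
      have hfx₀ne : f x₀ ≠ 0 := by
        intro h; rw [h] at hfx₀; simp at hfx₀; linarith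
      obtain ⟨y, hy⟩ := exists_norm_attain' hg0
      by_cases hyx : y = x₀
      · -- show g x₀ = 0, hence ‖g‖ = 0, contradiction
        exfalso
        subst hyx
        have hgy : g y ≠ 0 := by
          intro h; rw [h] at hy; simp at hy; linarith
        set ε : ℝ := ‖g y‖ / (2 * ‖g‖) with hε_def
        have hgy_pos : 0 < ‖g y‖ := norm_pos_iff.mpr hgy
        have hgy_le : ‖g y‖ ≤ ‖g‖ := norm_apply_le' g y
        have hε : 0 < ε := div_pos hgy_pos (by linarith)
        have hε2 : ε ≤ 1 / 2 := by
          rw [hε_def, div_le_div_iff₀ (by linarith) (by norm_num)]; linarith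
        set c : ℂ := -(ε : ℂ) * f y / g y with hc_def
        have hbound : ∀ x, ‖(f + c • g) x‖ ≤ (1 - ε) * ‖f‖ := by
          intro x
          have happ : (f + c • g) x = f x + c * g x := by
            simp [ZeroAtInftyContinuousMap.add_apply, ZeroAtInftyContinuousMap.smul_apply,
              smul_eq_mul]
          rw [happ]
          by_cases hx : x = y
          · subst hx
            have hrw : f x + c * g x = ((1 - ε : ℝ) : ℂ) * f x := by
              rw [hc_def]; field_simp; push_cast; ring
            rw [hrw, norm_mul, Complex.norm_real, Real.norm_eq_abs,
              abs_of_pos (by linarith : (0:ℝ) < 1 - ε), hfx₀]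
          · have hfx : f x = 0 := hvanish x hx
            rw [hfx, zero_add, norm_mul, hc_def]
            have hcn : ‖-(ε : ℂ) * f y / g y‖ = ε * ‖f y‖ / ‖g y‖ := by
              rw [norm_div, norm_mul, norm_neg, Complex.norm_real, Real.norm_eq_abs,
                abs_of_pos hε]
            rw [hcn]
            calc ε * ‖f y‖ / ‖g y‖ * ‖g x‖ ≤ ε * ‖f y‖ / ‖g y‖ * ‖g‖ := by
                  exact mul_le_mul_of_nonneg_left (norm_apply_le' g x)
                    (by positivity)
              _ = ‖f y‖ / 2 := by
                    have h1 : ‖g y‖ ≠ 0 := by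
                      exact hgy_pos.ne'
                    have h2 : ‖g‖ ≠ 0 := hgpos.ne'
                    rw [hε_def]; field_simp
              _ = ‖f‖ / 2 := by rw [hfx₀]
              _ ≤ (1 - ε) * ‖f‖ := by nlinarith
        have hle : ‖f + c • g‖ ≤ (1 - ε) * ‖f‖ :=
          norm_le_of_forall' (by nlinarith) hbound
        have := hg c
        nlinarith
      · -- y ≠ x₀, so f y = 0 and the norm of g is witnessed away from the support of f
        have hfy : f y = 0 := hvanish y hyx
        have h1 : (g + c • f) y = g y := by
          simp [ZeroAtInftyContinuousMap.add_apply, ZeroAtInftyContinuousMap.smul_apply, hfy]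
        calc ‖g‖ = ‖(g + c • f) y‖ := by rw [h1, hy]
          _ ≤ ‖g + c • f‖ := norm_apply_le' _ y
end

section
/- Let (X, Σ, λ) be a measure space, let f : X → ℂ be measurable and essentially bounded (i.e., the essential supremum of |f| with respect to λ is finite), and let U be a λ-ultrafilter on X. Then there exists z ∈ ℂ such that for every ε > 0 the set {x ∈ X : |f(x) − z| < ε} belongs to U. -/
open MeasureTheory

/-- A `μ`-filter on `X`: a nonempty collection of measurable subsets of positive measure,
closed under binary intersections and under measurable supersets. -/
def IsMeasFilter {X : Type*} [MeasurableSpace X] (μ : Measure X) (F : Set (Set X)) : Prop :=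
  F.Nonempty ∧
  (∀ A ∈ F, MeasurableSet A) ∧
  (∀ A ∈ F, 0 < μ A) ∧
  (∀ A ∈ F, ∀ B ∈ F, A ∩ B ∈ F) ∧
  (∀ A ∈ F, ∀ B : Set X, MeasurableSet B → A ⊆ B → B ∈ F)

/-- A `μ`-ultrafilter: a `μ`-filter which is maximal among `μ`-filters. -/
def IsMeasUltrafilter {X : Type*} [MeasurableSpace X] (μ : Measure X) (U : Set (Set X)) : Prop :=
  IsMeasFilter μ U ∧ ∀ F : Set (Set X), IsMeasFilter μ F → U ⊆ F → F = U

lemma memU_of_pos {X : Type*} [MeasurableSpace X] {μ : Measure X} {U : Set (Set X)}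
    (hU : IsMeasUltrafilter μ U) {B : Set X} (hB : MeasurableSet B)
    (h : ∀ A ∈ U, 0 < μ (A ∩ B)) : B ∈ U := by
  obtain ⟨⟨⟨A₀, hA₀⟩, hmeas, hpos, hinter, hsup⟩, hmax⟩ := hU
  set F : Set (Set X) := {C | MeasurableSet C ∧ ∃ A ∈ U, A ∩ B ⊆ C} with hF
  have hUF : U ⊆ F := fun A hA => ⟨hmeas A hA, A, hA, Set.inter_subset_left⟩
  have hFfil : IsMeasFilter μ F := by
    refine ⟨⟨A₀, hUF hA₀⟩, fun C hC => hC.1, ?_, ?_, ?_⟩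
    · rintro C ⟨hCm, A, hA, hsub⟩
      exact lt_of_lt_of_le (h A hA) (measure_mono hsub)
    · rintro C ⟨hCm, A, hA, hsub⟩ C' ⟨hC'm, A', hA', hsub'⟩
      exact ⟨hCm.inter hC'm, A ∩ A', hinter A hA A' hA', fun x hx =>
        ⟨hsub ⟨hx.1.1, hx.2⟩, hsub' ⟨hx.1.2, hx.2⟩⟩⟩
    · rintro C ⟨hCm, A, hA, hsub⟩ D hDm hCD
      exact ⟨hDm, A, hA, hsub.trans hCD⟩
  have := hmax F hFfil hUF
  rw [← this]
  exact ⟨hB, A₀, hA₀, Set.inter_subset_right⟩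

lemma dichotomyU {X : Type*} [MeasurableSpace X] {μ : Measure X} {U : Set (Set X)}
    (hU : IsMeasUltrafilter μ U) {B : Set X} (hB : MeasurableSet B) :
    B ∈ U ∨ Bᶜ ∈ U := by
  by_cases h : ∀ A ∈ U, 0 < μ (A ∩ B)
  · exact Or.inl (memU_of_pos hU hB h)
  · right
    push_neg at h
    obtain ⟨A₀, hA₀, hA₀0⟩ := h
    have hA₀0' : μ (A₀ ∩ B) = 0 := le_antisymm hA₀0 zero_le
    refine memU_of_pos hU hB.compl fun A hA => ?_
    obtain ⟨_, hmeas, hpos, hinter, _⟩ := hU.1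
    have hAA₀ : A ∩ A₀ ∈ U := hinter A hA A₀ hA₀
    have h1 : 0 < μ (A ∩ A₀) := hpos _ hAA₀
    have hsub : A ∩ A₀ ⊆ (A₀ ∩ B) ∪ (A ∩ Bᶜ) := by
      intro x hx
      by_cases hxB : x ∈ B
      · exact Or.inl ⟨hx.2, hxB⟩
      · exact Or.inr ⟨hx.1, hxB⟩
    have := (measure_mono hsub).trans (measure_union_le (μ := μ) (A₀ ∩ B) (A ∩ Bᶜ))
    rw [hA₀0', zero_add] at this
    exact lt_of_lt_of_le h1 this

lemma compl_memU_of_null {X : Type*} [MeasurableSpace X] {μ : Measure X} {U : Set (Set X)}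
    (hU : IsMeasUltrafilter μ U) {B : Set X} (hB : MeasurableSet B) (h0 : μ B = 0) :
    Bᶜ ∈ U := by
  rcases dichotomyU hU hB with h | h
  · exact absurd (hU.1.2.2.1 B h) (by rw [h0]; exact lt_irrefl 0)
  · exact h

lemma real_limU {X : Type*} [MeasurableSpace X] {μ : Measure X} {U : Set (Set X)}
    (hU : IsMeasUltrafilter μ U) {g : X → ℝ} (hg : Measurable g)
    {D : ℝ} (hbd : ∀ᵐ x ∂μ, |g x| ≤ D) :
    ∃ r : ℝ, ∀ ε : ℝ, 0 < ε → {x : X | |g x - r| < ε} ∈ U := by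
  have hnull : μ {x | ¬ |g x| ≤ D} = 0 := by
    rw [← ae_iff]; exact hbd
  set T : Set ℝ := {t | {x | g x ≤ t} ∈ U} with hT
  have hmeasle : ∀ t : ℝ, MeasurableSet {x | g x ≤ t} := fun t =>
    hg (measurableSet_Iic : MeasurableSet (Set.Iic t))
  have hDT : D ∈ T := by
    have : {x | g x ≤ D}ᶜ ⊆ {x | ¬ |g x| ≤ D} := by
      intro x hx
      simp only [Set.mem_compl_iff, Set.mem_setOf_eq, not_le] at hx ⊢
      exact lt_of_lt_of_le hx (le_abs_self _)
    have h0 : μ {x | g x ≤ D}ᶜ = 0 := measure_mono_null this hnull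
    have := compl_memU_of_null hU (hmeasle D).compl h0
    rwa [compl_compl] at this
  have hbdd : ∀ t ∈ T, -D ≤ t := by
    intro t ht
    by_contra hlt
    push_neg at hlt
    have hsub : {x | g x ≤ t} ⊆ {x | ¬ |g x| ≤ D} := by
      intro x hx
      simp only [Set.mem_setOf_eq, not_le] at hx ⊢
      have : g x < -D := lt_of_le_of_lt hx hlt
      calc D < -g x := by linarith
        _ ≤ |g x| := neg_le_abs _
    have hpos := hU.1.2.2.1 _ ht
    have := measure_mono_null hsub hnull
    simp [this] at hpos
  set r := sInf T with hr
  refine ⟨r, fun ε hε => ?_⟩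
  obtain ⟨_, hmeas, hpos, hinter, hsup⟩ := hU.1
  -- upper part
  have h1 : {x | g x ≤ r + ε/2} ∈ U := by
    obtain ⟨t, htT, htlt⟩ := Real.lt_sInf_add_pos ⟨D, hDT⟩ (by positivity : (0:ℝ) < ε/2)
    exact hsup _ htT _ (hmeasle _) (fun x hx => le_of_lt (lt_of_le_of_lt hx htlt))
  -- lower part
  have h2 : {x | g x ≤ r - ε/2} ∉ U := by
    intro hmem
    have : r ≤ r - ε/2 := csInf_le ⟨-D, hbdd⟩ hmem
    linarith
  have h3 : {x | g x ≤ r - ε/2}ᶜ ∈ U := (dichotomyU hU (hmeasle _)).resolve_left h2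
  have h4 := hinter _ h1 _ h3
  refine hsup _ h4 _ ?_ ?_
  · have : Measurable fun x => |g x - r| := (hg.sub_const r).abs
    exact this (measurableSet_Iio : MeasurableSet (Set.Iio ε))
  · rintro x ⟨hx1, hx2⟩
    simp only [Set.mem_setOf_eq, Set.mem_compl_iff, not_le] at hx1 hx2 ⊢
    rw [abs_lt]
    constructor <;> linarith

/-- If `f : X → ℂ` is measurable and essentially bounded and `U` is a `μ`-ultrafilter,
then the limit of `f` along `U` exists: there is `z ∈ ℂ` such that for every `ε > 0`
the set `{x | |f x - z| < ε}` belongs to `U`. -/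
theorem measUltrafilter_lim_exists (X : Type*) [MeasurableSpace X] (μ : Measure X)
    (f : X → ℂ) (hf : Measurable f) (hbd : ∃ C : ℝ, ∀ᵐ x ∂μ, ‖f x‖ ≤ C)
    (U : Set (Set X)) (hU : IsMeasUltrafilter μ U) :
    ∃ z : ℂ, ∀ ε : ℝ, 0 < ε → {x : X | ‖f x - z‖ < ε} ∈ U := by
  obtain ⟨C, hC⟩ := hbd
  have hre : ∀ᵐ x ∂μ, |(f x).re| ≤ C :=
    hC.mono fun x hx => (Complex.abs_re_le_norm _).trans hx
  have him : ∀ᵐ x ∂μ, |(f x).im| ≤ C :=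
    hC.mono fun x hx => (Complex.abs_im_le_norm _).trans hx
  obtain ⟨r1, hr1⟩ := real_limU hU (Complex.measurable_re.comp hf) hre
  obtain ⟨r2, hr2⟩ := real_limU hU (Complex.measurable_im.comp hf) him
  refine ⟨⟨r1, r2⟩, fun ε hε => ?_⟩
  obtain ⟨_, hmeas, hpos, hinter, hsup⟩ := hU.1
  have h1 := hr1 (ε/2) (by positivity)
  have h2 := hr2 (ε/2) (by positivity)
  refine hsup _ (hinter _ h1 _ h2) _ ?_ ?_
  · have : Measurable fun x => ‖f x - ⟨r1, r2⟩‖ :=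
      (hf.sub_const _).norm
    exact this (measurableSet_Iio : MeasurableSet (Set.Iio ε))
  · rintro x ⟨hx1, hx2⟩
    simp only [Set.mem_setOf_eq, Function.comp] at hx1 hx2 ⊢
    have hle := Complex.norm_le_abs_re_add_abs_im (f x - ⟨r1, r2⟩)
    have hre' : (f x - (⟨r1, r2⟩ : ℂ)).re = (f x).re - r1 := by simp [Complex.sub_re]
    have him' : (f x - (⟨r1, r2⟩ : ℂ)).im = (f x).im - r2 := by simp [Complex.sub_im]
    rw [hre', him'] at hle
    calc ‖f x - ⟨r1, r2⟩‖ ≤ |(f x).re - r1| + |(f x).im - r2| := hle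
      _ < ε/2 + ε/2 := add_lt_add hx1 hx2
      _ = ε := by ring
end

section
/- Let (X, Σ, λ) be a measure space, let f : X → ℂ be measurable and essentially bounded, and let z₀ ∈ ℂ. There exists a λ-ultrafilter U on X such that {x ∈ X : |f(x) − z₀| < ε} ∈ U for every ε > 0 if and only if λ({x ∈ X : |f(x) − z₀| < ε}) > 0 for every ε > 0. -/
open MeasureTheory

/-- Any `μ`-filter extends to a `μ`-ultrafilter. -/
lemma exists_measUltrafilter_ge {X : Type*} [MeasurableSpace X] (μ : Measure X)
    {F : Set (Set X)} (hF : IsMeasFilter μ F) :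
    ∃ U : Set (Set X), IsMeasUltrafilter μ U ∧ F ⊆ U := by
  obtain ⟨U, hFU, hUmem, hUmax⟩ :=
    zorn_subset_nonempty {G : Set (Set X) | IsMeasFilter μ G ∧ F ⊆ G}
      (fun c hc hchain hcne => by
        refine ⟨⋃₀ c, ⟨⟨?_, ?_, ?_, ?_, ?_⟩, ?_⟩, fun s hs => Set.subset_sUnion_of_mem hs⟩
        · obtain ⟨G, hG⟩ := hcne
          obtain ⟨A, hA⟩ := (hc hG).1.1
          exact ⟨A, Set.mem_sUnion_of_mem hA hG⟩
        · rintro A ⟨G, hG, hAG⟩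
          exact (hc hG).1.2.1 A hAG
        · rintro A ⟨G, hG, hAG⟩
          exact (hc hG).1.2.2.1 A hAG
        · rintro A ⟨G, hG, hAG⟩ B ⟨G', hG', hBG'⟩
          rcases hchain.total hG hG' with h | h
          · exact Set.mem_sUnion_of_mem ((hc hG').1.2.2.2.1 A (h hAG) B hBG') hG'
          · exact Set.mem_sUnion_of_mem ((hc hG).1.2.2.2.1 A hAG B (h hBG')) hG
        · rintro A ⟨G, hG, hAG⟩ B hBmeas hAB
          exact Set.mem_sUnion_of_mem ((hc hG).1.2.2.2.2 A hAG B hBmeas hAB) hG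
        · obtain ⟨G, hG⟩ := hcne
          exact (hc hG).2.trans (Set.subset_sUnion_of_mem hG))
      F ⟨hF, subset_rfl⟩
  exact ⟨U, ⟨hUmem.1, fun G hG hUG =>
    subset_antisymm (hUmax ⟨hG, hFU.trans hUG⟩ hUG) hUG⟩, hFU⟩

/-- For a measurable essentially bounded `f : X → ℂ` and `z₀ ∈ ℂ`, there is a
`μ`-ultrafilter `U` with `lim_U f = z₀` iff every `ε`-neighbourhood set
`{x | |f x - z₀| < ε}` has positive measure. -/
theorem measUltrafilter_lim_iff_pos (X : Type*) [MeasurableSpace X] (μ : Measure X)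
    (f : X → ℂ) (hf : Measurable f) (hbd : ∃ C : ℝ, ∀ᵐ x ∂μ, ‖f x‖ ≤ C)
    (z₀ : ℂ) :
    (∃ U : Set (Set X), IsMeasUltrafilter μ U ∧
        ∀ ε : ℝ, 0 < ε → {x : X | ‖f x - z₀‖ < ε} ∈ U) ↔
      (∀ ε : ℝ, 0 < ε → 0 < μ {x : X | ‖f x - z₀‖ < ε}) := by
  constructor
  · rintro ⟨U, hU, hlim⟩ ε hε
    exact hU.1.2.2.1 _ (hlim ε hε)
  · intro hpos
    set S : ℝ → Set X := fun ε => {x : X | ‖f x - z₀‖ < ε} with hS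
    have hSmeas : ∀ ε : ℝ, MeasurableSet (S ε) := fun ε =>
      measurableSet_lt ((hf.sub measurable_const).norm) measurable_const
    have hSmono : ∀ {ε δ : ℝ}, ε ≤ δ → S ε ⊆ S δ := fun h x hx => lt_of_lt_of_le hx h
    set F : Set (Set X) := {B | MeasurableSet B ∧ ∃ ε : ℝ, 0 < ε ∧ S ε ⊆ B} with hFdef
    have hF : IsMeasFilter μ F := by
      refine ⟨⟨Set.univ, MeasurableSet.univ, 1, one_pos, Set.subset_univ _⟩, ?_, ?_, ?_, ?_⟩
      · rintro A ⟨hAm, _⟩; exact hAm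
      · rintro A ⟨hAm, ε, hε, hsub⟩
        exact lt_of_lt_of_le (hpos ε hε) (measure_mono hsub)
      · rintro A ⟨hAm, ε, hε, hsub⟩ B ⟨hBm, δ, hδ, hsub'⟩
        refine ⟨hAm.inter hBm, min ε δ, lt_min hε hδ, ?_⟩
        exact Set.subset_inter ((hSmono (min_le_left _ _)).trans hsub)
          ((hSmono (min_le_right _ _)).trans hsub')
      · rintro A ⟨hAm, ε, hε, hsub⟩ B hBm hAB
        exact ⟨hBm, ε, hε, hsub.trans hAB⟩
    obtain ⟨U, hU, hFU⟩ := exists_measUltrafilter_ge μ hF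
    exact ⟨U, hU, fun ε hε => hFU ⟨hSmeas ε, ε, hε, subset_rfl⟩⟩
end

section
/- Let (X, Σ, λ) be a measure space with λ(X) > 0 and let f : X → ℂ be measurable and essentially bounded, with c denoting the essential supremum of |f|. If λ({x ∈ X : |f(x)| = c}) = 0, then there exist disjoint measurable sets A, B ⊆ X such that for every ε > 0 both λ({x ∈ A : c − |f(x)| < ε}) > 0 and λ({x ∈ B : c − |f(x)| < ε}) > 0. -/
open MeasureTheory

/-- **A splitting lemma.** Let `μ X > 0` and let `f : X → ℂ` be measurable with essential
supremum of `|f|` equal to `c` (the least constant bounding `|f|` a.e.). If the set where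
`|f| = c` is null, then there are disjoint measurable sets `A, B` such that for every `ε > 0`
both `{x ∈ A | c - |f x| < ε}` and `{x ∈ B | c - |f x| < ε}` have positive measure. -/
theorem exists_disjoint_norming_sets (X : Type*) [MeasurableSpace X] (μ : Measure X)
    (hX : 0 < μ Set.univ) (f : X → ℂ) (hf : Measurable f) (c : ℝ)
    (hc₁ : ∀ᵐ x ∂μ, ‖f x‖ ≤ c)
    (hc₂ : ∀ c' : ℝ, (∀ᵐ x ∂μ, ‖f x‖ ≤ c') → c ≤ c')
    (hnull : μ {x : X | ‖f x‖ = c} = 0) :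
    ∃ A B : Set X, MeasurableSet A ∧ MeasurableSet B ∧ Disjoint A B ∧
      ∀ ε : ℝ, 0 < ε →
        0 < μ {x ∈ A | c - ‖f x‖ < ε} ∧
        0 < μ {x ∈ B | c - ‖f x‖ < ε} := by
  set g : X → ℝ := fun x => ‖f x‖ with hgdef
  have hgm : Measurable g := continuous_norm.measurable.comp hf
  -- the set where g exceeds c is null
  have hgt : μ {x | c < g x} = 0 := by
    have := ae_iff.mp hc₁
    simpa [not_le] using this
  have hge : μ {x | c ≤ g x} = 0 := by
    have hsub : {x | c ≤ g x} ⊆ {x | g x = c} ∪ {x | c < g x} := by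
      intro x hx
      have hx' : c ≤ g x := hx
      rcases eq_or_lt_of_le hx' with h | h
      · exact Or.inl h.symm
      · exact Or.inr h
    exact measure_mono_null hsub (measure_union_null hnull hgt)
  -- Step 1: every strip below c has positive measure
  have pos : ∀ ε : ℝ, 0 < ε → 0 < μ {x | c - ε < g x ∧ g x < c} := by
    intro ε hε
    by_contra h
    rw [not_lt, le_zero_iff] at h
    have hsub : {x | c - ε < g x} ⊆ {x | c - ε < g x ∧ g x < c} ∪ {x | c ≤ g x} := by
      intro x hx
      by_cases hxc : g x < c
      · exact Or.inl ⟨hx, hxc⟩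
      · exact Or.inr (not_lt.mp hxc)
    have h0 : μ {x | c - ε < g x} = 0 :=
      measure_mono_null hsub (measure_union_null h hge)
    have hae : ∀ᵐ x ∂μ, g x ≤ c - ε := by
      rw [ae_iff]
      simpa [not_le] using h0
    have := hc₂ (c - ε) hae
    linarith
  -- Step 2: we can find a positive annulus below any threshold
  have step2 : ∀ ε : ℝ, 0 < ε → ∃ ε' : ℝ, 0 < ε' ∧ ε' ≤ ε / 2 ∧
      0 < μ {x | c - ε < g x ∧ g x ≤ c - ε'} := by
    intro ε hε
    by_contra h
    push_neg at h
    have hnull' : ∀ n : ℕ,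
        μ {x | c - ε < g x ∧ g x ≤ c - min (ε / 2) (1 / (n + 1))} = 0 := by
      intro n
      have h1 : (0:ℝ) < min (ε / 2) (1 / (n + 1)) := by
        apply lt_min (by linarith)
        positivity
      exact le_antisymm (h _ h1 (min_le_left _ _)) (by positivity)
    have hcover : {x | c - ε < g x ∧ g x < c} ⊆
        ⋃ n : ℕ, {x | c - ε < g x ∧ g x ≤ c - min (ε / 2) (1 / (n + 1))} := by
      intro x ⟨hx1, hx2⟩
      have hpos : 0 < c - g x := by linarith
      obtain ⟨n, hn⟩ := exists_nat_one_div_lt hpos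
      exact Set.mem_iUnion.mpr ⟨n, hx1, by
        have : min (ε / 2) (1 / (n + 1)) ≤ 1 / (n + 1) := min_le_right _ _
        push_cast at hn ⊢
        linarith⟩
    have := measure_mono_null hcover (measure_iUnion_null hnull')
    exact absurd this (pos ε hε).ne'
  -- Step 3: build the decreasing sequence
  let F : {e : ℝ // 0 < e} → {e : ℝ // 0 < e} := fun e =>
    ⟨(step2 e.1 e.2).choose, (step2 e.1 e.2).choose_spec.1⟩
  let seq : ℕ → {e : ℝ // 0 < e} := fun n => F^[n] ⟨1, one_pos⟩
  have hseq_succ : ∀ n, seq (n + 1) = F (seq n) := fun n =>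
    Function.iterate_succ_apply' F n _
  have hhalf : ∀ n, (seq (n+1)).1 ≤ (seq n).1 / 2 := by
    intro n
    rw [hseq_succ]
    exact (step2 (seq n).1 (seq n).2).choose_spec.2.1
  have hann : ∀ n, 0 < μ {x | c - (seq n).1 < g x ∧ g x ≤ c - (seq (n+1)).1} := by
    intro n
    rw [hseq_succ]
    exact (step2 (seq n).1 (seq n).2).choose_spec.2.2
  have hanti : ∀ m n, m ≤ n → (seq n).1 ≤ (seq m).1 := by
    intro m n hmn
    induction n, hmn using Nat.le_induction with
    | base => exact le_refl _
    | succ k hk ih =>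
      have h1 := hhalf k
      have h2 := (seq k).2
      linarith
  have hbound : ∀ n, (seq n).1 ≤ (1/2)^n := by
    intro n
    induction n with
    | zero => simp [seq]
    | succ k ih =>
      calc (seq (k+1)).1 ≤ (seq k).1 / 2 := hhalf k
        _ ≤ (1/2)^k / 2 := by linarith
        _ = (1/2)^(k+1) := by ring
  -- annuli
  set Ann : ℕ → Set X := fun n => {x | c - (seq n).1 < g x ∧ g x ≤ c - (seq (n+1)).1} with hAnn
  have hAnnMeas : ∀ n, MeasurableSet (Ann n) := fun n =>
    (measurableSet_lt measurable_const hgm).inter (measurableSet_le hgm measurable_const)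
  have hAnnDisj : ∀ m n, m < n → Disjoint (Ann m) (Ann n) := by
    intro m n hmn
    apply Set.disjoint_left.mpr
    intro x hxm hxn
    have h1 : g x ≤ c - (seq (m+1)).1 := hxm.2
    have h2 : c - (seq n).1 < g x := hxn.1
    have h3 : (seq n).1 ≤ (seq (m+1)).1 := hanti _ _ hmn
    linarith
  refine ⟨⋃ k : ℕ, Ann (2*k), ⋃ k : ℕ, Ann (2*k+1),
    MeasurableSet.iUnion (fun k => hAnnMeas _),
    MeasurableSet.iUnion (fun k => hAnnMeas _), ?_, ?_⟩
  · apply Set.disjoint_iUnion_left.mpr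
    intro i
    apply Set.disjoint_iUnion_right.mpr
    intro j
    rcases lt_or_gt_of_ne (by omega : 2*i ≠ 2*j+1) with h | h
    · exact hAnnDisj _ _ h
    · exact (hAnnDisj _ _ h).symm
  · intro ε hε
    obtain ⟨n, hn⟩ := exists_pow_lt_of_lt_one hε (by norm_num : (1:ℝ)/2 < 1)
    have key : ∀ m, n ≤ m → (seq m).1 < ε := by
      intro m hm
      calc (seq m).1 ≤ (1/2)^m := hbound m
        _ ≤ (1/2)^n := pow_le_pow_of_le_one (by norm_num) (by norm_num) hm
        _ < ε := hn
    constructor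
    · have hsub : Ann (2*n) ⊆ {x ∈ ⋃ k : ℕ, Ann (2*k) | c - g x < ε} := by
        intro x hx
        refine ⟨Set.mem_iUnion.mpr ⟨n, hx⟩, ?_⟩
        have := hx.1
        have h2 := key (2*n) (by omega)
        linarith
      exact lt_of_lt_of_le (hann (2*n)) (measure_mono hsub)
    · have hsub : Ann (2*n+1) ⊆ {x ∈ ⋃ k : ℕ, Ann (2*k+1) | c - g x < ε} := by
        intro x hx
        refine ⟨Set.mem_iUnion.mpr ⟨n, hx⟩, ?_⟩
        have := hx.1
        have h2 := key (2*n+1) (by omega)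
        linarith
      exact lt_of_lt_of_le (hann (2*n+1)) (measure_mono hsub)
end

section
/- Let (X, Σ, λ) be a measure space and let f ∈ L_∞(X, λ) with f ≠ 0. Then f is a smooth point of L_∞(X, λ) if and only if there exists a λ-atom A such that |f(x)| = ‖f‖_∞ for λ-almost every x ∈ A and, for some ε > 0, λ({x ∈ X \ A : |f(x)| > ‖f‖_∞ − ε}) = 0. -/
open MeasureTheory

/-- A `μ`-atom: a set of positive measure all of whose measurable subsets are either
null or conull in it. -/
def IsMeasAtom {X : Type*} [MeasurableSpace X] (μ : Measure X) (A : Set X) : Prop :=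
  MeasurableSet A ∧ 0 < μ A ∧
    ∀ B : Set X, B ⊆ A → MeasurableSet B → μ B = 0 ∨ μ (A \ B) = 0

section Aux
open ENNReal
variable {X : Type*} [MeasurableSpace X] {μ : Measure X}

lemma linf_ae_le (h : Lp ℂ ⊤ μ) : ∀ᵐ x ∂μ, ‖h x‖ ≤ ‖h‖ := by
  have h1 : ∀ᵐ x ∂μ, (‖h x‖₊ : ℝ≥0∞) ≤ eLpNormEssSup (⇑h) μ := ae_le_eLpNormEssSup
  have h2 : eLpNorm (⇑h) ⊤ μ ≠ ⊤ := Lp.eLpNorm_ne_top h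
  rw [eLpNorm_exponent_top] at h2
  filter_upwards [h1] with x hx
  have := ENNReal.toReal_mono h2 hx
  simpa [Lp.norm_def, eLpNorm_exponent_top] using this

lemma linf_norm_le (h : Lp ℂ ⊤ μ) {C : ℝ} (hC : 0 ≤ C) (hb : ∀ᵐ x ∂μ, ‖h x‖ ≤ C) :
    ‖h‖ ≤ C := by
  have h1 : eLpNormEssSup (⇑h) μ ≤ ENNReal.ofReal C := eLpNormEssSup_le_of_ae_bound hb
  rw [Lp.norm_def, eLpNorm_exponent_top]
  calc (eLpNormEssSup (⇑h) μ).toReal ≤ (ENNReal.ofReal C).toReal :=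
        ENNReal.toReal_mono ENNReal.ofReal_ne_top h1
    _ = C := ENNReal.toReal_ofReal hC

lemma linf_pos_meas (h : Lp ℂ ⊤ μ) (hh : 0 < ‖h‖) {δ : ℝ} (hδ : 0 < δ) :
    0 < μ {x | ‖h‖ - δ < ‖h x‖} := by
  set δ' := min δ ‖h‖ with hδ'
  have hδ'0 : 0 < δ' := lt_min hδ hh
  have hd : δ' ≤ δ := min_le_left _ _
  have hsub : {x | ‖h‖ - δ' < ‖h x‖} ⊆ {x | ‖h‖ - δ < ‖h x‖} := by
    intro x hx
    simp only [Set.mem_setOf_eq] at hx ⊢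
    linarith
  refine lt_of_lt_of_le ?_ (measure_mono hsub)
  rw [pos_iff_ne_zero]
  intro h0
  have hae : ∀ᵐ x ∂μ, ‖h x‖ ≤ ‖h‖ - δ' := by
    have h1 : ∀ᵐ x ∂μ, x ∉ {x | ‖h‖ - δ' < ‖h x‖} :=
      (measure_eq_zero_iff_ae_notMem (μ := μ)).mp h0
    filter_upwards [h1] with x hx
    simpa [not_lt] using hx
  have h2 : δ' ≤ ‖h‖ := min_le_right _ _
  have := linf_norm_le h (by linarith) hae
  linarith

private lemma mem_res (B : Set X) (g : Lp ℂ ⊤ μ) : MemLp (⇑g) ⊤ (μ.restrict B) :=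
  (Lp.memLp g).mono_measure Measure.restrict_le_self

private noncomputable def resL (μ : Measure X) (B : Set X) :
    Lp ℂ ⊤ μ →ₗ[ℂ] Lp ℂ ⊤ (μ.restrict B) where
  toFun g := (mem_res B g).toLp ⇑g
  map_add' g h := by
    refine Lp.ext ?_
    refine ((mem_res B (g + h)).coeFn_toLp).trans ?_
    refine ((Lp.coeFn_add g h).filter_mono (ae_mono Measure.restrict_le_self)).trans ?_
    exact (((mem_res B g).coeFn_toLp.symm.add (mem_res B h).coeFn_toLp.symm)).trans
      ((Lp.coeFn_add _ _).symm)
  map_smul' c g := by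
    refine Lp.ext ?_
    refine ((mem_res B (c • g)).coeFn_toLp).trans ?_
    refine ((Lp.coeFn_smul c g).filter_mono (ae_mono Measure.restrict_le_self)).trans ?_
    refine Filter.EventuallyEq.trans ?_ ((Lp.coeFn_smul c ((mem_res B g).toLp ⇑g)).symm)
    exact (mem_res B g).coeFn_toLp.symm.const_smul c

private lemma resL_norm_le (B : Set X) (g : Lp ℂ ⊤ μ) : ‖resL μ B g‖ ≤ ‖g‖ := by
  show ‖(mem_res B g).toLp ⇑g‖ ≤ ‖g‖
  rw [Lp.norm_toLp, Lp.norm_def]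
  exact ENNReal.toReal_mono (Lp.eLpNorm_ne_top g)
    (eLpNorm_mono_measure _ Measure.restrict_le_self)

private noncomputable def resCLM (μ : Measure X) (B : Set X) :
    Lp ℂ ⊤ μ →L[ℂ] Lp ℂ ⊤ (μ.restrict B) :=
  (resL μ B).mkContinuous 1 (fun g => by simpa using resL_norm_le B g)

private lemma resCLM_ae (B : Set X) (g : Lp ℂ ⊤ μ) :
    (resCLM μ B g : X → ℂ) =ᵐ[μ.restrict B] ⇑g :=
  (mem_res B g).coeFn_toLp

private lemma resCLM_norm_le (B : Set X) : ‖(resCLM μ B)‖ ≤ 1 :=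
  LinearMap.mkContinuous_norm_le _ zero_le_one _

lemma norming_on (f : Lp ℂ ⊤ μ) (hf : 0 < ‖f‖) (B : Set X)
    (hheavy : ∀ δ : ℝ, 0 < δ → 0 < μ.restrict B {x | ‖f‖ - δ < ‖f x‖}) :
    ∃ ψ : Lp ℂ ⊤ μ →L[ℂ] ℂ, ‖ψ‖ = 1 ∧ ψ f = (‖f‖ : ℂ) ∧
      ∀ g : Lp ℂ ⊤ μ, (g : X → ℂ) =ᵐ[μ.restrict B] 0 → ψ g = 0 := by
  set r := resCLM μ B with hr
  have hrf : ‖r f‖ = ‖f‖ := by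
    refine le_antisymm (resL_norm_le B f) ?_
    by_contra hlt
    push_neg at hlt
    set δ := ‖f‖ - ‖r f‖ with hδ
    have hδ0 : 0 < δ := by linarith
    have h1 : ∀ᵐ x ∂μ.restrict B, ‖f x‖ ≤ ‖r f‖ := by
      filter_upwards [linf_ae_le (r f), resCLM_ae B f] with x h1 h2
      rw [← h2]; exact h1
    have h2 : μ.restrict B {x | ‖f‖ - δ < ‖f x‖} = 0 := by
      refine measure_eq_zero_iff_ae_notMem.mpr ?_
      filter_upwards [h1] with x hx
      simp only [Set.mem_setOf_eq, not_lt, hδ]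
      linarith
    exact absurd h2 (hheavy δ hδ0).ne'
  have hrf0 : r f ≠ 0 := by
    intro h0
    rw [h0, norm_zero] at hrf
    exact hf.ne' hrf.symm
  obtain ⟨χ, hχ1, hχ2⟩ := exists_dual_vector ℂ (r f) (norm_ne_zero_iff.mpr hrf0)
  refine ⟨χ.comp r, ?_, ?_, ?_⟩
  · refine le_antisymm ?_ ?_
    · refine le_trans (ContinuousLinearMap.opNorm_comp_le _ _) ?_
      calc ‖χ‖ * ‖r‖ ≤ 1 * 1 :=
            mul_le_mul (le_of_eq hχ1) (resCLM_norm_le B) (norm_nonneg _) zero_le_one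
        _ = 1 := by ring
    · have h1 : ‖(χ.comp r) f‖ = ‖f‖ := by
        simp only [ContinuousLinearMap.comp_apply, hχ2, hrf]
        simp [Complex.norm_real]
      have h2 := (χ.comp r).le_opNorm f
      rw [h1] at h2
      exact le_of_mul_le_mul_right (by linarith) hf
  · simp only [ContinuousLinearMap.comp_apply, hχ2, hrf]; rfl
  · intro g hg
    have : r g = 0 :=
      Lp.ext ((resCLM_ae B g).trans (hg.trans (Lp.coeFn_zero ℂ ⊤ _).symm))
    simp [this]

lemma atom_dichotomy {A : Set X} (hA : IsMeasAtom μ A) {D : Set X} (hD : MeasurableSet D) :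
    μ.restrict A D = 0 ∨ μ.restrict A Dᶜ = 0 := by
  obtain ⟨hAm, hA0, hatom⟩ := hA
  rcases hatom (D ∩ A) (Set.inter_subset_right) (hD.inter hAm) with h | h
  · left; rwa [Measure.restrict_apply hD]
  · right
    rw [Measure.restrict_apply hD.compl]
    have : Dᶜ ∩ A ⊆ A \ (D ∩ A) := by
      intro x ⟨h1, h2⟩; exact ⟨h2, fun ⟨hd, _⟩ => h1 hd⟩
    exact measure_mono_null this h

lemma real_const_on_atom {A : Set X} (hA : IsMeasAtom μ A) {u : X → ℝ}
    (hu : Measurable u) {K : ℝ} (hK : 0 ≤ K) (hb : ∀ᵐ x ∂μ, |u x| ≤ K) :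
    ∃ c : ℝ, ∀ᵐ x ∂μ.restrict A, u x = c := by
  set ν := μ.restrict A with hν
  have hν0 : ν ≠ 0 := by
    intro h0
    have := hA.2.1
    rw [← Measure.restrict_apply_univ, ← hν, h0] at this
    simp at this
  have hbν : ∀ᵐ x ∂ν, |u x| ≤ K := ae_restrict_of_ae hb
  set S : Set ℝ := {t : ℝ | ν {x | t < u x} = 0} with hS
  have hKS : K ∈ S := by
    refine measure_eq_zero_iff_ae_notMem.mpr ?_
    filter_upwards [hbν] with x hx
    simp only [Set.mem_setOf_eq, not_lt]
    exact le_trans (le_abs_self _) hx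
  have hSne : S.Nonempty := ⟨K, hKS⟩
  have hbdd : BddBelow S := by
    refine ⟨-K, fun t ht => ?_⟩
    by_contra hlt
    push_neg at hlt
    have hcon : ∀ᵐ x ∂ν, x ∈ {x | t < u x} := by
      filter_upwards [hbν] with x hx
      show t < u x
      calc t < -K := hlt
        _ ≤ -|u x| := by linarith
        _ ≤ u x := neg_abs_le _
    have h1 : ν {x | t < u x}ᶜ = 0 := by
      refine measure_eq_zero_iff_ae_notMem.mpr ?_
      filter_upwards [hcon] with x hx
      simpa using hx
    have : ν Set.univ = 0 := by
      have := measure_union_le (μ := ν) {x | t < u x} {x | t < u x}ᶜ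
      rw [Set.union_compl_self, ht, h1] at this
      simpa using this
    exact hν0 (Measure.measure_univ_eq_zero.mp this)
  set c := sInf S with hc
  refine ⟨c, ?_⟩
  have hup : ν {x | c < u x} = 0 := by
    have : {x | c < u x} = ⋃ n : ℕ, {x | c + 1/(n+1) < u x} := by
      ext x
      simp only [Set.mem_setOf_eq, Set.mem_iUnion]
      constructor
      · intro hx
        obtain ⟨n, hn⟩ := exists_nat_one_div_lt (sub_pos.mpr hx)
        exact ⟨n, by push_cast at hn ⊢; linarith⟩
      · rintro ⟨n, hn⟩
        have : (0:ℝ) < 1/(n+1) := by positivity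
        linarith
    rw [this]
    refine measure_iUnion_null fun n => ?_
    have h1 : (0:ℝ) < 1/(n+1) := by positivity
    obtain ⟨t, htS, htlt⟩ := (csInf_lt_iff hbdd hSne).mp (by linarith : c < c + 1/(n+1))
    refine measure_mono_null (fun x hx => ?_) htS
    simp only [Set.mem_setOf_eq] at hx ⊢
    linarith
  have hdown : ν {x | u x < c} = 0 := by
    have : {x | u x < c} = ⋃ n : ℕ, {x | u x < c - 1/(n+1)} := by
      ext x
      simp only [Set.mem_setOf_eq, Set.mem_iUnion]
      constructor
      · intro hx
        obtain ⟨n, hn⟩ := exists_nat_one_div_lt (sub_pos.mpr hx)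
        exact ⟨n, by push_cast at hn ⊢; linarith⟩
      · rintro ⟨n, hn⟩
        have : (0:ℝ) < 1/(n+1) := by positivity
        linarith
    rw [this]
    refine measure_iUnion_null fun n => ?_
    have h1 : (0:ℝ) < 1/((n:ℝ)+1) := by positivity
    set δ := 1/((n:ℝ)+1) with hδ
    have hD : MeasurableSet {x | c - δ < u x} := measurableSet_lt measurable_const hu
    rcases atom_dichotomy hA hD with h | h
    · exfalso
      have : c - δ ∈ S := h
      have := csInf_le hbdd this
      rw [← hc] at this
      linarith
    · refine measure_mono_null (fun x hx => ?_) h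
      simp only [Set.mem_setOf_eq, Set.mem_compl_iff, not_lt] at hx ⊢
      linarith
  have h1 : ∀ᵐ x ∂ν, x ∉ {x | c < u x} := measure_eq_zero_iff_ae_notMem.mp hup
  have h2 : ∀ᵐ x ∂ν, x ∉ {x | u x < c} := measure_eq_zero_iff_ae_notMem.mp hdown
  filter_upwards [h1, h2] with x hx1 hx2
  simp only [Set.mem_setOf_eq, not_lt] at hx1 hx2
  linarith

lemma const_on_atom {A : Set X} (hA : IsMeasAtom μ A) (h : Lp ℂ ⊤ μ) :
    ∃ c : ℂ, (h : X → ℂ) =ᵐ[μ.restrict A] fun _ => c := by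
  obtain ⟨F, hFm, hFh⟩ : ∃ F : X → ℂ, StronglyMeasurable F ∧ (h : X → ℂ) =ᵐ[μ] F :=
    ⟨(Lp.aestronglyMeasurable h).mk _, (Lp.aestronglyMeasurable h).stronglyMeasurable_mk,
      (Lp.aestronglyMeasurable h).ae_eq_mk⟩
  have hFme : Measurable F := hFm.measurable
  have hbre : ∀ᵐ x ∂μ, |(F x).re| ≤ ‖h‖ := by
    filter_upwards [linf_ae_le h, hFh] with x h1 h2
    rw [h2] at h1
    exact le_trans (Complex.abs_re_le_norm _) h1
  have hbim : ∀ᵐ x ∂μ, |(F x).im| ≤ ‖h‖ := by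
    filter_upwards [linf_ae_le h, hFh] with x h1 h2
    rw [h2] at h1
    exact le_trans (Complex.abs_im_le_norm _) h1
  obtain ⟨c1, hc1⟩ := real_const_on_atom hA (Complex.measurable_re.comp hFme)
    (norm_nonneg h) hbre
  obtain ⟨c2, hc2⟩ := real_const_on_atom hA (Complex.measurable_im.comp hFme)
    (norm_nonneg h) hbim
  refine ⟨⟨c1, c2⟩, ?_⟩
  filter_upwards [ae_restrict_of_ae hFh, hc1, hc2] with x h1 h2 h3
  rw [h1]
  exact Complex.ext h2 h3

lemma uniq_of_atom (f : Lp ℂ ⊤ μ) (hf : f ≠ 0) (A : Set X) (hA : IsMeasAtom μ A)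
    (hae : ∀ᵐ x ∂μ.restrict A, ‖f x‖ = ‖f‖)
    (ε : ℝ) (hε : 0 < ε) (hnull : μ {x ∈ Aᶜ | ‖f‖ - ε < ‖f x‖} = 0) :
    ∃! ψ : Lp ℂ ⊤ μ →L[ℂ] ℂ, ‖ψ‖ = 1 ∧ ψ f = (‖f‖ : ℂ) := by
  set M := ‖f‖ with hM
  have hM0 : 0 < M := norm_pos_iff.mpr hf
  have hAm : MeasurableSet A := hA.1
  -- the constant of each g on A
  have cst : ∀ g : Lp ℂ ⊤ μ, ∃ c : ℂ, (g : X → ℂ) =ᵐ[μ.restrict A] fun _ => c :=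
    fun g => const_on_atom hA g
  set c : Lp ℂ ⊤ μ → ℂ := fun g => (cst g).choose with hc
  have hcst : ∀ g : Lp ℂ ⊤ μ, (g : X → ℂ) =ᵐ[μ.restrict A] fun _ => c g :=
    fun g => (cst g).choose_spec
  -- |c f| = M
  have hνne : (ae (μ.restrict A)).NeBot := by
    refine ae_neBot.mpr ?_
    intro h0
    have := hA.2.1
    rw [← Measure.restrict_apply_univ, h0] at this
    simp at this
  have hcf : ‖c f‖ = M := by
    obtain ⟨x, hx1, hx2⟩ := ((hcst f).and hae).exists
    rw [← hx2, hx1]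
  have hcf0 : c f ≠ 0 := by
    intro h0; rw [h0] at hcf; simp at hcf; exact hM0.ne' hcf.symm
  -- key step: any norming functional kills functions vanishing a.e. on A
  have key0 : ∀ ψ : Lp ℂ ⊤ μ →L[ℂ] ℂ, ‖ψ‖ = 1 → ψ f = (M : ℂ) →
      ∀ h : Lp ℂ ⊤ μ, (h : X → ℂ) =ᵐ[μ.restrict A] 0 → ψ h = 0 := by
    intro ψ hψ1 hψf h hh0
    by_contra hne
    set K := ‖h‖ with hK
    have hK0 : 0 ≤ K := norm_nonneg _
    set t : ℝ := ε / (K + 1) with ht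
    have ht0 : 0 < t := by positivity
    set a : ℂ := (t : ℂ) * ((‖ψ h‖ : ℂ) / ψ h) with ha
    have haψ : a * ψ h = (t * ‖ψ h‖ : ℝ) := by
      rw [ha]
      push_cast
      field_simp
    have habs : ‖a‖ = t := by
      rw [ha]
      simp only [norm_mul, norm_div, Complex.norm_real, norm_norm]
      rw [div_self (by simpa using hne), mul_one, Real.norm_of_nonneg ht0.le]
    set w := f + a • h with hw
    have hwcoe : (w : X → ℂ) =ᵐ[μ] fun x => f x + a * h x := by
      filter_upwards [Lp.coeFn_add f (a • h), Lp.coeFn_smul a h] with x h1 h2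
      rw [h1]
      simp only [Pi.add_apply]
      rw [h2]
      simp
    have hh0' : ∀ᵐ x ∂μ, x ∈ A → (h x : ℂ) = 0 := by
      rw [← ae_restrict_iff' hAm]
      exact hh0
    have hfA : ∀ᵐ x ∂μ, x ∈ A → ‖f x‖ = M := by
      rw [← ae_restrict_iff' hAm]
      exact hae
    have hout : ∀ᵐ x ∂μ, x ∉ {x ∈ Aᶜ | M - ε < ‖f x‖} :=
      measure_eq_zero_iff_ae_notMem.mp hnull
    have hwb : ∀ᵐ x ∂μ, ‖w x‖ ≤ M := by
      filter_upwards [hwcoe, hh0', hfA, hout, linf_ae_le h] with x h1 h2 h3 h4 h5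
      rw [h1]
      by_cases hxA : x ∈ A
      · rw [h2 hxA, mul_zero, add_zero, h3 hxA]
      · have hfx : ‖f x‖ ≤ M - ε := by
          by_contra hgt
          push_neg at hgt
          exact h4 ⟨hxA, hgt⟩
        calc ‖f x + a * h x‖ ≤ ‖f x‖ + ‖a * h x‖ := norm_add_le _ _
          _ = ‖f x‖ + ‖a‖ * ‖h x‖ := by
              rw [norm_mul]
          _ ≤ (M - ε) + t * K := by
              refine add_le_add hfx ?_
              rw [habs]
              exact mul_le_mul_of_nonneg_left h5 ht0.le
          _ ≤ M := by
              have : t * K ≤ ε := by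
                rw [ht]
                rw [div_mul_eq_mul_div, div_le_iff₀ (by linarith)]
                nlinarith
              linarith
    have hwnorm : ‖w‖ ≤ M := linf_norm_le w hM0.le hwb
    have hψw : ψ w = ((M + t * ‖ψ h‖ : ℝ) : ℂ) := by
      rw [hw, map_add, ψ.map_smul, hψf, smul_eq_mul, haψ]
      push_cast
      ring
    have h1 : ‖ψ w‖ = M + t * ‖ψ h‖ := by
      rw [hψw, Complex.norm_real, Real.norm_eq_abs, abs_of_pos]
      have : 0 < ‖ψ h‖ := by simpa using hne
      positivity
    have h2 : ‖ψ w‖ ≤ ‖ψ‖ * ‖w‖ := ψ.le_opNorm w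
    rw [h1, hψ1, one_mul] at h2
    have h3 : 0 < ‖ψ h‖ := by simpa using hne
    nlinarith
  -- indicator of A in Lp
  have memA : MemLp (A.indicator fun _ => (1:ℂ)) ⊤ μ := by
    refine memLp_top_of_bound (aestronglyMeasurable_const.indicator hAm) 1 ?_
    refine Filter.Eventually.of_forall fun x => ?_
    by_cases hx : x ∈ A <;> simp [hx]
  set eA : Lp ℂ ⊤ μ := memA.toLp _ with heA
  -- every norming functional is determined
  have key : ∀ ψ : Lp ℂ ⊤ μ →L[ℂ] ℂ, ‖ψ‖ = 1 → ψ f = (M : ℂ) →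
      ∀ g : Lp ℂ ⊤ μ, ψ g = c g * ((M : ℂ) / c f) := by
    intro ψ hψ1 hψf g
    have hvan : ∀ g : Lp ℂ ⊤ μ, ((g - (c g) • eA : Lp ℂ ⊤ μ) : X → ℂ) =ᵐ[μ.restrict A] 0 := by
      intro g
      have h1 : ((g - (c g) • eA : Lp ℂ ⊤ μ) : X → ℂ) =ᵐ[μ]
          fun x => g x - c g * (A.indicator (fun _ => (1:ℂ)) x) := by
        filter_upwards [Lp.coeFn_sub g ((c g) • eA), Lp.coeFn_smul (c g) eA,
          memA.coeFn_toLp] with x h1 h2 h3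
        rw [h1]
        simp only [Pi.sub_apply]
        rw [h2]
        simp only [Pi.smul_apply, smul_eq_mul]
        rw [h3]
      refine (h1.filter_mono (ae_mono Measure.restrict_le_self)).trans ?_
      filter_upwards [hcst g, ae_restrict_mem hAm] with x h2 h3
      simp only [h2, Set.indicator_of_mem h3, mul_one, Pi.zero_apply]
      ring
    have hval : ∀ g : Lp ℂ ⊤ μ, ψ g = c g * ψ eA := by
      intro g
      have := key0 ψ hψ1 hψf _ (hvan g)
      rw [map_sub, ψ.map_smul, smul_eq_mul, sub_eq_zero] at this
      exact this
    have heval : ψ eA = (M : ℂ) / c f := by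
      have := hval f
      rw [hψf] at this
      rw [eq_div_iff hcf0]
      linear_combination -this
    rw [hval g, heval]
  -- existence
  obtain ⟨ψ₀, hψ₀1, hψ₀2⟩ := exists_dual_vector ℂ f (norm_ne_zero_iff.mpr hf)
  have hψ₀2' : ψ₀ f = (M : ℂ) := by rw [hψ₀2]; rfl
  refine ⟨ψ₀, ⟨hψ₀1, hψ₀2'⟩, ?_⟩
  rintro ψ ⟨hψ1, hψ2⟩
  refine ContinuousLinearMap.ext fun g => ?_
  rw [key ψ hψ1 hψ2 g, key ψ₀ hψ₀1 hψ₀2' g]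

lemma rhs_of_uniq (f : Lp ℂ ⊤ μ) (hf : f ≠ 0)
    (uniq : ∃! ψ : Lp ℂ ⊤ μ →L[ℂ] ℂ, ‖ψ‖ = 1 ∧ ψ f = (‖f‖ : ℂ)) :
    ∃ A : Set X, IsMeasAtom μ A ∧
      (∀ᵐ x ∂μ.restrict A, ‖f x‖ = ‖f‖) ∧
      ∃ ε : ℝ, 0 < ε ∧ μ {x ∈ Aᶜ | ‖f‖ - ε < ‖f x‖} = 0 := by
  set M := ‖f‖ with hMdef
  have hM0 : 0 < M := norm_pos_iff.mpr hf
  -- no-split principle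
  have noSplit : ∀ B : Set X, MeasurableSet B →
      (∀ δ : ℝ, 0 < δ → 0 < μ.restrict B {x | M - δ < ‖f x‖}) →
      (∀ δ : ℝ, 0 < δ → 0 < μ.restrict Bᶜ {x | M - δ < ‖f x‖}) → False := by
    intro B hB hv1 hv2
    obtain ⟨ψ₁, hψ₁1, hψ₁2, hψ₁3⟩ := norming_on f hM0 B hv1
    obtain ⟨ψ₂, hψ₂1, hψ₂2, hψ₂3⟩ := norming_on f hM0 Bᶜ hv2
    obtain ⟨ψ, hψ, huniq⟩ := uniq
    have he1 : ψ₁ = ψ := huniq ψ₁ ⟨hψ₁1, hψ₁2⟩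
    have he2 : ψ₂ = ψ := huniq ψ₂ ⟨hψ₂1, hψ₂2⟩
    have m1 : MemLp (B.indicator (⇑f)) ⊤ μ := (Lp.memLp f).indicator hB
    have m2 : MemLp (Bᶜ.indicator (⇑f)) ⊤ μ := (Lp.memLp f).indicator hB.compl
    set g1 := m1.toLp _ with hg1
    set g2 := m2.toLp _ with hg2
    have hsum : g1 + g2 = f := by
      refine Lp.ext ?_
      filter_upwards [Lp.coeFn_add g1 g2, m1.coeFn_toLp, m2.coeFn_toLp] with x h1 h2 h3
      rw [h1]
      simp only [Pi.add_apply]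
      rw [h2, h3]
      by_cases hx : x ∈ B
      · rw [Set.indicator_of_mem hx, Set.indicator_of_notMem (Set.notMem_compl_iff.mpr hx),
          add_zero]
      · rw [Set.indicator_of_notMem hx, Set.indicator_of_mem (Set.mem_compl hx), zero_add]
    have hz2 : (g2 : X → ℂ) =ᵐ[μ.restrict B] 0 := by
      refine (m2.coeFn_toLp.filter_mono (ae_mono Measure.restrict_le_self)).trans ?_
      filter_upwards [ae_restrict_mem hB] with x hx
      simp only [Pi.zero_apply]
      exact Set.indicator_of_notMem (by simpa using hx) _
    have hz1 : (g1 : X → ℂ) =ᵐ[μ.restrict Bᶜ] 0 := by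
      refine (m1.coeFn_toLp.filter_mono (ae_mono Measure.restrict_le_self)).trans ?_
      filter_upwards [ae_restrict_mem hB.compl] with x hx
      simp only [Pi.zero_apply]
      exact Set.indicator_of_notMem (by simpa using hx) _
    have e1 : ψ g2 = 0 := by rw [← he1]; exact hψ₁3 g2 hz2
    have e2 : ψ g1 = 0 := by rw [← he2]; exact hψ₂3 g1 hz1
    have : ψ f = 0 := by rw [← hsum, map_add, e1, e2, add_zero]
    rw [← he2, hψ₂2] at this
    exact hM0.ne' (Complex.ofReal_eq_zero.mp this)
  -- measurable representative
  obtain ⟨g, hgm, hfg⟩ : ∃ g : X → ℂ, StronglyMeasurable g ∧ (f : X → ℂ) =ᵐ[μ] g :=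
    ⟨(Lp.aestronglyMeasurable f).mk _, (Lp.aestronglyMeasurable f).stronglyMeasurable_mk,
      (Lp.aestronglyMeasurable f).ae_eq_mk⟩
  set N := {x | (f : X → ℂ) x ≠ g x} with hN
  have hN0 : μ N = 0 := hfg
  set S : ℝ → Set X := fun δ => {x | M - δ < ‖g x‖} with hS
  have hSmeas : ∀ δ, MeasurableSet (S δ) :=
    fun δ => measurableSet_lt measurable_const hgm.measurable.norm
  have hSmono : ∀ {δ δ' : ℝ}, δ ≤ δ' → S δ ⊆ S δ' := by
    intro δ δ' hd x hx
    simp only [hS, Set.mem_setOf_eq] at hx ⊢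
    linarith
  have hSpos : ∀ δ : ℝ, 0 < δ → 0 < μ (S δ) := by
    intro δ hδ
    have h1 := linf_pos_meas f hM0 hδ
    have h2 : {x | M - δ < ‖f x‖} ⊆ S δ ∪ N := by
      intro x hx
      by_cases hxN : x ∈ N
      · exact Or.inr hxN
      · left
        have : (f : X → ℂ) x = g x := by simpa [hN] using hxN
        simpa [hS, Set.mem_setOf_eq, ← this] using hx
    calc 0 < μ {x | M - δ < ‖f x‖} := h1
      _ ≤ μ (S δ ∪ N) := measure_mono h2
      _ ≤ μ (S δ) + μ N := measure_union_le _ _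
      _ = μ (S δ) := by rw [hN0, add_zero]
  -- bridge to the restrict form
  have bridge : ∀ B : Set X, MeasurableSet B → (∀ δ : ℝ, 0 < δ → 0 < μ (S δ ∩ B)) →
      ∀ δ : ℝ, 0 < δ → 0 < μ.restrict B {x | M - δ < ‖f x‖} := by
    intro B hB hpos δ hδ
    rw [Measure.restrict_apply' hB]
    have h2 : (S δ ∩ B) \ N ⊆ {x | M - δ < ‖f x‖} ∩ B := by
      rintro x ⟨⟨hx1, hx2⟩, hx3⟩
      have : (f : X → ℂ) x = g x := by simpa [hN] using hx3
      refine ⟨?_, hx2⟩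
      show M - δ < ‖f x‖
      rw [this]; exact hx1
    calc 0 < μ (S δ ∩ B) := hpos δ hδ
      _ = μ ((S δ ∩ B) \ N) := (measure_diff_null hN0).symm
      _ ≤ μ ({x | M - δ < ‖f x‖} ∩ B) := measure_mono h2
  have noSplit' : ∀ B : Set X, MeasurableSet B →
      (∀ δ : ℝ, 0 < δ → 0 < μ (S δ ∩ B)) → (∀ δ : ℝ, 0 < δ → 0 < μ (S δ ∩ Bᶜ)) → False :=
    fun B hB h1 h2 => noSplit B hB (bridge B hB h1) (bridge Bᶜ hB.compl h2)
  -- the candidate atom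
  set T : Set X := {x | M ≤ ‖g x‖} with hT
  have hTmeas : MeasurableSet T := measurableSet_le measurable_const hgm.measurable.norm
  have hTS : ∀ {δ : ℝ}, 0 < δ → T ⊆ S δ := by
    intro δ hδ x hx
    simp only [hT, Set.mem_setOf_eq] at hx
    simp only [hS, Set.mem_setOf_eq]
    linarith
  -- step 1 : μ T > 0
  have hTpos : 0 < μ T := by
    by_contra hTc
    have hT0 : μ T = 0 := by simpa [pos_iff_ne_zero] using hTc
    set R : ℕ → Set X := fun n => S (1/(n+1)) \ S (1/(n+2)) with hR
    have hRmeas : ∀ n, MeasurableSet (R n) := fun n => (hSmeas _).diff (hSmeas _)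
    have hRsub : ∀ n, R n ⊆ S (1/(n+1)) := fun n => Set.diff_subset
    have hRdisj : ∀ {n m : ℕ}, n < m → ∀ x, x ∈ R m → x ∉ R n := by
      intro n m hnm x hxm hxn
      have h1 : x ∈ S (1/(m+1)) := hRsub m hxm
      have h2 : (1:ℝ)/(m+1) ≤ 1/(n+2) := by
        apply one_div_le_one_div_of_le
        · positivity
        · have h3 : (n:ℝ) + 1 ≤ m := by exact_mod_cast hnm
          push_cast
          linarith
      exact hxn.2 (hSmono h2 h1)
    have hRfind : ∀ Nn : ℕ, ∃ n : ℕ, Nn ≤ n ∧ 0 < μ (R n) := by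
      intro Nn
      by_contra hc
      push_neg at hc
      have hc' : ∀ n, Nn ≤ n → μ (R n) = 0 := by
        intro n hn
        simpa [pos_iff_ne_zero] using hc n hn
      have hcover : S (1/(Nn+1)) ⊆ T ∪ ⋃ (n : ℕ) (_ : Nn ≤ n), R n := by
        intro x hx
        simp only [hS, Set.mem_setOf_eq] at hx
        set v := ‖g x‖ with hv
        by_cases hMv : M ≤ v
        · exact Or.inl hMv
        · push_neg at hMv
          right
          have hP : ∃ k : ℕ, v ≤ M - 1/(k+2) := by
            obtain ⟨m, hm⟩ := exists_nat_one_div_lt (sub_pos.mpr hMv)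
            refine ⟨m, ?_⟩
            have h2 : (1:ℝ)/(m+2) ≤ 1/(m+1) := by
              apply one_div_le_one_div_of_le
              · positivity
              · push_cast; linarith
            push_cast at hm ⊢
            linarith
          classical
          obtain ⟨n, hn1, hmin⟩ : ∃ n : ℕ, (v ≤ M - 1/(n+2)) ∧
              ∀ k, k < n → ¬(v ≤ M - 1/(k+2)) :=
            ⟨Nat.find hP, Nat.find_spec hP, fun k hk => Nat.find_min hP hk⟩
          have hnN : Nn ≤ n := by
            by_contra hlt
            push_neg at hlt
            have h3 : (1:ℝ)/(Nn+1) ≤ 1/(n+2) := by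
              apply one_div_le_one_div_of_le
              · positivity
              · push_cast
                have : (n:ℝ) + 1 ≤ Nn := by exact_mod_cast hlt
                linarith
            linarith
          refine Set.mem_iUnion.mpr ⟨n, Set.mem_iUnion.mpr ⟨hnN, ?_, ?_⟩⟩
          · show M - 1/((n:ℝ)+1) < v
            rcases n with _ | k
            · have hN0 : Nn = 0 := by omega
              rw [hN0] at hx
              push_cast at hx ⊢
              linarith
            · have h5 := hmin k (by omega)
              push_neg at h5
              push_cast at h5 ⊢
              ring_nf at h5 ⊢
              linarith
          · show ¬ (M - 1/((n:ℝ)+2) < v)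
            push_neg
            exact hn1
      have : μ (S (1/(Nn+1))) = 0 := by
        refine measure_mono_null hcover ?_
        refine le_antisymm ?_ zero_le
        calc μ (T ∪ ⋃ (n : ℕ) (_ : Nn ≤ n), R n)
            ≤ μ T + μ (⋃ (n : ℕ) (_ : Nn ≤ n), R n) := measure_union_le _ _
          _ = 0 := by
              rw [hT0, measure_iUnion_null fun n => measure_iUnion_null fun hn => hc' n hn]
              simp
      exact absurd this (hSpos _ (by positivity)).ne'
    -- build a strictly increasing sequence of heavy pieces
    set a : ℕ → ℕ := fun k => Nat.rec (hRfind 0).choose (fun _ ih => (hRfind (ih + 1)).choose) k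
      with ha
    have haR : ∀ k, 0 < μ (R (a k)) := by
      intro k
      cases k with
      | zero => exact (hRfind 0).choose_spec.2
      | succ k => exact (hRfind (a k + 1)).choose_spec.2
    have haS : ∀ k, a k < a (k + 1) :=
      fun k => Nat.lt_of_lt_of_le (Nat.lt_succ_self _) (hRfind (a k + 1)).choose_spec.1
    have haMono : StrictMono a := strictMono_nat_of_lt_succ haS
    have haGe : ∀ k, k ≤ a k := fun k => haMono.le_apply
    set B : Set X := ⋃ k, R (a (2 * k)) with hB
    have hBmeas : MeasurableSet B := MeasurableSet.iUnion fun k => hRmeas _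
    have hBin : ∀ k, R (a (2 * k)) ⊆ B := fun k => Set.subset_iUnion (fun k => R (a (2*k))) k
    have hBout : ∀ k, R (a (2 * k + 1)) ⊆ Bᶜ := by
      intro k x hx hxB
      obtain ⟨j, hj⟩ := Set.mem_iUnion.mp hxB
      rcases lt_trichotomy (a (2 * j)) (a (2 * k + 1)) with h | h | h
      · exact hRdisj h x hx hj
      · have h2 : 2 * j = 2 * k + 1 := haMono.injective h
        omega
      · exact hRdisj h x hj hx
    have hRheavy : ∀ (n : ℕ) {δ : ℝ}, 0 < δ → 1/((n:ℝ)+1) ≤ δ → R n ⊆ S δ := by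
      intro n δ hδ h1 x hx
      exact hSmono h1 (hRsub n hx)
    have hfind : ∀ {δ : ℝ}, 0 < δ → ∀ j : ℕ, ∃ k, j ≤ k ∧ 1/((a k : ℝ)+1) ≤ δ := by
      intro δ hδ j
      obtain ⟨m, hm⟩ := exists_nat_one_div_lt hδ
      refine ⟨max m j, le_max_right _ _, ?_⟩
      have h1 : (m:ℝ) ≤ a (max m j) := by
        exact_mod_cast le_trans (le_max_left m j) (haGe (max m j))
      refine le_trans ?_ hm.le
      apply one_div_le_one_div_of_le
      · positivity
      · push_cast; linarith
    refine noSplit' B hBmeas ?_ ?_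
    · intro δ hδ
      obtain ⟨k, -, hk⟩ := hfind hδ 0
      have h1 : R (a (2 * k)) ⊆ S δ ∩ B := by
        refine Set.subset_inter ?_ (hBin k)
        refine hRheavy _ hδ ?_
        refine le_trans ?_ hk
        apply one_div_le_one_div_of_le
        · positivity
        · have := haMono.le_iff_le.mpr (by omega : k ≤ 2 * k)
          push_cast; exact_mod_cast by
            have := haMono.le_iff_le.mpr (by omega : k ≤ 2 * k)
            omega
      exact lt_of_lt_of_le (haR (2 * k)) (measure_mono h1)
    · intro δ hδ
      obtain ⟨k, -, hk⟩ := hfind hδ 0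
      have h1 : R (a (2 * k + 1)) ⊆ S δ ∩ Bᶜ := by
        refine Set.subset_inter ?_ (hBout k)
        refine hRheavy _ hδ ?_
        refine le_trans ?_ hk
        apply one_div_le_one_div_of_le
        · positivity
        · push_cast; exact_mod_cast by
            have := haMono.le_iff_le.mpr (by omega : k ≤ 2 * k + 1)
            omega
      exact lt_of_lt_of_le (haR (2 * k + 1)) (measure_mono h1)
  -- step 2 : some ε works
  have hTSδ : ∀ {δ : ℝ}, 0 < δ → S δ ∩ T = T := by
    intro δ hδ
    exact Set.inter_eq_right.mpr (hTS hδ)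
  have hεex : ∃ ε : ℝ, 0 < ε ∧ μ (S ε ∩ Tᶜ) = 0 := by
    by_contra hc
    push_neg at hc
    refine noSplit' T hTmeas ?_ ?_
    · intro δ hδ
      rw [hTSδ hδ]
      exact hTpos
    · intro δ hδ
      have := hc δ hδ
      exact pos_iff_ne_zero.mpr this
  obtain ⟨ε, hε0, hεnull⟩ := hεex
  -- step 3 : T is an atom
  have hatom : ∀ B : Set X, B ⊆ T → MeasurableSet B → μ B = 0 ∨ μ (T \ B) = 0 := by
    intro B hBT hBm
    by_contra hc
    push_neg at hc
    obtain ⟨h1, h2⟩ := hc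
    refine noSplit' B hBm ?_ ?_
    · intro δ hδ
      have : B ⊆ S δ ∩ B := Set.subset_inter (fun x hx => hTS hδ (hBT hx)) le_rfl
      exact lt_of_lt_of_le (pos_iff_ne_zero.mpr h1) (measure_mono this)
    · intro δ hδ
      have : T \ B ⊆ S δ ∩ Bᶜ :=
        fun x hx => ⟨hTS hδ hx.1, hx.2⟩
      exact lt_of_lt_of_le (pos_iff_ne_zero.mpr h2) (measure_mono this)
  refine ⟨T, ⟨hTmeas, hTpos, hatom⟩, ?_, ε, hε0, ?_⟩
  · -- a.e. equality on T
    have h1 : ∀ᵐ x ∂μ, ‖f x‖ ≤ M := linf_ae_le f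
    have h2 : ∀ᵐ x ∂μ.restrict T, x ∈ T := ae_restrict_mem hTmeas
    filter_upwards [ae_restrict_of_ae h1, ae_restrict_of_ae hfg, h2] with x hx1 hx2 hx3
    have h4 : ‖(f : X → ℂ) x‖ = ‖g x‖ := by rw [hx2]
    have h5 : M ≤ ‖g x‖ := hx3
    linarith
  · refine measure_mono_null ?_ (measure_union_null hεnull hN0)
    rintro x ⟨hx1, hx2⟩
    by_cases hxN : x ∈ N
    · exact Or.inr hxN
    · left
      have heq : (f : X → ℂ) x = g x := by simpa [hN] using hxN
      refine ⟨?_, hx1⟩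
      show M - ε < ‖g x‖
      rw [← heq]
      exact hx2

end Aux

/-- **Smooth points of `L_∞`.** A nonzero `f ∈ L_∞(X, μ)` is smooth iff there is a
`μ`-atom `A` with `|f| = ‖f‖_∞` a.e. on `A` and, for some `ε > 0`, the set
`{x ∈ X \ A : |f x| > ‖f‖_∞ - ε}` is null. -/
theorem smooth_points_Linfty (X : Type*) [MeasurableSpace X] (μ : Measure X)
    (f : Lp ℂ ⊤ μ) (hf : f ≠ 0) :
    (∃! ψ : Lp ℂ ⊤ μ →L[ℂ] ℂ, ‖ψ‖ = 1 ∧ ψ f = (‖f‖ : ℂ)) ↔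
      ∃ A : Set X, IsMeasAtom μ A ∧
        (∀ᵐ x ∂μ.restrict A, ‖f x‖ = ‖f‖) ∧
        ∃ ε : ℝ, 0 < ε ∧ μ {x ∈ Aᶜ | ‖f‖ - ε < ‖f x‖} = 0 := by
  constructor
  · exact rhs_of_uniq f hf
  · rintro ⟨A, hA, hae, ε, hε, hnull⟩
    exact uniq_of_atom f hf A hA hae ε hε hnull
end

section
/- Let (X, Σ, λ) be a measure space and let f ∈ L_∞(X, λ) be nonzero. Then f is a left-symmetric point of L_∞(X, λ) if and only if there exists a λ-atom A such that |f(x)| = ‖f‖_∞ for λ-almost every x ∈ A and f(x) = 0 for λ-almost every x ∈ X \ A. -/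
open MeasureTheory

namespace LSHelp
open Set Filter
open scoped ENNReal NNReal

variable {X : Type*} [MeasurableSpace X] {μ : Measure X}

lemma esssup_split (h : X → ℂ) (B : Set X) :
    eLpNormEssSup h μ =
      max (eLpNormEssSup h (μ.restrict B)) (eLpNormEssSup h (μ.restrict Bᶜ)) := by
  apply le_antisymm
  · have h1 : ∀ᵐ x ∂(μ.restrict B), (‖h x‖₊ : ℝ≥0∞) ≤
        max (eLpNormEssSup h (μ.restrict B)) (eLpNormEssSup h (μ.restrict Bᶜ)) :=
      ae_le_eLpNormEssSup.mono fun x hx => hx.trans (le_max_left _ _)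
    have h2 : ∀ᵐ x ∂(μ.restrict Bᶜ), (‖h x‖₊ : ℝ≥0∞) ≤
        max (eLpNormEssSup h (μ.restrict B)) (eLpNormEssSup h (μ.restrict Bᶜ)) :=
      ae_le_eLpNormEssSup.mono fun x hx => hx.trans (le_max_right _ _)
    exact essSup_le_of_ae_le _ (ae_of_ae_restrict_of_ae_restrict_compl B h1 h2)
  · exact max_le
      (eLpNormEssSup_mono_measure _ (Measure.absolutelyContinuous_of_le Measure.restrict_le_self))
      (eLpNormEssSup_mono_measure _ (Measure.absolutelyContinuous_of_le Measure.restrict_le_self))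

lemma esssup_restrict_mono (h : X → ℂ) {S T : Set X} (hST : S ⊆ T) :
    eLpNormEssSup h (μ.restrict S) ≤ eLpNormEssSup h (μ.restrict T) :=
  eLpNormEssSup_mono_measure _
    (Measure.absolutelyContinuous_of_le (Measure.restrict_mono hST le_rfl))

lemma esssup_restrict_le (h : X → ℂ) (S : Set X) :
    eLpNormEssSup h (μ.restrict S) ≤ eLpNormEssSup h μ :=
  eLpNormEssSup_mono_measure _ (Measure.absolutelyContinuous_of_le Measure.restrict_le_self)

lemma atom_real_const {A : Set X} (hA : IsMeasAtom μ A) {ψ : X → ℝ} (hψ : Measurable ψ) :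
    ∃ c : ℝ, ∀ᵐ x ∂μ.restrict A, ψ x = c := by
  obtain ⟨hAm, hA0, hAatom⟩ := hA
  have dich : ∀ q : ℚ, μ (A ∩ {x | ψ x ≤ (q : ℝ)}) = 0 ∨ μ (A \ {x | ψ x ≤ (q : ℝ)}) = 0 := by
    intro q
    have hSm : MeasurableSet {x | ψ x ≤ (q : ℝ)} := measurableSet_le hψ measurable_const
    rcases hAatom _ inter_subset_left (hAm.inter hSm) with h | h
    · exact Or.inl h
    · right
      have : A \ (A ∩ {x | ψ x ≤ (q : ℝ)}) = A \ {x | ψ x ≤ (q : ℝ)} := diff_self_inter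
      rwa [this] at h
  set T : Set ℚ := {q : ℚ | μ (A \ {x | ψ x ≤ (q : ℝ)}) = 0} with hT
  have hTne : T.Nonempty := by
    by_contra hTe
    rw [not_nonempty_iff_eq_empty] at hTe
    have hall : ∀ q : ℚ, μ (A ∩ {x | ψ x ≤ (q : ℝ)}) = 0 := by
      intro q
      refine (dich q).resolve_right fun h => ?_
      have : q ∈ T := h
      simp [hTe] at this
    have hcover : A ⊆ ⋃ q : ℚ, A ∩ {x | ψ x ≤ (q : ℝ)} := by
      intro x hx
      obtain ⟨q, hq⟩ := exists_rat_gt (ψ x)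
      exact mem_iUnion.mpr ⟨q, hx, hq.le⟩
    exact hA0.ne' (measure_mono_null hcover (measure_iUnion_null fun q => hall q))
  have hU : μ (⋃ q : T, A \ {x | ψ x ≤ ((q : ℚ) : ℝ)}) = 0 :=
    measure_iUnion_null fun q => q.2
  have hbdd : BddBelow ((fun q : ℚ => (q : ℝ)) '' T) := by
    by_contra hb
    rw [not_bddBelow_iff] at hb
    have hsub : A ⊆ ⋃ q : T, A \ {x | ψ x ≤ ((q : ℚ) : ℝ)} := by
      intro x hx
      obtain ⟨y, ⟨q, hqT, rfl⟩, hlt⟩ := hb (ψ x)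
      exact mem_iUnion.mpr ⟨⟨q, hqT⟩, hx, not_le.mpr hlt⟩
    exact hA0.ne' (measure_mono_null hsub hU)
  set c : ℝ := sInf ((fun q : ℚ => (q : ℝ)) '' T) with hc
  have hV : μ (⋃ q : {q : ℚ // (q : ℝ) < c}, A ∩ {x | ψ x ≤ ((q : ℚ) : ℝ)}) = 0 := by
    refine measure_iUnion_null fun q => ?_
    refine (dich q).resolve_right fun h => ?_
    have : c ≤ ((q : ℚ) : ℝ) := csInf_le hbdd ⟨(q : ℚ), h, rfl⟩
    exact absurd q.2 (not_lt.mpr this)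
  refine ⟨c, ?_⟩
  refine (ae_restrict_iff' hAm).mpr ?_
  rw [ae_iff]
  refine measure_mono_null (fun x hx => ?_) (measure_union_null hU hV)
  simp only [mem_setOf_eq] at hx
  push_neg at hx
  obtain ⟨hxA, hxne⟩ := hx
  by_cases hq : ∀ q ∈ T, ψ x ≤ (q : ℝ)
  · have hle : ψ x ≤ c := le_csInf (hTne.image _) (by rintro y ⟨q, hqT, rfl⟩; exact hq q hqT)
    have hlt : ψ x < c := lt_of_le_of_ne hle hxne
    obtain ⟨q, hq1, hq2⟩ := exists_rat_btwn hlt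
    exact mem_union_right _ (mem_iUnion.mpr ⟨⟨q, hq2⟩, hxA, hq1.le⟩)
  · push_neg at hq
    obtain ⟨q, hqT, hqlt⟩ := hq
    exact mem_union_left _ (mem_iUnion.mpr ⟨⟨q, hqT⟩, hxA, not_le.mpr hqlt⟩)

lemma atom_ae_const {A : Set X} (hA : IsMeasAtom μ A) {φ : X → ℂ}
    (hφ : AEStronglyMeasurable φ μ) :
    ∃ c : ℂ, ∀ᵐ x ∂μ.restrict A, φ x = c := by
  have hm : Measurable (hφ.mk φ) := hφ.stronglyMeasurable_mk.measurable
  obtain ⟨cr, hcr⟩ := atom_real_const hA (Complex.measurable_re.comp hm)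
  obtain ⟨ci, hci⟩ := atom_real_const hA (Complex.measurable_im.comp hm)
  refine ⟨⟨cr, ci⟩, ?_⟩
  have he : φ =ᵐ[μ.restrict A] hφ.mk φ := ae_restrict_of_ae hφ.ae_eq_mk
  filter_upwards [hcr, hci, he] with x h1 h2 h3
  rw [h3]
  exact Complex.ext h1 h2

lemma norm_eq (f : Lp ℂ ⊤ μ) : ‖f‖ = (eLpNormEssSup (⇑f) μ).toReal := by
  rw [Lp.norm_def, eLpNorm_exponent_top]

lemma esssup_ne_top (f : Lp ℂ ⊤ μ) : eLpNormEssSup (⇑f) μ ≠ ⊤ := by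
  have := Lp.eLpNorm_ne_top f
  rwa [eLpNorm_exponent_top] at this

lemma esssup_eq_ofReal_norm (f : Lp ℂ ⊤ μ) : eLpNormEssSup (⇑f) μ = ENNReal.ofReal ‖f‖ := by
  rw [norm_eq, ENNReal.ofReal_toReal (esssup_ne_top f)]

lemma coe_add_smul (f g : Lp ℂ ⊤ μ) (c : ℂ) :
    ⇑(f + c • g) =ᵐ[μ] fun x => f x + c * g x := by
  filter_upwards [Lp.coeFn_add f (c • g), Lp.coeFn_smul c g] with x h1 h2
  rw [h1, Pi.add_apply, h2, Pi.smul_apply, smul_eq_mul]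

/-- Lower bound on the norm from a restricted essential supremum. -/
lemma norm_ge_of_restrict (h : Lp ℂ ⊤ μ) {S : Set X} {φ : X → ℂ}
    (heq : ⇑h =ᵐ[μ.restrict S] φ) :
    (eLpNormEssSup φ (μ.restrict S)).toReal ≤ ‖h‖ := by
  rw [norm_eq]
  exact ENNReal.toReal_mono (esssup_ne_top h)
    ((eLpNormEssSup_congr_ae heq.symm).le.trans (esssup_restrict_le _ _))

/-- Upper bound on the norm from a.e. bounds on a set and its complement. -/
lemma norm_le_of_ae_bounds {h : Lp ℂ ⊤ μ} {S : Set X} {a b : ℝ}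
    (ha : 0 ≤ a)
    (h1 : ∀ᵐ x ∂μ.restrict S, ‖h x‖ ≤ a) (h2 : ∀ᵐ x ∂μ.restrict Sᶜ, ‖h x‖ ≤ b) :
    ‖h‖ ≤ max a b := by
  rw [norm_eq]
  have hae : ∀ᵐ x ∂μ, ‖h x‖ ≤ max a b :=
    ae_of_ae_restrict_of_ae_restrict_compl S
      (h1.mono fun x hx => hx.trans (le_max_left _ _))
      (h2.mono fun x hx => hx.trans (le_max_right _ _))
  calc (eLpNormEssSup (⇑h) μ).toReal
      ≤ (ENNReal.ofReal (max a b)).toReal :=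
        ENNReal.toReal_mono ENNReal.ofReal_ne_top (eLpNormEssSup_le_of_ae_bound hae)
    _ = max a b := ENNReal.toReal_ofReal (le_trans ha (le_max_left _ _))

lemma ae_norm_le_restrict (h : Lp ℂ ⊤ μ) (S : Set X) :
    ∀ᵐ x ∂μ.restrict S, ‖h x‖ ≤ (eLpNormEssSup (⇑h) (μ.restrict S)).toReal := by
  have hne : eLpNormEssSup (⇑h) (μ.restrict S) ≠ ⊤ := by
    intro htop
    have h2 := esssup_restrict_le (μ := μ) (⇑h) S
    rw [htop] at h2
    exact esssup_ne_top h (top_le_iff.mp h2)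
  filter_upwards [ae_le_eLpNormEssSup (f := ⇑h) (μ := μ.restrict S)] with x hx
  have := ENNReal.toReal_mono hne hx
  simpa using this

lemma ae_norm_le (h : Lp ℂ ⊤ μ) : ∀ᵐ x ∂μ, ‖h x‖ ≤ ‖h‖ := by
  rw [norm_eq]
  filter_upwards [ae_le_eLpNormEssSup (f := ⇑h) (μ := μ)] with x hx
  have := ENNReal.toReal_mono (esssup_ne_top h) hx
  simpa using this

/-- From a constant a.e. lower bound on a set of positive measure. -/
lemma ofReal_le_esssup_restrict {S : Set X} (hS : μ S ≠ 0) {φ : X → ℂ} {r : ℝ}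
    (hφ : ∀ᵐ x ∂μ.restrict S, r ≤ ‖φ x‖) :
    ENNReal.ofReal r ≤ eLpNormEssSup φ (μ.restrict S) := by
  haveI : (ae (μ.restrict S)).NeBot := ae_neBot.mpr fun h => hS (Measure.restrict_eq_zero.mp h)
  obtain ⟨x, h1, h2⟩ := (hφ.and (ae_le_eLpNormEssSup (f := φ) (μ := μ.restrict S))).exists
  calc ENNReal.ofReal r ≤ ENNReal.ofReal ‖φ x‖ := ENNReal.ofReal_le_ofReal h1
    _ = (‖φ x‖₊ : ℝ≥0∞) := ofReal_norm_eq_enorm _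
    _ ≤ _ := h2

/-- The key consequence of left-symmetry: if `f` is not a.e. zero on a measurable set `B`,
then the essential supremum of `f` off `B` is strictly less than the norm. -/
lemma star_lemma (f : Lp ℂ ⊤ μ) (hf : f ≠ 0)
    (LS : ∀ g : Lp ℂ ⊤ μ, (∀ c : ℂ, ‖f‖ ≤ ‖f + c • g‖) → (∀ c : ℂ, ‖g‖ ≤ ‖g + c • f‖))
    {B : Set X} (hB : MeasurableSet B)
    (hnz : ¬ (⇑f =ᵐ[μ.restrict B] (0 : X → ℂ))) :
    eLpNormEssSup (⇑f) (μ.restrict Bᶜ) < eLpNormEssSup (⇑f) μ := by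
  by_contra hcon
  have heq : eLpNormEssSup (⇑f) (μ.restrict Bᶜ) = eLpNormEssSup (⇑f) μ :=
    le_antisymm (esssup_restrict_le _ _) (not_lt.mp hcon)
  have hM : 0 < ‖f‖ := norm_pos_iff.mpr hf
  set M : ℝ := ‖f‖ with hMdef
  -- the perturbation g = f·1_B
  set g : Lp ℂ ⊤ μ := MemLp.toLp (B.indicator (⇑f)) ((Lp.memLp f).indicator hB) with hgdef
  have hg : ⇑g =ᵐ[μ] B.indicator (⇑f) := MemLp.coeFn_toLp _
  have hgB : ⇑g =ᵐ[μ.restrict B] ⇑f := by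
    filter_upwards [ae_restrict_of_ae hg, ae_restrict_mem hB] with x h1 h2
    rw [h1, Set.indicator_of_mem h2]
  have hgBc : ⇑g =ᵐ[μ.restrict Bᶜ] (0 : X → ℂ) := by
    filter_upwards [ae_restrict_of_ae hg, ae_restrict_mem hB.compl] with x h1 h2
    rw [h1, Set.indicator_of_notMem h2]
    rfl
  -- f ⊥_B g
  have orth : ∀ c : ℂ, ‖f‖ ≤ ‖f + c • g‖ := by
    intro c
    have hres : ⇑(f + c • g) =ᵐ[μ.restrict Bᶜ] ⇑f := by
      filter_upwards [ae_restrict_of_ae (coe_add_smul f g c), hgBc] with x h1 h2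
      rw [h1, h2]
      simp
    have := norm_ge_of_restrict (f + c • g) hres
    calc ‖f‖ = (eLpNormEssSup (⇑f) μ).toReal := norm_eq f
      _ = (eLpNormEssSup (⇑f) (μ.restrict Bᶜ)).toReal := by rw [heq]
      _ ≤ ‖f + c • g‖ := this
  have horth := LS g orth
  -- now derive a contradiction
  set m : ℝ≥0∞ := eLpNormEssSup (⇑f) (μ.restrict B) with hmdef
  have hm0 : m ≠ 0 := by
    intro h
    exact hnz (eLpNormEssSup_eq_zero_iff.mp h)
  have hmle : m ≤ eLpNormEssSup (⇑f) μ := esssup_restrict_le _ _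
  have hmtop : m ≠ ⊤ := by
    intro h
    rw [h] at hmle
    exact esssup_ne_top f (top_le_iff.mp hmle)
  have hmr : 0 < m.toReal := ENNReal.toReal_pos hm0 hmtop
  have hmM : m.toReal ≤ M := by
    rw [hMdef, norm_eq]
    exact ENNReal.toReal_mono (esssup_ne_top f) hmle
  -- ‖g‖ = m.toReal
  have hgnorm : ‖g‖ = m.toReal := by
    rw [norm_eq, esssup_split (⇑g) B, eLpNormEssSup_congr_ae hgB,
      eLpNormEssSup_eq_zero_iff.mpr hgBc, max_eq_left zero_le]
  set t : ℝ := m.toReal / (2 * M) with htdef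
  have ht0 : 0 < t := div_pos hmr (by linarith)
  have ht1 : t ≤ 1 / 2 := by
    rw [htdef, div_le_div_iff₀ (by linarith) (by norm_num)]
    linarith
  have htM : t * M = m.toReal / 2 := by
    rw [htdef, div_mul_eq_mul_div, div_eq_div_iff (mul_pos two_pos hM).ne' (by norm_num)]
    ring
  -- compute ‖g + (-t) • f‖ < ‖g‖
  have hvalB : ∀ᵐ x ∂μ.restrict B, ‖(g + (-(t : ℂ)) • f) x‖ ≤ (1 - t) * m.toReal := by
    filter_upwards [ae_restrict_of_ae (coe_add_smul g f (-(t : ℂ))), hgB,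
      ae_norm_le_restrict f B] with x h1 h2 h3
    rw [h1, h2]
    have : f x + -(t : ℂ) * f x = ((1 - t : ℝ) : ℂ) * f x := by push_cast; ring
    rw [this, norm_mul, Complex.norm_real, Real.norm_eq_abs, abs_of_nonneg (by linarith)]
    exact mul_le_mul_of_nonneg_left h3 (by linarith)
  have hvalBc : ∀ᵐ x ∂μ.restrict Bᶜ, ‖(g + (-(t : ℂ)) • f) x‖ ≤ t * M := by
    filter_upwards [ae_restrict_of_ae (coe_add_smul g f (-(t : ℂ))), hgBc,
      ae_restrict_of_ae (ae_norm_le f)] with x h1 h2 h3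
    rw [h1, h2]
    simp only [Pi.zero_apply, zero_add, norm_mul, norm_neg]
    rw [Complex.norm_real, Real.norm_eq_abs, abs_of_nonneg ht0.le]
    exact mul_le_mul_of_nonneg_left h3 ht0.le
  have hbound : ‖g + (-(t : ℂ)) • f‖ ≤ max ((1 - t) * m.toReal) (t * M) :=
    norm_le_of_ae_bounds (by nlinarith) hvalB hvalBc
  have hlt : max ((1 - t) * m.toReal) (t * M) < m.toReal := by
    rw [max_lt_iff]
    constructor
    · nlinarith
    · rw [htM]; linarith
  have := horth (-(t : ℂ))
  rw [hgnorm] at this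
  linarith [lt_of_le_of_lt hbound hlt]

end LSHelp

/-- **Left-symmetric points of `L_∞`.** A nonzero `f ∈ L_∞(X, μ)` is left-symmetric for
Birkhoff-James orthogonality iff there is a `μ`-atom `A` with `|f| = ‖f‖_∞` a.e. on `A`
and `f = 0` a.e. on `X \ A`. -/
theorem left_symmetric_points_Linfty (X : Type*) [MeasurableSpace X] (μ : Measure X)
    (f : Lp ℂ ⊤ μ) (hf : f ≠ 0) :
    (∀ g : Lp ℂ ⊤ μ, (∀ c : ℂ, ‖f‖ ≤ ‖f + c • g‖) → (∀ c : ℂ, ‖g‖ ≤ ‖g + c • f‖)) ↔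
      ∃ A : Set X, IsMeasAtom μ A ∧
        (∀ᵐ x ∂μ.restrict A, ‖f x‖ = ‖f‖) ∧
        (∀ᵐ x ∂μ.restrict Aᶜ, f x = 0) := by
  classical
  have hM : 0 < ‖f‖ := norm_pos_iff.mpr hf
  constructor
  · intro LS
    obtain ⟨F', hF'm, hF'⟩ : ∃ F' : X → ℂ, Measurable F' ∧ ⇑f =ᵐ[μ] F' :=
      ⟨(Lp.aestronglyMeasurable f).mk _,
        (Lp.aestronglyMeasurable f).stronglyMeasurable_mk.measurable,
        (Lp.aestronglyMeasurable f).ae_eq_mk⟩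
    have hbd : ∀ᵐ x ∂μ, ‖F' x‖ ≤ ‖f‖ := by
      filter_upwards [LSHelp.ae_norm_le f, hF'] with x h1 h2
      rw [← h2]; exact h1
    set B : ℕ → Set X := fun n =>
      (F' ⁻¹' {0})ᶜ ∩ {x | ‖F' x‖ ≤ ‖f‖ - ‖f‖ / ((n : ℝ) + 2)} with hBdef
    have hBm : ∀ n, MeasurableSet (B n) := fun n =>
      ((hF'm (measurableSet_singleton 0)).compl).inter
        (measurableSet_le hF'm.norm measurable_const)
    have hBnull : ∀ n, μ (B n) = 0 := by
      intro n
      by_contra hBn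
      have hnz : ¬ (⇑f =ᵐ[μ.restrict (B n)] (0 : X → ℂ)) := by
        intro hzero
        haveI : (ae (μ.restrict (B n))).NeBot :=
          ae_neBot.mpr fun h => hBn (Measure.restrict_eq_zero.mp h)
        obtain ⟨x, hx1, hx2, hx3⟩ :=
          ((ae_restrict_of_ae hF').and (hzero.and (ae_restrict_mem (hBm n)))).exists
        refine hx3.1 ?_
        simp only [Set.mem_preimage, Set.mem_singleton_iff]
        rw [← hx1]
        simpa using hx2
      have hstar := LSHelp.star_lemma f hf LS (hBm n) hnz
      have hub : eLpNormEssSup (⇑f) (μ.restrict (B n)) ≤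
          ENNReal.ofReal (‖f‖ - ‖f‖ / ((n : ℝ) + 2)) := by
        refine eLpNormEssSup_le_of_ae_bound ?_
        filter_upwards [ae_restrict_of_ae hF', ae_restrict_mem (hBm n)] with x h1 h2
        rw [h1]
        exact h2.2
      have hMn : (0 : ℝ) < ‖f‖ / ((n : ℝ) + 2) := div_pos hM (by positivity)
      have hlt2 : ENNReal.ofReal (‖f‖ - ‖f‖ / ((n : ℝ) + 2)) < eLpNormEssSup (⇑f) μ := by
        rw [LSHelp.esssup_eq_ofReal_norm f]
        exact (ENNReal.ofReal_lt_ofReal_iff hM).mpr (by linarith)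
      have hsplit := LSHelp.esssup_split (μ := μ) (⇑f) (B n)
      have hab : eLpNormEssSup (⇑f) μ = eLpNormEssSup (⇑f) (μ.restrict (B n)ᶜ) := by
        rcases max_choice (eLpNormEssSup (⇑f) (μ.restrict (B n)))
          (eLpNormEssSup (⇑f) (μ.restrict (B n)ᶜ)) with h | h
        · exact absurd (hsplit.trans h) (lt_of_le_of_lt hub hlt2).ne'
        · exact hsplit.trans h
      exact hstar.ne' hab
    have hdich : ∀ᵐ x ∂μ, F' x = 0 ∨ ‖F' x‖ = ‖f‖ := by
      have hBunion : μ (⋃ n, B n) = 0 := measure_iUnion_null hBnull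
      filter_upwards [hbd, measure_eq_zero_iff_ae_notMem.mp hBunion] with x h1 h2
      by_cases h0 : F' x = 0
      · exact Or.inl h0
      · right
        refine le_antisymm h1 ?_
        by_contra hlt
        push_neg at hlt
        obtain ⟨n, hn⟩ := exists_nat_gt (‖f‖ / (‖f‖ - ‖F' x‖))
        apply h2
        refine Set.mem_iUnion.mpr ⟨n, ?_, ?_⟩
        · simpa using h0
        · have hpos : 0 < ‖f‖ - ‖F' x‖ := by linarith
          have h3 : ‖f‖ / (‖f‖ - ‖F' x‖) < (n : ℝ) + 2 := by
            have : (n : ℝ) ≤ (n : ℝ) + 2 := by linarith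
            linarith
          have h4 : ‖f‖ < ((n : ℝ) + 2) * (‖f‖ - ‖F' x‖) := (div_lt_iff₀ hpos).mp h3
          have h5 : ‖f‖ / ((n : ℝ) + 2) < ‖f‖ - ‖F' x‖ :=
            (div_lt_iff₀ (by positivity)).mpr (by nlinarith)
          simp only [Set.mem_setOf_eq]
          linarith
    set A : Set X := {x | ‖f‖ ≤ ‖F' x‖} with hAdef
    have hAm : MeasurableSet A := measurableSet_le measurable_const hF'm.norm
    have h1 : ∀ᵐ x ∂μ.restrict A, ‖f x‖ = ‖f‖ := by
      filter_upwards [ae_restrict_of_ae hdich, ae_restrict_mem hAm,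
        ae_restrict_of_ae hF'] with x hx1 hx2 hx3
      rw [hx3]
      rcases hx1 with h | h
      · exfalso
        have : ‖f‖ ≤ ‖F' x‖ := hx2
        rw [h] at this
        simp at this
        exact hf this
      · exact h
    have h2 : ∀ᵐ x ∂μ.restrict Aᶜ, f x = 0 := by
      filter_upwards [ae_restrict_of_ae hdich, ae_restrict_mem hAm.compl,
        ae_restrict_of_ae hF'] with x hx1 hx2 hx3
      rw [hx3]
      rcases hx1 with h | h
      · exact h
      · exact absurd (Set.mem_setOf.mpr h.ge) hx2
    have hA0 : μ A ≠ 0 := by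
      intro hA0
      have hf0 : ⇑f =ᵐ[μ] (0 : X → ℂ) := by
        filter_upwards [hdich, measure_eq_zero_iff_ae_notMem.mp hA0, hF'] with x hx1 hx2 hx3
        rw [hx3]
        rcases hx1 with h | h
        · exact h
        · exact absurd (Set.mem_setOf.mpr h.ge) hx2
      have hz : eLpNormEssSup (⇑f) μ = 0 := eLpNormEssSup_eq_zero_iff.mpr hf0
      have : ‖f‖ = 0 := by rw [LSHelp.norm_eq f, hz]; simp
      linarith
    have hatom : ∀ C : Set X, C ⊆ A → MeasurableSet C → μ C = 0 ∨ μ (A \ C) = 0 := by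
      intro C hCA hCm
      by_contra hcon
      push_neg at hcon
      obtain ⟨hC0, hAC0⟩ := hcon
      have hnz : ¬ (⇑f =ᵐ[μ.restrict C] (0 : X → ℂ)) := by
        intro hzero
        haveI : (ae (μ.restrict C)).NeBot :=
          ae_neBot.mpr fun h => hC0 (Measure.restrict_eq_zero.mp h)
        have h1C : ∀ᵐ x ∂μ.restrict C, ‖f x‖ = ‖f‖ :=
          ae_restrict_of_ae_restrict_of_subset hCA h1
        obtain ⟨x, hx1, hx2⟩ := (h1C.and hzero).exists
        simp only [Pi.zero_apply] at hx2
        rw [hx2] at hx1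
        simp at hx1
        linarith
      have hstar := LSHelp.star_lemma f hf LS hCm hnz
      have hge : ENNReal.ofReal ‖f‖ ≤ eLpNormEssSup (⇑f) (μ.restrict Cᶜ) := by
        refine le_trans (LSHelp.ofReal_le_esssup_restrict hAC0 ?_)
          (LSHelp.esssup_restrict_mono _ (fun x hx => hx.2))
        have h1AC : ∀ᵐ x ∂μ.restrict (A \ C), ‖f x‖ = ‖f‖ :=
          ae_restrict_of_ae_restrict_of_subset Set.diff_subset h1
        filter_upwards [h1AC] with x hx
        rw [hx]
      rw [LSHelp.esssup_eq_ofReal_norm f] at hstar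
      exact absurd (lt_of_le_of_lt hge hstar) (lt_irrefl _)
    refine ⟨A, ⟨hAm, pos_iff_ne_zero.mpr hA0, hatom⟩, ?_, h2⟩
    filter_upwards [h1] with x hx
    exact hx
  · rintro ⟨A, hAatom, h1, h2⟩ g hfg c
    obtain ⟨hAm, hA0, -⟩ := id hAatom
    haveI hNB : (ae (μ.restrict A)).NeBot :=
      ae_neBot.mpr fun h => hA0.ne' (Measure.restrict_eq_zero.mp h)
    have h1' : ∀ᵐ x ∂μ.restrict A, ‖f x‖ = ‖f‖ := by
      filter_upwards [h1] with x hx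
      exact hx
    obtain ⟨α, hα⟩ := LSHelp.atom_ae_const hAatom (Lp.aestronglyMeasurable f)
    obtain ⟨β, hβ⟩ := LSHelp.atom_ae_const hAatom (Lp.aestronglyMeasurable g)
    have hαM : ‖α‖ = ‖f‖ := by
      obtain ⟨x, hx1, hx2⟩ := (h1'.and hα).exists
      rw [← hx2]
      exact hx1
    have hβ0 : β = 0 := by
      by_contra hβne
      set k : ℝ := (eLpNormEssSup (⇑g) (μ.restrict Aᶜ)).toReal with hkdef
      have hk0 : 0 ≤ k := ENNReal.toReal_nonneg
      have hβpos : 0 < ‖β‖ := norm_pos_iff.mpr hβne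
      set t : ℝ := min (1/2) (‖β‖ / (2 * (k + 1))) with htdef
      have ht0 : 0 < t := lt_min (by norm_num) (by positivity)
      have ht1 : t ≤ 1/2 := min_le_left _ _
      have htk : t * k < ‖β‖ := by
        have h3 : t ≤ ‖β‖ / (2 * (k + 1)) := min_le_right _ _
        have h4 : t * k ≤ (‖β‖ / (2 * (k + 1))) * k := mul_le_mul_of_nonneg_right h3 hk0
        have h5 : (‖β‖ / (2 * (k + 1))) * k < ‖β‖ := by
          rw [div_mul_eq_mul_div, div_lt_iff₀ (by positivity)]
          nlinarith
        linarith
      set c0 : ℂ := -(t : ℂ) * α / β with hc0def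
      have hc0norm : ‖c0‖ = t * ‖f‖ / ‖β‖ := by
        rw [hc0def, norm_div, norm_mul, norm_neg, Complex.norm_real, Real.norm_eq_abs,
          abs_of_nonneg ht0.le, hαM]
      have hA1 : ∀ᵐ x ∂μ.restrict A, ‖(f + c0 • g) x‖ ≤ (1 - t) * ‖f‖ := by
        filter_upwards [ae_restrict_of_ae (LSHelp.coe_add_smul f g c0), hα, hβ]
          with x hx1 hx2 hx3
        rw [hx1, hx2, hx3]
        have hval : α + c0 * β = ((1 - t : ℝ) : ℂ) * α := by
          rw [hc0def, div_mul_cancel₀ _ hβne]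
          push_cast
          ring
        rw [hval, norm_mul, Complex.norm_real, Real.norm_eq_abs,
          abs_of_nonneg (by linarith), hαM]
      have hA2 : ∀ᵐ x ∂μ.restrict Aᶜ, ‖(f + c0 • g) x‖ ≤ (t * ‖f‖ / ‖β‖) * k := by
        filter_upwards [ae_restrict_of_ae (LSHelp.coe_add_smul f g c0), h2,
          LSHelp.ae_norm_le_restrict g Aᶜ] with x hx1 hx2 hx3
        rw [hx1, hx2, zero_add, norm_mul, hc0norm]
        exact mul_le_mul_of_nonneg_left hx3 (by positivity)
      have hbound : ‖f + c0 • g‖ ≤ max ((1 - t) * ‖f‖) ((t * ‖f‖ / ‖β‖) * k) :=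
        LSHelp.norm_le_of_ae_bounds (by nlinarith) hA1 hA2
      have hmax : max ((1 - t) * ‖f‖) ((t * ‖f‖ / ‖β‖) * k) < ‖f‖ := by
        rw [max_lt_iff]
        constructor
        · nlinarith
        · have hrw : t * ‖f‖ / ‖β‖ * k = ‖f‖ * (t * k / ‖β‖) := by ring
          rw [hrw]
          have hlt1 : t * k / ‖β‖ < 1 := (div_lt_one hβpos).mpr htk
          nlinarith
      linarith [hfg c0, lt_of_le_of_lt hbound hmax]
    have hgA : ⇑g =ᵐ[μ.restrict A] (0 : X → ℂ) := by
      filter_upwards [hβ] with x hx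
      rw [hx, hβ0]
      rfl
    have hgnorm : ‖g‖ = (eLpNormEssSup (⇑g) (μ.restrict Aᶜ)).toReal := by
      rw [LSHelp.norm_eq g, LSHelp.esssup_split (⇑g) A, eLpNormEssSup_eq_zero_iff.mpr hgA,
        max_eq_right zero_le]
    have hres : ⇑(g + c • f) =ᵐ[μ.restrict Aᶜ] ⇑g := by
      filter_upwards [ae_restrict_of_ae (LSHelp.coe_add_smul g f c), h2] with x hx1 hx2
      rw [hx1, hx2, mul_zero, add_zero]
    calc ‖g‖ = (eLpNormEssSup (⇑g) (μ.restrict Aᶜ)).toReal := hgnorm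
      _ ≤ ‖g + c • f‖ := LSHelp.norm_ge_of_restrict _ hres
end

section
/- Let (X, Σ, λ) be a measure space, let f : X → ℂ be integrable and not λ-almost everywhere zero, and let h : X → ℂ be measurable. Then |h(x)| ≤ 1 for λ-almost every x and ∫_X h·f dλ = ‖f‖₁ hold if and only if h(x) = conj(sgn(f(x))) for λ-almost every x with f(x) ≠ 0 and |h(x)| ≤ 1 for λ-almost every x with f(x) = 0. -/
open MeasureTheory

/-- The sign function on `ℂ`: `sgn z = z / |z|` for `z ≠ 0` and `sgn 0 = 0`. -/
noncomputable def csgn (z : ℂ) : ℂ := if z = 0 then 0 else z / (‖z‖ : ℂ)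

lemma re_eq_abs_imp (z : ℂ) (hz : z.re = ‖z‖) : z = (‖z‖ : ℂ) := by
  have h1 : ‖z‖ ^ 2 = z.re ^ 2 + z.im ^ 2 := by
    rw [Complex.sq_norm, Complex.normSq_apply]; ring
  have h2 : z.im ^ 2 = 0 := by rw [← hz] at h1; linarith
  have him : z.im = 0 := by
    exact pow_eq_zero_iff (n := 2) (by norm_num) |>.mp h2
  apply Complex.ext <;> simp [hz, him]

/-- **Norming functionals in `L¹`.** For integrable `f` which is not a.e. zero and
measurable `h`, one has `|h| ≤ 1` a.e. and `∫ h f dμ = ‖f‖₁` iff `h = conj (sgn f)`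
a.e. where `f ≠ 0` and `|h| ≤ 1` a.e. where `f = 0`. -/
theorem norming_functional_L1 (X : Type*) [MeasurableSpace X] (μ : Measure X)
    (f : X → ℂ) (hf : Integrable f μ) (hf0 : ¬ f =ᵐ[μ] 0)
    (h : X → ℂ) (hh : Measurable h) :
    ((∀ᵐ x ∂μ, ‖h x‖ ≤ 1) ∧
        ∫ x, h x * f x ∂μ = ((∫ x, ‖f x‖ ∂μ : ℝ) : ℂ)) ↔
      ((∀ᵐ x ∂μ, f x ≠ 0 → h x = (starRingEnd ℂ) (csgn (f x))) ∧
        (∀ᵐ x ∂μ, f x = 0 → ‖h x‖ ≤ 1)) := by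
  have habs : Integrable (fun x => ‖f x‖) μ := by
    simpa using hf.norm
  constructor
  · rintro ⟨hb, hint⟩
    have hhf : Integrable (fun x => h x * f x) μ := by
      refine hf.bdd_mul (c := 1) hh.aestronglyMeasurable ?_
      filter_upwards [hb] with x hx
      simpa using hx
    have hhfre : Integrable (fun x => (h x * f x).re) μ := by
      simpa using hhf.re
    have hre : ∫ x, (h x * f x).re ∂μ = ∫ x, ‖f x‖ ∂μ := by
      have h0 := integral_re (𝕜 := ℂ) hhf
      simp only [RCLike.re_to_complex] at h0
      rw [h0, hint]
      simp
    have hle : ∀ᵐ x ∂μ, (h x * f x).re ≤ ‖f x‖ := by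
      filter_upwards [hb] with x hx
      calc (h x * f x).re ≤ ‖h x * f x‖ := Complex.re_le_norm _
        _ = ‖h x‖ * ‖f x‖ := norm_mul _ _
        _ ≤ 1 * ‖f x‖ :=
          mul_le_mul_of_nonneg_right hx (norm_nonneg _)
        _ = ‖f x‖ := one_mul _
    have hg : Integrable (fun x => ‖f x‖ - (h x * f x).re) μ :=
      habs.sub hhfre
    have hzero : (fun x => ‖f x‖ - (h x * f x).re) =ᵐ[μ] 0 := by
      rw [← integral_eq_zero_iff_of_nonneg_ae ?_ hg]
      · rw [integral_sub habs hhfre, hre, sub_self]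
      · filter_upwards [hle] with x hx
        simpa using sub_nonneg.mpr hx
    have heq : ∀ᵐ x ∂μ, h x * f x = (‖f x‖ : ℂ) := by
      filter_upwards [hzero, hb] with x hx hbx
      have hx' : ‖f x‖ - (h x * f x).re = 0 := hx
      have hre2 : (h x * f x).re = ‖f x‖ := by linarith
      have habs2 : ‖h x * f x‖ = ‖f x‖ := by
        have h1 : ‖h x * f x‖ ≤ ‖f x‖ := by
          rw [norm_mul]
          calc ‖h x‖ * ‖f x‖ ≤ 1 * ‖f x‖ :=
            mul_le_mul_of_nonneg_right hbx (norm_nonneg _)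
          _ = _ := one_mul _
        have h2 : ‖f x‖ ≤ ‖h x * f x‖ :=
          hre2 ▸ Complex.re_le_norm _
        linarith
      have := re_eq_abs_imp (h x * f x) (by rw [hre2, habs2])
      rw [this, habs2]
    constructor
    · filter_upwards [heq] with x hx hfx
      have habsne : (‖f x‖ : ℂ) ≠ 0 := by
        simpa using (norm_ne_zero_iff.mpr hfx)
      have hdiv : h x = (‖f x‖ : ℂ) / f x := by
        field_simp at hx ⊢
        linear_combination hx
      rw [hdiv, csgn, if_neg hfx, map_div₀, Complex.conj_ofReal]
      rw [div_eq_div_iff hfx habsne, mul_comm ((starRingEnd ℂ) (f x)),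
        Complex.mul_conj, Complex.normSq_eq_norm_sq]
      push_cast
      ring
    · filter_upwards [hb] with x hx _; exact hx
  · rintro ⟨h1, h2⟩
    have key : ∀ᵐ x ∂μ, h x * f x = (‖f x‖ : ℂ) := by
      filter_upwards [h1] with x hx
      by_cases hfx : f x = 0
      · simp [hfx]
      · have habsne : (‖f x‖ : ℂ) ≠ 0 := by
          simpa using (norm_ne_zero_iff.mpr hfx)
        rw [hx hfx, csgn, if_neg hfx, map_div₀, Complex.conj_ofReal,
          div_mul_eq_mul_div, mul_comm, Complex.mul_conj, Complex.normSq_eq_norm_sq,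
          div_eq_iff habsne]
        push_cast
        ring
    constructor
    · filter_upwards [h1, h2] with x hx1 hx2
      by_cases hfx : f x = 0
      · exact hx2 hfx
      · rw [hx1 hfx, csgn, if_neg hfx]
        simp [map_div₀, abs_of_nonneg (norm_nonneg (f x)),
          div_self (norm_ne_zero_iff.mpr hfx)]
    · rw [integral_congr_ae key]
      exact integral_ofReal (𝕜 := ℂ)
end

section
/- Let (X, Σ, λ) be a σ-finite measure space and let f ∈ L¹(X, λ) be nonzero (i.e., f is not λ-almost everywhere zero). Then f is a smooth point of L¹(X, λ) if and only if f(x) ≠ 0 for λ-almost every x ∈ X. -/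
open MeasureTheory Complex Filter Topology

noncomputable section SmoothL1Aux

variable {X : Type*} [MeasurableSpace X] {μ : Measure X}

namespace SmoothL1

/-- pointwise derivative of the complex absolute value along a line -/
lemma hasDerivAt_abs_line (z w : ℂ) (hz : z ≠ 0) :
    HasDerivAt (fun t : ℝ => ‖z + (t : ℂ) * w‖) (((starRingEnd ℂ) z * w).re / ‖z‖) 0 := by
  set c : ℝ := 2 * (z * (starRingEnd ℂ) w).re with hc
  have hq : HasDerivAt (fun t : ℝ => Complex.normSq z + Complex.normSq w * t ^ 2 + c * t)
      c 0 := by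
    have h1 : HasDerivAt (fun t : ℝ => t ^ 2) (0 : ℝ) 0 := by
      simpa using hasDerivAt_pow 2 (0 : ℝ)
    have h2 := ((h1.const_mul (Complex.normSq w)).add
      ((hasDerivAt_id (0 : ℝ)).const_mul c)).const_add (Complex.normSq z)
    have hfun : (fun t : ℝ => Complex.normSq z + Complex.normSq w * t ^ 2 + c * t)
        = fun t : ℝ => Complex.normSq z + (Complex.normSq w * t ^ 2 + c * id t) := by
      funext t; simp [add_assoc]
    rw [hfun]
    refine h2.congr_deriv ?_
    simp
  have hz0 : Complex.normSq z + Complex.normSq w * (0:ℝ) ^ 2 + c * 0 ≠ 0 := by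
    simpa using (Complex.normSq_pos.mpr hz).ne'
  have hs := hq.sqrt hz0
  have key : ∀ t : ℝ, ‖z + (t : ℂ) * w‖
      = Real.sqrt (Complex.normSq z + Complex.normSq w * t ^ 2 + c * t) := by
    intro t
    rw [Complex.norm_def, Complex.normSq_add]
    congr 1
    rw [Complex.normSq_mul, Complex.normSq_ofReal, map_mul, Complex.conj_ofReal, hc,
      mul_left_comm, Complex.re_ofReal_mul]
    try ring
  have heq : (fun t : ℝ => ‖z + (t : ℂ) * w‖)
      = fun t : ℝ => Real.sqrt (Complex.normSq z + Complex.normSq w * t ^ 2 + c * t) :=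
    funext key
  rw [heq]
  convert hs using 1
  have h1 : ((starRingEnd ℂ) z * w).re = (z * (starRingEnd ℂ) w).re := by
    simp [Complex.mul_re, Complex.conj_re, Complex.conj_im]
    try ring
  have h2 : Real.sqrt (Complex.normSq z + Complex.normSq w * (0:ℝ) ^ 2 + c * 0) = ‖z‖ := by
    simp [Complex.norm_def]
  rw [h2, h1, hc]
  try ring

lemma integrable_bdd_mul (h : X → ℂ) (hm : AEStronglyMeasurable h μ)
    (hbd : ∀ x, ‖h x‖ ≤ 1) (g : Lp ℂ 1 μ) :
    Integrable (fun x => h x * (g : X → ℂ) x) μ :=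
  (L1.integrable_coeFn g).bdd_mul hm (Eventually.of_forall hbd)

/-- functional given by integration against a bounded function -/
def mulFunc (h : X → ℂ) (hm : AEStronglyMeasurable h μ) (hbd : ∀ x, ‖h x‖ ≤ 1) :
    Lp ℂ 1 μ →L[ℂ] ℂ := by
  refine LinearMap.mkContinuous
    { toFun := fun g => ∫ x, h x * (g : X → ℂ) x ∂μ
      map_add' := ?_
      map_smul' := ?_ } 1 ?_
  · intro g₁ g₂
    have hcongr : (fun x => h x * ((g₁ + g₂ : Lp ℂ 1 μ) : X → ℂ) x)
        =ᵐ[μ] fun x => h x * (g₁ : X → ℂ) x + h x * (g₂ : X → ℂ) x :=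
      (Lp.coeFn_add g₁ g₂).mono fun x hx => by
        simp only [hx, Pi.add_apply, mul_add]
    rw [integral_congr_ae hcongr,
      integral_add (integrable_bdd_mul h hm hbd g₁) (integrable_bdd_mul h hm hbd g₂)]
  · intro c g
    have hcongr : (fun x => h x * ((c • g : Lp ℂ 1 μ) : X → ℂ) x)
        =ᵐ[μ] fun x => c • (h x * (g : X → ℂ) x) :=
      (Lp.coeFn_smul c g).mono fun x hx => by
        simp only [hx, Pi.smul_apply, smul_eq_mul]
        ring
    show (∫ x, h x * ((c • g : Lp ℂ 1 μ) : X → ℂ) x ∂μ)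
      = (RingHom.id ℂ) c • ∫ x, h x * (g : X → ℂ) x ∂μ
    rw [integral_congr_ae hcongr, integral_smul]
    rfl
  · intro g
    simp only [LinearMap.coe_mk, AddHom.coe_mk]
    calc ‖∫ x, h x * (g : X → ℂ) x ∂μ‖ ≤ ∫ x, ‖h x * (g : X → ℂ) x‖ ∂μ :=
          norm_integral_le_integral_norm _
      _ ≤ ∫ x, ‖(g : X → ℂ) x‖ ∂μ := by
          refine integral_mono_ae ((integrable_bdd_mul h hm hbd g).norm)
            ((L1.integrable_coeFn g).norm) (Eventually.of_forall fun x => ?_)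
          simp only [norm_mul]
          calc ‖h x‖ * ‖(g : X → ℂ) x‖ ≤ 1 * ‖(g : X → ℂ) x‖ :=
                mul_le_mul_of_nonneg_right (hbd x) (norm_nonneg _)
            _ = ‖(g : X → ℂ) x‖ := one_mul _
      _ = ‖g‖ := (L1.norm_eq_integral_norm g).symm
      _ = 1 * ‖g‖ := (one_mul _).symm

lemma mulFunc_apply (h : X → ℂ) (hm : AEStronglyMeasurable h μ) (hbd : ∀ x, ‖h x‖ ≤ 1)
    (g : Lp ℂ 1 μ) : mulFunc h hm hbd g = ∫ x, h x * (g : X → ℂ) x ∂μ := rfl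

lemma mulFunc_norm_le (h : X → ℂ) (hm : AEStronglyMeasurable h μ) (hbd : ∀ x, ‖h x‖ ≤ 1) :
    ‖mulFunc h hm hbd‖ ≤ 1 :=
  LinearMap.mkContinuous_norm_le _ zero_le_one _

/-- the "sign" multiplier -/
def sgn (f' : X → ℂ) : X → ℂ := fun x => (starRingEnd ℂ) (f' x) / (‖f' x‖ : ℂ)

lemma sgn_norm_le (f' : X → ℂ) (x : X) : ‖sgn f' x‖ ≤ 1 := by
  by_cases h : f' x = 0
  · simp [sgn, h]
  · have : ‖f' x‖ ≠ 0 := norm_ne_zero_iff.mpr h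
    simp only [sgn, norm_div, RingHomIsometric.norm_map]
    rw [Complex.norm_real, Real.norm_eq_abs, _root_.abs_of_nonneg (norm_nonneg _),
      div_self this]

lemma sgn_measurable (f' : X → ℂ) (hf' : Measurable f') : Measurable (sgn f') := by
  exact ((Complex.continuous_conj.measurable.comp hf').div
    (Complex.measurable_ofReal.comp hf'.norm))

lemma sgn_mul_self (f' : X → ℂ) (x : X) : sgn f' x * f' x = (‖f' x‖ : ℂ) := by
  by_cases h : f' x = 0
  · simp [sgn, h]
  · have h0 : (‖f' x‖ : ℂ) ≠ 0 := by
      simpa using norm_ne_zero_iff.mpr h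
    have : (starRingEnd ℂ) (f' x) * f' x = ((‖f' x‖ : ℂ))^2 := by
      rw [mul_comm, Complex.mul_conj]
      norm_cast
      rw [Complex.normSq_eq_norm_sq]
    rw [sgn, div_mul_eq_mul_div]
    rw [this]
    simp only [sq]
    rw [mul_div_assoc, div_self h0, mul_one]

/-- key inequality via differentiating the norm -/
lemma key_le (f g : Lp ℂ 1 μ) (f' g' : X → ℂ) (hf' : Measurable f')
    (hff' : (f : X → ℂ) =ᵐ[μ] f') (hgg' : (g : X → ℂ) =ᵐ[μ] g')
    (hne : ∀ᵐ x ∂μ, f' x ≠ 0)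
    (ψ : Lp ℂ 1 μ →L[ℂ] ℂ) (hψ : ‖ψ‖ ≤ 1) (hψf : ψ f = (‖f‖ : ℂ)) :
    (ψ g).re ≤ ∫ x, (sgn f' x * g' x).re ∂μ := by
  have hg'm : AEStronglyMeasurable g' μ := (Lp.aestronglyMeasurable g).congr hgg'
  have hfint : Integrable f' μ := (L1.integrable_coeFn f).congr hff'
  have hgint : Integrable g' μ := (L1.integrable_coeFn g).congr hgg'
  set t : ℕ → ℝ := fun n => 1 / ((n : ℝ) + 1) with ht
  have htpos : ∀ n, 0 < t n := fun n => by positivity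
  have htinv : ∀ n : ℕ, t n * ((n : ℝ) + 1) = 1 := fun n =>
    one_div_mul_cancel (by positivity)
  set F : ℕ → X → ℝ := fun n x =>
    (‖f' x + (t n : ℂ) * g' x‖ - ‖f' x‖) * ((n : ℝ) + 1) with hF
  -- norm of f
  have hnf : ‖f‖ = ∫ x, ‖f' x‖ ∂μ := by
    rw [L1.norm_eq_integral_norm]
    exact integral_congr_ae (hff'.mono fun x hx => by dsimp only; rw [hx])
  -- norm of f + t • g
  have hnorm : ∀ n : ℕ, ‖f + ((t n : ℝ) : ℂ) • g‖ = ∫ x, ‖f' x + (t n : ℂ) * g' x‖ ∂μ := by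
    intro n
    rw [L1.norm_eq_integral_norm]
    refine integral_congr_ae ?_
    filter_upwards [Lp.coeFn_add f (((t n : ℝ) : ℂ) • g),
      Lp.coeFn_smul ((t n : ℝ) : ℂ) g, hff', hgg'] with x h1 h2 h3 h4
    simp only [h1, Pi.add_apply, h2, Pi.smul_apply, smul_eq_mul, h3, h4]
  -- the integral of F n
  have hFint : ∀ n : ℕ, ∫ x, F n x ∂μ
      = (‖f + ((t n : ℝ) : ℂ) • g‖ - ‖f‖) * ((n : ℝ) + 1) := by
    intro n
    have hint1 : Integrable (fun x => f' x + (t n : ℂ) * g' x) μ :=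
      hfint.add (hgint.const_mul _)
    rw [hnorm n, hnf]
    simp only [hF]
    rw [← integral_sub hint1.norm hfint.norm, ← integral_mul_const]
  -- dominated convergence
  have hDCT : Tendsto (fun n => ∫ x, F n x ∂μ) atTop
      (𝓝 (∫ x, (sgn f' x * g' x).re ∂μ)) := by
    refine tendsto_integral_of_dominated_convergence (fun x => ‖g' x‖) ?_ hgint.norm ?_ ?_
    · intro n
      have hm1 : AEStronglyMeasurable (fun x => f' x + (t n : ℂ) * g' x) μ :=
        hf'.aestronglyMeasurable.add (hg'm.const_mul _)
      exact ((hm1.norm.sub hf'.aestronglyMeasurable.norm).mul_const _)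
    · intro n
      refine Eventually.of_forall fun x => ?_
      have h1 : |‖f' x + (t n : ℂ) * g' x‖ - ‖f' x‖| ≤ ‖(t n : ℂ) * g' x‖ := by
        simpa using abs_norm_sub_norm_le (f' x + (t n : ℂ) * g' x) (f' x)
      have h2 : ‖(t n : ℂ) * g' x‖ = t n * ‖g' x‖ := by
        rw [norm_mul, Complex.norm_real, Real.norm_eq_abs, _root_.abs_of_pos (htpos n)]
      rw [hF]
      rw [Real.norm_eq_abs, abs_mul, _root_.abs_of_pos (show (0:ℝ) < (n : ℝ) + 1 by positivity)]
      calc |‖f' x + (t n : ℂ) * g' x‖ - ‖f' x‖| * ((n : ℝ) + 1)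
          ≤ t n * ‖g' x‖ * ((n : ℝ) + 1) := by
            refine mul_le_mul_of_nonneg_right (h1.trans_eq h2) (by positivity)
        _ = ‖g' x‖ := by
            rw [mul_comm (t n), mul_assoc, htinv n, mul_one]
    · filter_upwards [hne] with x hx
      have hd := hasDerivAt_abs_line (f' x) (g' x) hx
      have hslope := hasDerivAt_iff_tendsto_slope.mp hd
      have htt : Tendsto t atTop (𝓝[≠] (0 : ℝ)) := by
        refine tendsto_nhdsWithin_of_tendsto_nhds_of_eventually_within _
          tendsto_one_div_add_atTop_nhds_zero_nat
          (Eventually.of_forall fun n => (htpos n).ne')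
      have := hslope.comp htt
      have heq : (fun n => slope (fun s : ℝ => ‖f' x + (s : ℂ) * g' x‖) 0 (t n)) = fun n => F n x := by
        funext n
        have htne : t n ≠ 0 := (htpos n).ne'
        rw [slope_def_field, hF]
        dsimp only
        rw [Complex.ofReal_zero, zero_mul, add_zero, sub_zero, div_eq_mul_inv, ht]
        congr 1
        dsimp only
        rw [one_div, inv_inv]
      rw [Function.comp_def, heq] at this
      have hval : ((starRingEnd ℂ) (f' x) * g' x).re / ‖f' x‖ = (sgn f' x * g' x).re := by
        rw [sgn, div_mul_eq_mul_div, Complex.div_ofReal]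
      rwa [hval] at this
  -- pointwise inequality
  have hle : ∀ n : ℕ, (ψ g).re ≤ ∫ x, F n x ∂μ := by
    intro n
    rw [hFint n]
    have h1 : ψ (f + ((t n : ℝ) : ℂ) • g) = (‖f‖ : ℂ) + ((t n : ℝ) : ℂ) * ψ g := by
      rw [map_add, ψ.map_smul, hψf, smul_eq_mul]
    have h2 : ‖f‖ + t n * (ψ g).re ≤ ‖f + ((t n : ℝ) : ℂ) • g‖ := by
      have h3 : ((‖f‖ : ℂ) + ((t n : ℝ) : ℂ) * ψ g).re ≤ ‖ψ (f + ((t n : ℝ) : ℂ) • g)‖ := by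
        rw [← h1]; exact Complex.re_le_norm _
      have h4 : ‖ψ (f + ((t n : ℝ) : ℂ) • g)‖ ≤ ‖f + ((t n : ℝ) : ℂ) • g‖ := by
        refine (ψ.le_opNorm _).trans ?_
        exact mul_le_of_le_one_left (norm_nonneg _) hψ
      simp only [Complex.add_re, Complex.ofReal_re, Complex.re_ofReal_mul] at h3
      exact h3.trans h4
    have h5 : t n * (ψ g).re ≤ ‖f + ((t n : ℝ) : ℂ) • g‖ - ‖f‖ := by linarith
    have h6 := mul_le_mul_of_nonneg_right h5 (show (0:ℝ) ≤ (n : ℝ) + 1 by positivity)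
    calc (ψ g).re = t n * (ψ g).re * ((n : ℝ) + 1) := by
          rw [mul_comm (t n), mul_assoc, htinv n, mul_one]
      _ ≤ (‖f + ((t n : ℝ) : ℂ) • g‖ - ‖f‖) * ((n : ℝ) + 1) := h6
  exact ge_of_tendsto hDCT (Eventually.of_forall hle)

lemma key_eq (f g : Lp ℂ 1 μ) (f' g' : X → ℂ) (hf' : Measurable f')
    (hff' : (f : X → ℂ) =ᵐ[μ] f') (hgg' : (g : X → ℂ) =ᵐ[μ] g')
    (hne : ∀ᵐ x ∂μ, f' x ≠ 0)
    (ψ : Lp ℂ 1 μ →L[ℂ] ℂ) (hψ : ‖ψ‖ ≤ 1) (hψf : ψ f = (‖f‖ : ℂ)) :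
    (ψ g).re = ∫ x, (sgn f' x * g' x).re ∂μ := by
  refine le_antisymm (key_le f g f' g' hf' hff' hgg' hne ψ hψ hψf) ?_
  have hcoe : ((-g : Lp ℂ 1 μ) : X → ℂ) =ᵐ[μ] fun x => -(g' x) := by
    filter_upwards [Lp.coeFn_neg g, hgg'] with x h1 h2
    rw [h1, Pi.neg_apply, h2]
  have h2 := key_le f (-g) f' (fun x => -(g' x)) hf' hff' hcoe hne ψ hψ hψf
  rw [map_neg] at h2
  have h3 : ∫ x, (sgn f' x * -(g' x)).re ∂μ = -∫ x, (sgn f' x * g' x).re ∂μ := by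
    rw [← integral_neg]
    refine integral_congr_ae (Eventually.of_forall fun x => ?_)
    simp [mul_neg]
  rw [h3, Complex.neg_re] at h2
  linarith

lemma key_full (f g : Lp ℂ 1 μ) (f' : X → ℂ) (hf' : Measurable f')
    (hff' : (f : X → ℂ) =ᵐ[μ] f')
    (hne : ∀ᵐ x ∂μ, f' x ≠ 0)
    (ψ : Lp ℂ 1 μ →L[ℂ] ℂ) (hψ : ‖ψ‖ ≤ 1) (hψf : ψ f = (‖f‖ : ℂ)) :
    ψ g = ∫ x, sgn f' x * (g : X → ℂ) x ∂μ := by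
  have hint : Integrable (fun x => sgn f' x * (g : X → ℂ) x) μ :=
    integrable_bdd_mul _ (sgn_measurable f' hf').aestronglyMeasurable (sgn_norm_le f') g
  have hre := key_eq f g f' (g : X → ℂ) hf' hff' EventuallyEq.rfl hne ψ hψ hψf
  have hcoeI : ((Complex.I • g : Lp ℂ 1 μ) : X → ℂ)
      =ᵐ[μ] fun x => Complex.I * (g : X → ℂ) x := by
    filter_upwards [Lp.coeFn_smul Complex.I g] with x h1
    rw [h1, Pi.smul_apply, smul_eq_mul]
  have him := key_eq f (Complex.I • g) f' (fun x => Complex.I * (g : X → ℂ) x)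
    hf' hff' hcoeI hne ψ hψ hψf
  rw [ψ.map_smul, smul_eq_mul] at him
  have him2 : ∫ x, (sgn f' x * (Complex.I * (g : X → ℂ) x)).re ∂μ
      = -∫ x, (sgn f' x * (g : X → ℂ) x).im ∂μ := by
    rw [← integral_neg]
    refine integral_congr_ae (Eventually.of_forall fun x => ?_)
    have : sgn f' x * (Complex.I * (g : X → ℂ) x)
        = Complex.I * (sgn f' x * (g : X → ℂ) x) := by ring
    dsimp only
    rw [this]
    simp [Complex.mul_re, Complex.I_re, Complex.I_im]
  have hIre : (Complex.I * ψ g).re = -(ψ g).im := by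
    simp [Complex.mul_re, Complex.I_re, Complex.I_im]
  rw [hIre, him2] at him
  have hre' := integral_re (𝕜 := ℂ) hint
  have him' := integral_im (𝕜 := ℂ) hint
  simp only [RCLike.re_to_complex, RCLike.im_to_complex] at hre' him'
  apply Complex.ext
  · rw [hre, hre']
  · have : (ψ g).im = ∫ x, (sgn f' x * (g : X → ℂ) x).im ∂μ := by linarith
    rw [this, him']

/-- any multiplier with `h x * f' x = ‖f' x‖` gives the norm at `f`. -/
lemma mulFunc_apply_self (f : Lp ℂ 1 μ) (f' : X → ℂ)
    (hff' : (f : X → ℂ) =ᵐ[μ] f') (h : X → ℂ) (hm : AEStronglyMeasurable h μ)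
    (hbd : ∀ x, ‖h x‖ ≤ 1) (hmul : ∀ x, h x * f' x = ((‖f' x‖ : ℝ) : ℂ)) :
    mulFunc h hm hbd f = (‖f‖ : ℂ) := by
  rw [mulFunc_apply]
  have h1 : (fun x => h x * (f : X → ℂ) x) =ᵐ[μ] fun x => ((‖f' x‖ : ℝ) : ℂ) := by
    filter_upwards [hff'] with x hx
    rw [hx, hmul]
  rw [integral_congr_ae h1]
  have h2 : ∫ x, ((‖f' x‖ : ℝ) : ℂ) ∂μ = ((∫ x, ‖f' x‖ ∂μ : ℝ) : ℂ) :=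
    integral_ofReal
  rw [h2]
  norm_cast
  rw [L1.norm_eq_integral_norm]
  exact (integral_congr_ae (hff'.mono fun x hx => by simp only [hx])).symm

lemma norm_eq_one_of_attains (f : Lp ℂ 1 μ) (hf : f ≠ 0) (ψ : Lp ℂ 1 μ →L[ℂ] ℂ)
    (hψ : ‖ψ‖ ≤ 1) (hψf : ψ f = (‖f‖ : ℂ)) : ‖ψ‖ = 1 := by
  refine le_antisymm hψ ?_
  have hfpos : (0 : ℝ) < ‖f‖ := norm_pos_iff.mpr hf
  have h1 := ψ.le_opNorm f
  rw [hψf, Complex.norm_real, Real.norm_eq_abs, _root_.abs_of_pos hfpos] at h1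
  exact (le_mul_iff_one_le_left hfpos).mp h1

end SmoothL1

end SmoothL1Aux

/-- **Smooth points of `L¹`.** For a σ-finite measure space and nonzero `f ∈ L¹(X, μ)`,
`f` is a smooth point iff `f x ≠ 0` for almost every `x`. -/
theorem smooth_points_L1 (X : Type*) [MeasurableSpace X] (μ : Measure X) [SigmaFinite μ]
    (f : Lp ℂ 1 μ) (hf : f ≠ 0) :
    (∃! ψ : Lp ℂ 1 μ →L[ℂ] ℂ, ‖ψ‖ = 1 ∧ ψ f = (‖f‖ : ℂ)) ↔
      (∀ᵐ x ∂μ, f x ≠ 0) := by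
  classical
  obtain ⟨f', hf'sm, hff'⟩ : ∃ f' : X → ℂ, StronglyMeasurable f' ∧ (f : X → ℂ) =ᵐ[μ] f' :=
    ⟨(Lp.aestronglyMeasurable f).mk _, (Lp.aestronglyMeasurable f).stronglyMeasurable_mk,
      (Lp.aestronglyMeasurable f).ae_eq_mk⟩
  have hf'meas : Measurable f' := hf'sm.measurable
  have hsm : AEStronglyMeasurable (SmoothL1.sgn f') μ :=
    (SmoothL1.sgn_measurable f' hf'meas).aestronglyMeasurable
  set ψ₀ := SmoothL1.mulFunc (SmoothL1.sgn f') hsm (SmoothL1.sgn_norm_le f') with hψ₀def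
  have hψ₀f : ψ₀ f = (‖f‖ : ℂ) :=
    SmoothL1.mulFunc_apply_self f f' hff' _ hsm (SmoothL1.sgn_norm_le f')
      (SmoothL1.sgn_mul_self f')
  have hψ₀n : ‖ψ₀‖ = 1 :=
    SmoothL1.norm_eq_one_of_attains f hf ψ₀ (SmoothL1.mulFunc_norm_le _ _ _) hψ₀f
  constructor
  · rintro ⟨ψ, hψP, huniq⟩
    by_contra hcon
    have hs : MeasurableSet {x | f' x = 0} := hf'meas (measurableSet_singleton 0)
    have hμs : μ {x | f' x = 0} ≠ 0 := by
      intro h0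
      apply hcon
      have hae : ∀ᵐ x ∂μ, f' x ≠ 0 := by
        rw [ae_iff]
        simpa using h0
      filter_upwards [hae, hff'] with x h1 h2
      rw [h2]; exact h1
    obtain ⟨E, hE, hEsub, hEpos, hEfin⟩ :=
      Measure.exists_subset_measure_lt_top hs (pos_iff_ne_zero.mpr hμs)
    set h₂ : X → ℂ := fun x => if x ∈ E then 1 else SmoothL1.sgn f' x with hh₂
    have hh₂m : AEStronglyMeasurable h₂ μ := ((Measurable.ite hE measurable_const
      (SmoothL1.sgn_measurable f' hf'meas))).aestronglyMeasurable
    have hh₂bd : ∀ x, ‖h₂ x‖ ≤ 1 := by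
      intro x; by_cases hx : x ∈ E
      · simp [hh₂, hx]
      · simp only [hh₂, if_neg hx]; exact SmoothL1.sgn_norm_le f' x
    have hh₂mul : ∀ x, h₂ x * f' x = ((‖f' x‖ : ℝ) : ℂ) := by
      intro x; by_cases hx : x ∈ E
      · have h0 : f' x = 0 := hEsub hx
        simp [hh₂, hx, h0]
      · simp only [hh₂, if_neg hx]; exact SmoothL1.sgn_mul_self f' x
    set ψ₂ := SmoothL1.mulFunc h₂ hh₂m hh₂bd with hψ₂def
    have hψ₂f : ψ₂ f = (‖f‖ : ℂ) :=
      SmoothL1.mulFunc_apply_self f f' hff' _ hh₂m hh₂bd hh₂mul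
    have hψ₂n : ‖ψ₂‖ = 1 :=
      SmoothL1.norm_eq_one_of_attains f hf ψ₂ (SmoothL1.mulFunc_norm_le _ _ _) hψ₂f
    have he₀ : ψ₀ = ψ := huniq ψ₀ ⟨hψ₀n, hψ₀f⟩
    have he₂ : ψ₂ = ψ := huniq ψ₂ ⟨hψ₂n, hψ₂f⟩
    set g : Lp ℂ 1 μ := indicatorConstLp 1 hE hEfin.ne (1 : ℂ) with hgdef
    have hgcoe : (g : X → ℂ) =ᵐ[μ] E.indicator fun _ => (1:ℂ) := indicatorConstLp_coeFn
    have h₀g : ψ₀ g = 0 := by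
      rw [hψ₀def, SmoothL1.mulFunc_apply]
      have hcongr : (fun x => SmoothL1.sgn f' x * (g : X → ℂ) x) =ᵐ[μ] fun _ => (0:ℂ) := by
        filter_upwards [hgcoe] with x hx
        rw [hx]
        by_cases hxE : x ∈ E
        · have h0 : f' x = 0 := hEsub hxE
          simp [SmoothL1.sgn, h0]
        · simp [Set.indicator_of_notMem hxE]
      rw [integral_congr_ae hcongr, integral_zero]
    have h₂g : ψ₂ g = (((μ E).toReal : ℝ) : ℂ) := by
      rw [hψ₂def, SmoothL1.mulFunc_apply]
      have hcongr : (fun x => h₂ x * (g : X → ℂ) x) =ᵐ[μ] E.indicator fun _ => (1:ℂ) := by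
        filter_upwards [hgcoe] with x hx
        rw [hx]
        by_cases hxE : x ∈ E
        · simp [Set.indicator_of_mem hxE, hh₂, hxE]
        · simp [Set.indicator_of_notMem hxE]
      rw [integral_congr_ae hcongr, integral_indicator_const _ hE]
      simp [Complex.real_smul, Measure.real]
    have heq : ψ₀ g = ψ₂ g := by rw [he₀, he₂]
    rw [h₀g, h₂g] at heq
    have hne0 : (((μ E).toReal : ℝ) : ℂ) ≠ 0 := by
      simp only [ne_eq, Complex.ofReal_eq_zero]
      exact (ENNReal.toReal_pos hEpos.ne' hEfin.ne).ne'
    exact hne0 heq.symm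
  · intro hae
    have hne : ∀ᵐ x ∂μ, f' x ≠ 0 := by
      filter_upwards [hae, hff'] with x h1 h2
      rw [← h2]; exact h1
    refine ⟨ψ₀, ⟨hψ₀n, hψ₀f⟩, ?_⟩
    intro ψ hψP
    refine ContinuousLinearMap.ext fun g => ?_
    rw [SmoothL1.key_full f g f' hf'meas hff' hne ψ hψP.1.le hψP.2,
      ← SmoothL1.key_full f g f' hf'meas hff' hne ψ₀ hψ₀n.le hψ₀f]
end

section
/- Let (X, Σ, λ) be a σ-finite measure space and let f ∈ L¹(X, λ). Then f is a left-symmetric point of L¹(X, λ) if and only if at least one of the following holds: (1) f = 0 λ-almost everywhere; (2) λ(X) > 0, every measurable subset of X is either λ-null or has λ-null complement, and f is not λ-almost everywhere zero; (3) there exist disjoint λ-atoms A and B of finite measure with λ(X \ (A ∪ B)) = 0 and real numbers a, b > 0 such that |f(x)| = a for λ-almost every x ∈ A, |f(y)| = b for λ-almost every y ∈ B, and λ(A)·a = λ(B)·b. -/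
open MeasureTheory

open Complex
open scoped ENNReal NNReal

section
lemma mul_conj_re_comm (u v : ℂ) : (u * (starRingEnd ℂ) v).re = (v * (starRingEnd ℂ) u).re := by
  simp [Complex.mul_re]; ring

lemma abs_add_le_quad (u v : ℂ) (hu : u ≠ 0) :
    ‖u + v‖ ≤ ‖u‖ + (v * (starRingEnd ℂ) u).re / ‖u‖
      + ‖v‖ ^ 2 / (2 * ‖u‖) := by
  have hx : 0 < ‖u‖ := norm_pos_iff.mpr hu
  set x := ‖u‖ with hxdef
  set bb := ‖v‖ with hbdef
  set aa := (v * (starRingEnd ℂ) u).re with haadef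
  have hsq : ‖u + v‖ ^ 2 = x ^ 2 + 2 * aa + bb ^ 2 := by
    rw [Complex.sq_norm, Complex.normSq_add, ← Complex.sq_norm, ← Complex.sq_norm,
      mul_conj_re_comm]
    ring
  have haabound : |aa| ≤ bb * x := by
    calc |aa| ≤ ‖v * (starRingEnd ℂ) u‖ := Complex.abs_re_le_norm _
    _ = bb * x := by rw [norm_mul, Complex.norm_conj]
  have hb0 : 0 ≤ bb := norm_nonneg v
  have habs0 : 0 ≤ ‖u + v‖ := norm_nonneg _
  have haa1 : -(bb*x) ≤ aa := neg_le_of_abs_le haabound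
  set y := aa / x + bb ^ 2 / (2 * x) with hydef
  have hxy : x * y = aa + bb^2/2 := by
    rw [hydef]; field_simp
  have hrhs : 0 ≤ x + y := by
    have hy' : 0 ≤ x * (x + y) := by rw [mul_add, hxy]; nlinarith [sq_nonneg (x - bb)]
    exact (mul_nonneg_iff_of_pos_left hx).mp hy'
  have goal' : ‖u+v‖ ≤ x + y := by
    by_contra hcon
    push_neg at hcon
    have h2 : (x+y)^2 < ‖u+v‖^2 := pow_lt_pow_left₀ hcon hrhs (by norm_num)
    have h3 : (x+y)^2 = x^2 + 2*(x*y) + y^2 := by ring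
    rw [hxy] at h3
    clear_value x bb aa y
    nlinarith [sq_nonneg y]
  rw [hydef] at goal'
  linarith

lemma abs_add_ge_lin (u v : ℂ) (hu : u ≠ 0) :
    ‖u‖ + (v * (starRingEnd ℂ) u).re / ‖u‖ ≤ ‖u + v‖ := by
  have hx : 0 < ‖u‖ := norm_pos_iff.mpr hu
  have key : ((u + v) * (starRingEnd ℂ) u).re ≤ ‖u + v‖ * ‖u‖ := by
    calc ((u + v) * (starRingEnd ℂ) u).re ≤ ‖(u + v) * (starRingEnd ℂ) u‖ :=
      Complex.re_le_norm _
    _ = ‖u + v‖ * ‖u‖ := by rw [norm_mul, Complex.norm_conj]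
  have hexp : ((u + v) * (starRingEnd ℂ) u).re
      = ‖u‖ ^ 2 + (v * (starRingEnd ℂ) u).re := by
    rw [add_mul, Complex.add_re, Complex.mul_conj]
    simp [Complex.sq_norm]
  refine le_of_mul_le_mul_right ?_ hx
  have h4 : (‖u‖ + (v * (starRingEnd ℂ) u).re / ‖u‖) * ‖u‖
      = ‖u‖ ^ 2 + (v * (starRingEnd ℂ) u).re := by field_simp
  rw [h4]
  linarith [key, hexp]
end

section
lemma orth_w_eq_zero {α β a b : ℝ} (hα : 0 < α) (hβ : 0 < β) (ha : 0 < a) (hb : 0 < b)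
    {f₁ f₂ g₁ g₂ : ℂ} (hf₁ : ‖f₁‖ = a) (hf₂ : ‖f₂‖ = b)
    (hf1ne : f₁ ≠ 0) (hf2ne : f₂ ≠ 0)
    (horth : ∀ c : ℂ, α * a + β * b ≤
      α * ‖f₁ + c * g₁‖ + β * ‖f₂ + c * g₂‖) :
    ((α/a : ℝ) : ℂ) * (g₁ * (starRingEnd ℂ) f₁)
      + ((β/b : ℝ) : ℂ) * (g₂ * (starRingEnd ℂ) f₂) = 0 := by
  set K : ℝ := α * (‖g₁‖)^2/(2*a) + β * (‖g₂‖)^2/(2*b) with hK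
  have hK0 : 0 ≤ K := by positivity
  set w : ℂ := ((α/a : ℝ) : ℂ) * (g₁ * (starRingEnd ℂ) f₁)
      + ((β/b : ℝ) : ℂ) * (g₂ * (starRingEnd ℂ) f₂) with hw
  show w = 0
  by_contra hwne
  have hwabs : 0 < ‖w‖ := norm_pos_iff.mpr hwne
  set t : ℝ := (K+1)⁻¹ with ht
  have ht0 : 0 < t := by positivity
  set cc : ℂ := -(t : ℂ) * (starRingEnd ℂ) w with hcc
  have h1 := abs_add_le_quad f₁ (cc * g₁) hf1ne
  have h2 := abs_add_le_quad f₂ (cc * g₂) hf2ne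
  rw [hf₁] at h1
  rw [hf₂] at h2
  have horth' := horth cc
  have hcwre : (cc * w).re = (α/a) * ((cc*g₁) * (starRingEnd ℂ) f₁).re
      + (β/b) * ((cc*g₂) * (starRingEnd ℂ) f₂).re := by
    have e : cc * w = ((α/a : ℝ) : ℂ) * ((cc*g₁) * (starRingEnd ℂ) f₁)
        + ((β/b : ℝ) : ℂ) * ((cc*g₂) * (starRingEnd ℂ) f₂) := by rw [hw]; ring
    rw [e]
    simp [Complex.add_re, Complex.re_ofReal_mul]
  have hcw : (cc * w).re = -t * (‖w‖)^2 := by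
    have e2 : (starRingEnd ℂ) w * w = ((‖w‖ ^ 2 : ℝ) : ℂ) := by
      rw [mul_comm, Complex.mul_conj, Complex.normSq_eq_norm_sq]
    have e : cc * w = (((-t * ‖w‖ ^ 2 : ℝ)) : ℂ) := by
      rw [hcc]
      calc -(t:ℂ) * (starRingEnd ℂ) w * w = -(t:ℂ) * ((starRingEnd ℂ) w * w) := by ring
      _ = -(t:ℂ) * ((‖w‖ ^ 2 : ℝ) : ℂ) := by rw [e2]
      _ = (((-t * ‖w‖ ^ 2 : ℝ)) : ℂ) := by push_cast; ring
    rw [e, Complex.ofReal_re]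
  have hccabs : ‖cc‖ = t * ‖w‖ := by
    rw [hcc, norm_mul, Complex.norm_conj, norm_neg, Complex.norm_real, Real.norm_eq_abs, abs_of_pos ht0]
  have hsum : 0 ≤ (cc * w).re + (‖cc‖)^2 * K := by
    rw [hcwre, hK]
    have e1 : α * ‖f₁ + cc * g₁‖ ≤ α * a + (α/a) * ((cc*g₁) * (starRingEnd ℂ) f₁).re
        + (‖cc‖)^2 * (α * (‖g₁‖)^2/(2*a)) := by
      have h1' := mul_le_mul_of_nonneg_left h1 hα.le
      have eab : ‖cc * g₁‖ ^2 = (‖cc‖)^2 * (‖g₁‖)^2 := by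
        rw [norm_mul]; ring
      rw [eab] at h1'
      calc α * ‖f₁ + cc * g₁‖ ≤ _ := h1'
      _ = α * a + (α/a) * ((cc*g₁) * (starRingEnd ℂ) f₁).re
          + (‖cc‖)^2 * (α * (‖g₁‖)^2/(2*a)) := by ring
    have e2 : β * ‖f₂ + cc * g₂‖ ≤ β * b + (β/b) * ((cc*g₂) * (starRingEnd ℂ) f₂).re
        + (‖cc‖)^2 * (β * (‖g₂‖)^2/(2*b)) := by
      have h2' := mul_le_mul_of_nonneg_left h2 hβ.le
      have eab : ‖cc * g₂‖ ^2 = (‖cc‖)^2 * (‖g₂‖)^2 := by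
        rw [norm_mul]; ring
      rw [eab] at h2'
      calc β * ‖f₂ + cc * g₂‖ ≤ _ := h2'
      _ = β * b + (β/b) * ((cc*g₂) * (starRingEnd ℂ) f₂).re
          + (‖cc‖)^2 * (β * (‖g₂‖)^2/(2*b)) := by ring
    have hd : (‖cc‖)^2 * (α * (‖g₁‖)^2/(2*a) + β * (‖g₂‖)^2/(2*b))
        = (‖cc‖)^2*(α * (‖g₁‖)^2/(2*a))
          + (‖cc‖)^2*(β * (‖g₂‖)^2/(2*b)) := by ring
    rw [hd]
    linarith [horth', e1, e2]
  rw [hcw, hccabs] at hsum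
  have htK : t * (K + 1) = 1 := inv_mul_cancel₀ (by positivity)
  have h5 : (t*(K+1)) * (t * ‖w‖^2) = 1 * (t * ‖w‖^2) := by rw [htK]
  have h7 : t^2*(‖w‖)^2*K + t^2*(‖w‖)^2 = t*(‖w‖)^2 := by
    linear_combination h5
  have h8 : (t*‖w‖)^2 * K = t^2*(‖w‖)^2*K := by ring
  rw [h8] at hsum
  have h6 : 0 < t^2*(‖w‖)^2 := by positivity
  linarith [hsum, h7, h6]
end

section
lemma two_dim_left_symm {α β a b : ℝ} (hα : 0 < α) (hβ : 0 < β) (ha : 0 < a) (hb : 0 < b)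
    {f₁ f₂ g₁ g₂ : ℂ} (hf₁ : ‖f₁‖ = a) (hf₂ : ‖f₂‖ = b)
    (hbal : α * a = β * b)
    (horth : ∀ c : ℂ, α * a + β * b ≤
      α * ‖f₁ + c * g₁‖ + β * ‖f₂ + c * g₂‖) (c : ℂ) :
    α * ‖g₁‖ + β * ‖g₂‖ ≤
      α * ‖g₁ + c * f₁‖ + β * ‖g₂ + c * f₂‖ := by
  have hf1ne : f₁ ≠ 0 := fun h => by rw [h, norm_zero] at hf₁; linarith
  have hf2ne : f₂ ≠ 0 := fun h => by rw [h, norm_zero] at hf₂; linarith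
  have hw0 := orth_w_eq_zero hα hβ ha hb hf₁ hf₂ hf1ne hf2ne horth
  have ha' : (a:ℝ) ≠ 0 := ne_of_gt ha
  have hb' : (b:ℝ) ≠ 0 := ne_of_gt hb
  by_cases hg1 : g₁ = 0
  · have hg2 : g₂ = 0 := by
      rw [hg1] at hw0
      have : ((β/b : ℝ) : ℂ) * (g₂ * (starRingEnd ℂ) f₂) = 0 := by
        linear_combination hw0
      rcases mul_eq_zero.mp this with h | h
      · exfalso
        have : (β/b : ℝ) = 0 := by exact_mod_cast h
        have : (0:ℝ) < β/b := by positivity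
        linarith
      · rcases mul_eq_zero.mp h with h' | h'
        · exact h'
        · exact absurd  (by simpa using h') hf2ne
    rw [hg1, hg2]
    simp only [norm_zero, mul_zero, add_zero, zero_add, zero_mul]
    positivity
  · have hg2 : g₂ ≠ 0 := by
      intro h
      rw [h] at hw0
      have : ((α/a : ℝ) : ℂ) * (g₁ * (starRingEnd ℂ) f₁) = 0 := by
        linear_combination hw0
      rcases mul_eq_zero.mp this with h' | h'
      · have : (α/a : ℝ) = 0 := by exact_mod_cast h'
        have h2 : (0:ℝ) < α/a := by positivity
        linarith
      · rcases mul_eq_zero.mp h' with h'' | h''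
        · exact hg1 h''
        · exact absurd  (by simpa using h'') hf1ne
    -- abs relation : α |g₁| = β |g₂|
    have habs : α * ‖g₁‖ = β * ‖g₂‖ := by
      have e : ((α/a : ℝ) : ℂ) * (g₁ * (starRingEnd ℂ) f₁)
          = - (((β/b : ℝ) : ℂ) * (g₂ * (starRingEnd ℂ) f₂)) := by
        linear_combination hw0
      have e2 := congrArg norm e
      rw [norm_neg, norm_mul, norm_mul, norm_mul, norm_mul, Complex.norm_conj,
        Complex.norm_conj, hf₁, hf₂, Complex.norm_real, Complex.norm_real, Real.norm_eq_abs, Real.norm_eq_abs,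
        abs_of_pos (by positivity : (0:ℝ) < α/a), abs_of_pos (by positivity : (0:ℝ) < β/b)] at e2
      field_simp at e2
      -- e2 should be : α * (|g₁| * a) * b = β * (|g₂| * b) * a  or similar
      have e3 : α * ‖g₁‖ * (a*b) = β * ‖g₂‖ * (a*b) := by
        linear_combination (a*b) * e2
      exact mul_right_cancel₀ (by positivity) e3
    -- key identity : α² f₁ conj g₁ + β² f₂ conj g₂ = 0
    have hconj := congrArg (starRingEnd ℂ) hw0
    simp only [map_add, map_mul, Complex.conj_conj, Complex.conj_ofReal, map_zero] at hconj
    have hbalC : ((α:ℂ)) * (a:ℂ) = ((β:ℂ)) * (b:ℂ) := by exact_mod_cast hbal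
    have hconj' : ((α/a : ℝ) : ℂ) * ((starRingEnd ℂ) g₁ * f₁) * ((a:ℂ)*(b:ℂ))
        = -(((β/b : ℝ) : ℂ) * ((starRingEnd ℂ) g₂ * f₂) * ((a:ℂ)*(b:ℂ))) := by
      linear_combination ((a:ℂ)*(b:ℂ)) * hconj
    have hcast1 : ((α/a : ℝ) : ℂ) * (a:ℂ) = (α:ℂ) := by
      push_cast
      rw [div_mul_eq_mul_div, mul_div_assoc, div_self (by exact_mod_cast ha' : (a:ℂ) ≠ 0), mul_one]
    have hcast2 : ((β/b : ℝ) : ℂ) * (b:ℂ) = (β:ℂ) := by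
      push_cast
      rw [div_mul_eq_mul_div, mul_div_assoc, div_self (by exact_mod_cast hb' : (b:ℂ) ≠ 0), mul_one]
    have hW : ((α:ℂ))^2 * (f₁ * (starRingEnd ℂ) g₁) + ((β:ℂ))^2 * (f₂ * (starRingEnd ℂ) g₂) = 0 := by
      have e4 : ((α:ℂ)) * ((starRingEnd ℂ) g₁ * f₁) * (b:ℂ)
          = -( ((β:ℂ)) * ((starRingEnd ℂ) g₂ * f₂) * (a:ℂ)) := by
        calc ((α:ℂ)) * ((starRingEnd ℂ) g₁ * f₁) * (b:ℂ)
            = (((α/a : ℝ) : ℂ) * (a:ℂ)) * ((starRingEnd ℂ) g₁ * f₁) * (b:ℂ) := by rw [hcast1]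
        _ = ((α/a : ℝ) : ℂ) * ((starRingEnd ℂ) g₁ * f₁) * ((a:ℂ)*(b:ℂ)) := by ring
        _ = -(((β/b : ℝ) : ℂ) * ((starRingEnd ℂ) g₂ * f₂) * ((a:ℂ)*(b:ℂ))) := hconj'
        _ = -((((β/b : ℝ) : ℂ)*(b:ℂ)) * ((starRingEnd ℂ) g₂ * f₂) * (a:ℂ)) := by ring
        _ = -( ((β:ℂ)) * ((starRingEnd ℂ) g₂ * f₂) * (a:ℂ)) := by rw [hcast2]
      have e5 : ((b:ℂ)) * (((α:ℂ))^2 * (f₁ * (starRingEnd ℂ) g₁)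
          + ((β:ℂ))^2 * (f₂ * (starRingEnd ℂ) g₂)) = 0 := by
        linear_combination ((α:ℂ)) * e4 - (((β:ℂ)) * ((starRingEnd ℂ) g₂ * f₂)) * hbalC
      rcases mul_eq_zero.mp e5 with h | h
      · exact absurd (by exact_mod_cast h) hb'
      · exact h
    -- now conclude
    have hg1a : 0 < ‖g₁‖ := norm_pos_iff.mpr hg1
    have hg2a : 0 < ‖g₂‖ := norm_pos_iff.mpr hg2
    have l1 := abs_add_ge_lin g₁ (c * f₁) hg1
    have l2 := abs_add_ge_lin g₂ (c * f₂) hg2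
    have re0 : (α^2) * ((c*f₁) * (starRingEnd ℂ) g₁).re + (β^2) * ((c*f₂) * (starRingEnd ℂ) g₂).re = 0 := by
      have e6 : ((α^2 : ℝ):ℂ) * ((c*f₁) * (starRingEnd ℂ) g₁) + ((β^2 : ℝ):ℂ) * ((c*f₂) * (starRingEnd ℂ) g₂)
          = c * (((α:ℂ))^2 * (f₁ * (starRingEnd ℂ) g₁) + ((β:ℂ))^2 * (f₂ * (starRingEnd ℂ) g₂)) := by
        push_cast; ring
      have e7 : (((α^2 : ℝ):ℂ) * ((c*f₁) * (starRingEnd ℂ) g₁)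
          + ((β^2 : ℝ):ℂ) * ((c*f₂) * (starRingEnd ℂ) g₂)).re = 0 := by
        rw [e6, hW, mul_zero, Complex.zero_re]
      rw [Complex.add_re, Complex.re_ofReal_mul, Complex.re_ofReal_mul] at e7
      exact e7
    -- bracket vanishes
    have hbra : α * (((c*f₁) * (starRingEnd ℂ) g₁).re / ‖g₁‖)
        + β * (((c*f₂) * (starRingEnd ℂ) g₂).re / ‖g₂‖) = 0 := by
      have h1 : α / ‖g₁‖ = α^2 / (α * ‖g₁‖) := by
        rw [pow_two, mul_div_mul_left _ _ (ne_of_gt hα)]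
      have h2 : β / ‖g₂‖ = β^2 / (α * ‖g₁‖) := by
        rw [habs, pow_two, mul_div_mul_left _ _ (ne_of_gt hβ)]
      calc α * (((c*f₁) * (starRingEnd ℂ) g₁).re / ‖g₁‖)
          + β * (((c*f₂) * (starRingEnd ℂ) g₂).re / ‖g₂‖)
          = (α / ‖g₁‖) * ((c*f₁) * (starRingEnd ℂ) g₁).re
            + (β / ‖g₂‖) * ((c*f₂) * (starRingEnd ℂ) g₂).re := by ring
        _ = (α^2 / (α * ‖g₁‖)) * ((c*f₁) * (starRingEnd ℂ) g₁).re
            + (β^2 / (α * ‖g₁‖)) * ((c*f₂) * (starRingEnd ℂ) g₂).re := by rw [h1, h2]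
        _ = ((α^2) * ((c*f₁) * (starRingEnd ℂ) g₁).re
            + (β^2) * ((c*f₂) * (starRingEnd ℂ) g₂).re) / (α * ‖g₁‖) := by ring
        _ = 0 := by rw [re0, zero_div]
    have m1 := mul_le_mul_of_nonneg_left l1 hα.le
    have m2 := mul_le_mul_of_nonneg_left l2 hβ.le
    have expand1 : α * (‖g₁‖ + ((c*f₁) * (starRingEnd ℂ) g₁).re / ‖g₁‖)
        = α * ‖g₁‖ + α * (((c*f₁) * (starRingEnd ℂ) g₁).re / ‖g₁‖) := by ring
    have expand2 : β * (‖g₂‖ + ((c*f₂) * (starRingEnd ℂ) g₂).re / ‖g₂‖)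
        = β * ‖g₂‖ + β * (((c*f₂) * (starRingEnd ℂ) g₂).re / ‖g₂‖) := by ring
    rw [expand1] at m1
    rw [expand2] at m2
    linarith [m1, m2, hbra]
end

section

variable {X : Type*} [MeasurableSpace X] {μ : Measure X}

lemma IsMeasAtom.ae_const_fin {A : Set X} (hA : IsMeasAtom μ A) (hfin : μ A ≠ ⊤)
    {g : X → ℂ} (hg : Measurable g) : ∃ c : ℂ, ∀ᵐ x ∂μ.restrict A, g x = c := by
  obtain ⟨hAm, hA0, hAatom⟩ := hA
  set τ : Measure ℂ := Measure.map g (μ.restrict A) with hτ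
  have hτap : ∀ s : Set ℂ, MeasurableSet s → τ s = μ (g ⁻¹' s ∩ A) := by
    intro s hs
    rw [hτ, Measure.map_apply hg hs, Measure.restrict_apply (hg hs)]
  have hτuniv : τ Set.univ = μ A := by
    rw [hτap Set.univ MeasurableSet.univ]; simp
  have hdich : ∀ s : Set ℂ, MeasurableSet s → τ s = 0 ∨ τ s = μ A := by
    intro s hs
    rcases hAatom (g ⁻¹' s ∩ A) Set.inter_subset_right ((hg hs).inter hAm) with h | h
    · left; rw [hτap s hs]; exact h
    · right
      rw [hτap s hs]
      have hdiff : A \ (g ⁻¹' s ∩ A) = g ⁻¹' sᶜ ∩ A := by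
        ext x; simp [Set.mem_diff]; tauto
      rw [hdiff] at h
      have : μ A ≤ μ (g ⁻¹' s ∩ A) + μ (g ⁻¹' sᶜ ∩ A) := by
        refine le_trans (measure_mono ?_) (measure_union_le _ _)
        intro x hx
        by_cases hxs : g x ∈ s
        · exact Set.mem_union_left _ ⟨hxs, hx⟩
        · exact Set.mem_union_right _ ⟨hxs, hx⟩
      rw [h, add_zero] at this
      exact le_antisymm (by rw [← hτap s hs, ← hτuniv]; exact measure_mono (Set.subset_univ _)) this
  obtain ⟨b, hbc, hbne, hbasis⟩ := TopologicalSpace.exists_countable_basis ℂ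
  set U : Set ℂ := ⋃₀ {s ∈ b | τ s = 0} with hU
  have hUnull : τ U = 0 := by
    rw [hU, measure_sUnion_null_iff (hbc.mono (Set.sep_subset _ _))]
    exact fun s hs => hs.2
  have hUopen : IsOpen U := by
    apply isOpen_sUnion
    intro s hs
    exact hbasis.isOpen hs.1
  have hKne : Uᶜ.Nonempty := by
    by_contra h
    rw [Set.not_nonempty_iff_eq_empty, Set.compl_empty_iff] at h
    rw [h, hτuniv] at hUnull
    exact absurd hUnull (ne_of_gt hA0)
  have hKsub : Uᶜ.Subsingleton := by
    intro c₁ h₁ c₂ h₂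
    by_contra hne
    obtain ⟨V₁, V₂, hV₁, hV₂, hc₁, hc₂, hVd⟩ := t2_separation hne
    obtain ⟨b₁, hb₁b, hb₁c, hb₁sub⟩ := hbasis.exists_subset_of_mem_open hc₁ hV₁
    obtain ⟨b₂, hb₂b, hb₂c, hb₂sub⟩ := hbasis.exists_subset_of_mem_open hc₂ hV₂
    have hmem : ∀ (bs : Set ℂ) (cs : ℂ), bs ∈ b → cs ∈ bs → cs ∈ Uᶜ → τ bs = μ A := by
      intro bs cs hbsb hcs hcsU
      rcases hdich bs (hbasis.isOpen hbsb).measurableSet with h | h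
      · exfalso
        exact hcsU (Set.mem_sUnion.mpr ⟨bs, ⟨hbsb, h⟩, hcs⟩)
      · exact h
    have h1 := hmem b₁ c₁ hb₁b hb₁c h₁
    have h2 := hmem b₂ c₂ hb₂b hb₂c h₂
    have hdisj : Disjoint b₁ b₂ := hVd.mono hb₁sub hb₂sub
    have : τ b₁ + τ b₂ ≤ τ Set.univ := by
      rw [← measure_union hdisj (hbasis.isOpen hb₂b).measurableSet]
      exact measure_mono (Set.subset_univ _)
    rw [h1, h2, hτuniv] at this
    have hlt : μ A < μ A + μ A := ENNReal.lt_add_right hfin (ne_of_gt hA0)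
    exact absurd this (not_le.mpr hlt)
  obtain ⟨c, hc⟩ := hKne
  refine ⟨c, ?_⟩
  have hae : ∀ᵐ x ∂μ.restrict A, g x ∈ Uᶜ := by
    rw [ae_iff]
    have : {x | ¬ g x ∈ Uᶜ} = g ⁻¹' U := by ext x; simp
    rw [this]
    have := hUnull
    rw [hτ, Measure.map_apply hg hUopen.measurableSet] at this
    exact this
  filter_upwards [hae] with x hx
  exact hKsub hx hc

lemma IsMeasAtom.ae_const [SigmaFinite μ] {A : Set X} (hA : IsMeasAtom μ A)
    {g : X → ℂ} (hg : Measurable g) : ∃ c : ℂ, ∀ᵐ x ∂μ.restrict A, g x = c := by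
  by_cases hfin : μ A = ⊤
  · obtain ⟨A', hA'm, hA'sub, hA'0, hA'fin⟩ :=
      Measure.exists_subset_measure_lt_top hA.1 hA.2.1
    have hA'atom : IsMeasAtom μ A' := by
      refine ⟨hA'm, hA'0, fun C hC hCm => ?_⟩
      rcases hA.2.2 C (hC.trans hA'sub) hCm with h | h
      · exact Or.inl h
      · exact Or.inr (measure_mono_null (Set.diff_subset_diff_left hA'sub) h)
    have hAnull : μ (A \ A') = 0 := by
      rcases hA.2.2 A' hA'sub hA'm with h | h
      · exact absurd h (ne_of_gt hA'0)
      · exact h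
    obtain ⟨c, hc⟩ := hA'atom.ae_const_fin (ne_of_lt hA'fin) hg
    refine ⟨c, ?_⟩
    have hmeas : MeasurableSet {x | ¬ g x = c} := (hg (measurableSet_singleton c)).compl
    rw [ae_iff, Measure.restrict_apply hmeas] at hc ⊢
    refine measure_mono_null ?_ (measure_union_null hc hAnull)
    intro x ⟨hx1, hx2⟩
    by_cases h : x ∈ A'
    · exact Set.mem_union_left _ ⟨hx1, h⟩
    · exact Set.mem_union_right _ ⟨hx2, h⟩
  · exact hA.ae_const_fin hfin hg
end

section



variable {X : Type*} [MeasurableSpace X] {μ : Measure X}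

lemma coeFn_add_smul (u v : Lp ℂ 1 μ) (c : ℂ) :
    ⇑(u + c • v) =ᵐ[μ] fun x => u x + c * v x := by
  filter_upwards [Lp.coeFn_add u (c • v), Lp.coeFn_smul c v] with x h1 h2
  rw [h1, Pi.add_apply, h2, Pi.smul_apply, smul_eq_mul]

lemma norm_two_const {A B : Set X} (hAm : MeasurableSet A) (hBm : MeasurableSet B)
    (hd : Disjoint A B) (hcompl : μ (A ∪ B)ᶜ = 0)
    {h : X → ℂ} (hint : Integrable h μ) {c₁ c₂ : ℂ}
    (h1 : ∀ᵐ x ∂μ.restrict A, h x = c₁) (h2 : ∀ᵐ x ∂μ.restrict B, h x = c₂) :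
    ∫ x, ‖h x‖ ∂μ = (μ A).toReal * ‖c₁‖ + (μ B).toReal * ‖c₂‖ := by
  rw [← integral_add_compl (hAm.union hBm) hint.norm]
  have hzero : ∫ x in (A ∪ B)ᶜ, ‖h x‖ ∂μ = 0 := by
    rw [Measure.restrict_eq_zero.mpr hcompl]
    simp
  rw [hzero, add_zero, setIntegral_union hd hBm hint.norm.integrableOn hint.norm.integrableOn]
  have e1 : ∫ x in A, ‖h x‖ ∂μ = (μ A).toReal * ‖c₁‖ := by
    have hcongr : (fun x => ‖h x‖) =ᵐ[μ.restrict A] fun _ => ‖c₁‖ :=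
      h1.mono fun x hx => by simp only [hx]
    rw [integral_congr_ae hcongr, integral_const, measureReal_restrict_apply_univ, measureReal_def, smul_eq_mul]
  have e2 : ∫ x in B, ‖h x‖ ∂μ = (μ B).toReal * ‖c₂‖ := by
    have hcongr : (fun x => ‖h x‖) =ᵐ[μ.restrict B] fun _ => ‖c₂‖ :=
      h2.mono fun x hx => by simp only [hx]
    rw [integral_congr_ae hcongr, integral_const, measureReal_restrict_apply_univ, measureReal_def, smul_eq_mul]
  rw [e1, e2]

lemma Lp_norm_two_const {A B : Set X} (hAm : MeasurableSet A) (hBm : MeasurableSet B)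
    (hd : Disjoint A B) (hcompl : μ (A ∪ B)ᶜ = 0)
    (h : Lp ℂ 1 μ) {c₁ c₂ : ℂ}
    (h1 : ∀ᵐ x ∂μ.restrict A, h x = c₁) (h2 : ∀ᵐ x ∂μ.restrict B, h x = c₂) :
    ‖h‖ = (μ A).toReal * ‖c₁‖ + (μ B).toReal * ‖c₂‖ := by
  rw [L1.norm_eq_integral_norm]
  exact norm_two_const hAm hBm hd hcompl (L1.integrable_coeFn h) h1 h2

lemma mpr_dir (X : Type*) [MeasurableSpace X] (μ : Measure X)
    [SigmaFinite μ] (f : Lp ℂ 1 μ) :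
      (f = 0 ∨
        (0 < μ Set.univ ∧ (∀ A : Set X, MeasurableSet A → μ A = 0 ∨ μ Aᶜ = 0) ∧ f ≠ 0) ∨
        (∃ A B : Set X, IsMeasAtom μ A ∧ IsMeasAtom μ B ∧ Disjoint A B ∧
          μ A < ⊤ ∧ μ B < ⊤ ∧ μ (A ∪ B)ᶜ = 0 ∧
          ∃ a b : ℝ, 0 < a ∧ 0 < b ∧
            (∀ᵐ x ∂μ.restrict A, ‖f x‖ = a) ∧
            (∀ᵐ y ∂μ.restrict B, ‖f y‖ = b) ∧
            (μ A).toReal * a = (μ B).toReal * b)) →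
    (∀ g : Lp ℂ 1 μ, (∀ c : ℂ, ‖f‖ ≤ ‖f + c • g‖) → (∀ c : ℂ, ‖g‖ ≤ ‖g + c • f‖)) := by
  rintro (hf0 | ⟨huniv, hdich, hfne⟩ | ⟨A, B, hA, hB, hd, hAfin, hBfin, hcompl, a, b, ha, hb, haeA, haeB, hbal⟩)
  · intro g hg c
    rw [hf0, smul_zero, add_zero]
  · -- trivial σ-algebra case
    have hu : IsMeasAtom μ Set.univ := by
      refine ⟨MeasurableSet.univ, huniv, fun B _ hBm => ?_⟩
      rcases hdich B hBm with h | h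
      · exact Or.inl h
      · right
        have e : Set.univ \ B = Bᶜ := by ext x; simp
        rwa [e]
    have hFm : Measurable (⇑f) := (Lp.stronglyMeasurable f).measurable
    obtain ⟨cf, hcf⟩ := hu.ae_const hFm
    rw [Measure.restrict_univ] at hcf
    have hcfne : cf ≠ 0 := by
      intro h0
      apply hfne
      apply Lp.ext (p := (1 : ℝ≥0∞)) (μ := μ)
      filter_upwards [hcf, Lp.coeFn_zero (E := ℂ) (p := (1:ℝ≥0∞)) (μ := μ)] with x h1 h2
      rw [h1, h0, h2]; rfl
    intro g hg c
    obtain ⟨cg, hcg⟩ := hu.ae_const (Lp.stronglyMeasurable g).measurable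
    rw [Measure.restrict_univ] at hcg
    by_cases hcg0 : cg = 0
    · have hg0 : g = 0 := by
        apply Lp.ext (p := (1 : ℝ≥0∞)) (μ := μ)
        filter_upwards [hcg, Lp.coeFn_zero (E := ℂ) (p := (1:ℝ≥0∞)) (μ := μ)] with x h1 h2
        rw [h1, hcg0, h2]; rfl
      rw [hg0]
      simp only [norm_zero, zero_add]
      exact norm_nonneg _
    · exfalso
      have hc := hg (-cf/cg)
      have hzero : f + (-cf/cg) • g = 0 := by
        apply Lp.ext (p := (1 : ℝ≥0∞)) (μ := μ)
        filter_upwards [coeFn_add_smul f g (-cf/cg), hcf, hcg,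
          Lp.coeFn_zero (E := ℂ) (p := (1:ℝ≥0∞)) (μ := μ)] with x h1 h2 h3 h4
        rw [h1, h2, h3, h4]
        show cf + -cf / cg * cg = 0
        field_simp
        ring
      rw [hzero, norm_zero] at hc
      have : ‖f‖ ≠ 0 := by
        simpa using hfne
      have : 0 < ‖f‖ := lt_of_le_of_ne (norm_nonneg f) (Ne.symm this)
      linarith
  · -- two atoms case
    intro g horth c
    have hFm : Measurable (⇑f) := (Lp.stronglyMeasurable f).measurable
    have hGm : Measurable (⇑g) := (Lp.stronglyMeasurable g).measurable
    obtain ⟨f₁, hf₁⟩ := hA.ae_const hFm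
    obtain ⟨f₂, hf₂⟩ := hB.ae_const hFm
    obtain ⟨g₁, hg₁⟩ := hA.ae_const hGm
    obtain ⟨g₂, hg₂⟩ := hB.ae_const hGm
    have hrA : (ae (μ.restrict A)).NeBot := ae_neBot.mpr (by
      intro h0
      have := congrArg (fun m => m Set.univ) h0
      simp [Measure.restrict_apply_univ] at this
      exact absurd this (ne_of_gt hA.2.1))
    have hrB : (ae (μ.restrict B)).NeBot := ae_neBot.mpr (by
      intro h0
      have := congrArg (fun m => m Set.univ) h0
      simp [Measure.restrict_apply_univ] at this
      exact absurd this (ne_of_gt hB.2.1))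
    have habsf₁ : ‖f₁‖ = a := by
      obtain ⟨x, h1, h2⟩ := (hf₁.and haeA).exists
      rw [← h2, h1]
    have habsf₂ : ‖f₂‖ = b := by
      obtain ⟨x, h1, h2⟩ := (hf₂.and haeB).exists
      rw [← h2, h1]
    have hα : 0 < (μ A).toReal := ENNReal.toReal_pos (ne_of_gt hA.2.1) (ne_of_lt hAfin)
    have hβ : 0 < (μ B).toReal := ENNReal.toReal_pos (ne_of_gt hB.2.1) (ne_of_lt hBfin)
    have hnf : ∀ cc : ℂ, ‖f + cc • g‖
        = (μ A).toReal * ‖f₁ + cc * g₁‖ + (μ B).toReal * ‖f₂ + cc * g₂‖ := by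
      intro cc
      refine Lp_norm_two_const hA.1 hB.1 hd hcompl _ ?_ ?_
      · filter_upwards [ae_restrict_of_ae (coeFn_add_smul f g cc), hf₁, hg₁] with x h1 h2 h3
        rw [h1, h2, h3]
      · filter_upwards [ae_restrict_of_ae (coeFn_add_smul f g cc), hf₂, hg₂] with x h1 h2 h3
        rw [h1, h2, h3]
    have hng : ∀ cc : ℂ, ‖g + cc • f‖
        = (μ A).toReal * ‖g₁ + cc * f₁‖ + (μ B).toReal * ‖g₂ + cc * f₂‖ := by
      intro cc
      refine Lp_norm_two_const hA.1 hB.1 hd hcompl _ ?_ ?_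
      · filter_upwards [ae_restrict_of_ae (coeFn_add_smul g f cc), hf₁, hg₁] with x h1 h2 h3
        rw [h1, h2, h3]
      · filter_upwards [ae_restrict_of_ae (coeFn_add_smul g f cc), hf₂, hg₂] with x h1 h2 h3
        rw [h1, h2, h3]
    have hnf0 : ‖f‖ = (μ A).toReal * a + (μ B).toReal * b := by
      rw [Lp_norm_two_const hA.1 hB.1 hd hcompl f hf₁ hf₂, habsf₁, habsf₂]
    have hng0 : ‖g‖ = (μ A).toReal * ‖g₁‖ + (μ B).toReal * ‖g₂‖ := by
      exact Lp_norm_two_const hA.1 hB.1 hd hcompl g hg₁ hg₂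
    have horth' : ∀ cc : ℂ, (μ A).toReal * a + (μ B).toReal * b ≤
        (μ A).toReal * ‖f₁ + cc * g₁‖ + (μ B).toReal * ‖f₂ + cc * g₂‖ := by
      intro cc
      have := horth cc
      rwa [hnf0, hnf cc] at this
    have key := two_dim_left_symm hα hβ ha hb habsf₁ habsf₂ hbal horth' c
    rw [hng0, hng c]
    exact key
end

section
variable {X : Type*} [MeasurableSpace X] {μ : Measure X}

lemma Lp_norm_ae (h : Lp ℂ 1 μ) {v : X → ℂ} (hv : ⇑h =ᵐ[μ] v) :
    ‖h‖ = ∫ x, ‖v x‖ ∂μ := by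
  rw [L1.norm_eq_integral_norm]
  exact integral_congr_ae (hv.mono fun x hx => by simp only [hx])

lemma integral_norm_add_disj {u v : X → ℂ} (hu : Integrable u μ) (hv : Integrable v μ)
    (hdis : ∀ x, u x = 0 ∨ v x = 0) :
    ∫ x, ‖u x + v x‖ ∂μ = (∫ x, ‖u x‖ ∂μ) + ∫ x, ‖v x‖ ∂μ := by
  rw [← integral_add hu.norm hv.norm]
  refine integral_congr_ae (Filter.Eventually.of_forall fun x => ?_)
  rcases hdis x with h | h <;> simp [h]

lemma integral_norm_indicator_mul {E : Set X} (hEm : MeasurableSet E) (k : ℂ) (F : X → ℂ) :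
    ∫ x, ‖E.indicator (fun x => k * F x) x‖ ∂μ = ‖k‖ * ∫ x in E, ‖F x‖ ∂μ := by
  have e : ∀ x, ‖E.indicator (fun x => k * F x) x‖ = E.indicator (fun x => ‖k‖ * ‖F x‖) x := by
    intro x
    by_cases hx : x ∈ E <;> simp [hx, norm_mul]
  rw [integral_congr_ae (Filter.Eventually.of_forall e), integral_indicator hEm,
    integral_const_mul]

-- Step 1 : if f is left-symmetric and nonzero then almost all mass is in the support
lemma step_compl_null [SigmaFinite μ] (f : Lp ℂ 1 μ)
    (lsym : ∀ g : Lp ℂ 1 μ, (∀ c : ℂ, ‖f‖ ≤ ‖f + c • g‖) → (∀ c : ℂ, ‖g‖ ≤ ‖g + c • f‖))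
    (hfne : f ≠ 0) : μ {x | f x ≠ 0}ᶜ = 0 := by
  set F : X → ℂ := ⇑f with hF
  set S : Set X := {x | F x ≠ 0} with hS
  have hFm : Measurable F := (Lp.stronglyMeasurable f).measurable
  have hSm : MeasurableSet S := (hFm (measurableSet_singleton 0)).compl
  by_contra hSc
  have hpos : 0 < μ Sᶜ := pos_iff_ne_zero.mpr hSc
  obtain ⟨W, hWm, hWsub, hW0, hWfin⟩ := Measure.exists_subset_measure_lt_top hSm.compl hpos
  have hWtr : 0 < (μ W).toReal := ENNReal.toReal_pos (ne_of_gt hW0) (ne_of_lt hWfin)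
  have hfpos : 0 < ‖f‖ := by
    rcases eq_or_lt_of_le (norm_nonneg f) with h | h
    · exact absurd (norm_eq_zero.mp h.symm) hfne
    · exact h
  set t : ℝ := ‖f‖ / (μ W).toReal with ht
  have ht0 : 0 < t := by positivity
  set χ : Lp ℂ 1 μ := indicatorConstLp 1 hWm (ne_of_lt hWfin) (1 : ℂ) with hχ
  set g : Lp ℂ 1 μ := f + (t : ℂ) • χ with hg
  have hfint : Integrable F μ := L1.integrable_coeFn f
  -- a generic norm computation
  have hnorm : ∀ u v : ℂ, ‖u • f + v • χ‖ = ‖u‖ * ‖f‖ + ‖v‖ * (μ W).toReal := by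
    intro u v
    have hco : ⇑(u • f + v • χ) =ᵐ[μ]
        fun x => u * F x + W.indicator (fun _ => v) x := by
      filter_upwards [Lp.coeFn_add (u • f) (v • χ), Lp.coeFn_smul u f, Lp.coeFn_smul v χ,
        indicatorConstLp_coeFn (p := (1:ℝ≥0∞)) (hs := hWm) (hμs := ne_of_lt hWfin) (c := (1:ℂ))]
        with x h1 h2 h3 h4
      rw [h1, Pi.add_apply, h2, h3, Pi.smul_apply, Pi.smul_apply, smul_eq_mul, smul_eq_mul]
      by_cases hx : x ∈ W <;> simp [hx, h4, hχ, hF, Set.indicator_of_mem, Set.indicator_of_notMem]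
    rw [Lp_norm_ae _ hco]
    have hdis : ∀ x, u * F x = 0 ∨ W.indicator (fun _ => v) x = 0 := by
      intro x
      by_cases hx : x ∈ W
      · left
        have : F x = 0 := by
          have := hWsub hx
          simpa [hS] using this
        rw [this, mul_zero]
      · right
        simp [hx]
    rw [integral_norm_add_disj (hfint.const_mul u)
      ((integrable_indicator_iff hWm).mpr (integrableOn_const (ne_of_lt hWfin))) hdis]
    have e1 : ∫ x, ‖u * F x‖ ∂μ = ‖u‖ * ‖f‖ := by
      rw [L1.norm_eq_integral_norm]
      simp_rw [norm_mul]
      rw [integral_const_mul]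
    have e2 : ∫ x, ‖W.indicator (fun _ => v) x‖ ∂μ = ‖v‖ * (μ W).toReal := by
      have e : ∀ x, ‖W.indicator (fun _ => v) x‖ = W.indicator (fun _ => ‖v‖) x := by
        intro x; by_cases hx : x ∈ W <;> simp [hx]
      rw [integral_congr_ae (Filter.Eventually.of_forall e), integral_indicator hWm,
        setIntegral_const, smul_eq_mul, mul_comm, measureReal_def]
    rw [e1, e2]
  have horth : ∀ c : ℂ, ‖f‖ ≤ ‖f + c • g‖ := by
    intro c
    have hfc : f + c • g = (1 + c) • f + (c * (t:ℂ)) • χ := by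
      rw [hg]; module
    rw [hfc, hnorm (1+c) (c * (t:ℂ))]
    have htW : t * (μ W).toReal = ‖f‖ := by
      rw [ht, div_mul_cancel₀ _ (ne_of_gt hWtr)]
    have e3 : ‖c * (t:ℂ)‖ * (μ W).toReal = ‖c‖ * ‖f‖ := by
      rw [norm_mul, Complex.norm_real, Real.norm_eq_abs, abs_of_pos ht0, mul_assoc, htW]
    rw [e3]
    have htri : 1 ≤ ‖1 + c‖ + ‖c‖ := by
      have := norm_sub_le (1 + c) c
      simpa using this
    nlinarith [hfpos, norm_nonneg (1+c), norm_nonneg c]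
  have hcon := lsym g horth (-1)
  have hgnorm : ‖g‖ = 2 * ‖f‖ := by
    have : g = (1:ℂ) • f + ((t:ℂ)) • χ := by rw [hg]; module
    rw [this, hnorm 1 (t:ℂ)]
    rw [Complex.norm_real, Real.norm_eq_abs, abs_of_pos ht0, ht,
      div_mul_cancel₀ _ (ne_of_gt hWtr)]
    simp; ring
  have hgf : g + (-1 : ℂ) • f = (0:ℂ) • f + ((t:ℂ)) • χ := by rw [hg]; module
  rw [hgnorm, hgf, hnorm 0 (t:ℂ)] at hcon
  rw [Complex.norm_real, Real.norm_eq_abs, abs_of_pos ht0, ht,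
    div_mul_cancel₀ _ (ne_of_gt hWtr)] at hcon
  simp at hcon
  linarith
end

section
variable {X : Type*} [MeasurableSpace X] {μ : Measure X}





lemma step_balance (f : Lp ℂ 1 μ)
    (lsym : ∀ g : Lp ℂ 1 μ, (∀ c : ℂ, ‖f‖ ≤ ‖f + c • g‖) → (∀ c : ℂ, ‖g‖ ≤ ‖g + c • f‖))
    {E : Set X} (hEm : MeasurableSet E) (hEsub : E ⊆ {x | f x ≠ 0})
    (hp : ∫ x in E, ‖f x‖ ∂μ ≠ 0) (hq : ∫ x in {x | f x ≠ 0} \ E, ‖f x‖ ∂μ ≠ 0) :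
    ∫ x in E, ‖f x‖ ∂μ = ∫ x in {x | f x ≠ 0} \ E, ‖f x‖ ∂μ := by
  set F : X → ℂ := ⇑f with hF
  set S : Set X := {x | F x ≠ 0} with hS
  have hFm : Measurable F := (Lp.stronglyMeasurable f).measurable
  have hSm : MeasurableSet S := (hFm (measurableSet_singleton 0)).compl
  have hfint : Integrable F μ := L1.integrable_coeFn f
  set p : ℝ := ∫ x in E, ‖F x‖ ∂μ with hpd
  set q : ℝ := ∫ x in S \ E, ‖F x‖ ∂μ with hqd
  have p0 : 0 < p :=
    lt_of_le_of_ne (integral_nonneg fun x => norm_nonneg _) (Ne.symm hp)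
  have q0 : 0 < q :=
    lt_of_le_of_ne (integral_nonneg fun x => norm_nonneg _) (Ne.symm hq)
  have hDm : MeasurableSet (S \ E) := hSm.diff hEm
  have hFzero : ∀ x, x ∉ S → F x = 0 := by
    intro x hx
    by_contra h
    exact hx h
  -- norm of a single-indicator element
  have ind_int : ∀ (T : Set X), MeasurableSet T → ∀ k : ℂ,
      Integrable (T.indicator (fun y => k * F y)) μ :=
    fun T hTm k => (hfint.const_mul k).indicator hTm
  have norm_two_ind : ∀ (k₁ k₂ : ℂ) (h : Lp ℂ 1 μ),
      (⇑h =ᵐ[μ] fun x => E.indicator (fun y => k₁ * F y) x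
        + (S \ E).indicator (fun y => k₂ * F y) x) →
      ‖h‖ = ‖k₁‖ * p + ‖k₂‖ * q := by
    intro k₁ k₂ h hrep
    rw [Lp_norm_ae h hrep,
      integral_norm_add_disj (ind_int E hEm k₁) (ind_int (S \ E) hDm k₂) ?_,
      integral_norm_indicator_mul hEm, integral_norm_indicator_mul hDm]
    intro x
    by_cases hx : x ∈ E
    · right
      rw [Set.indicator_of_notMem]
      exact fun hc => hc.2 hx
    · left
      rw [Set.indicator_of_notMem hx]
  -- the function G
  set G : X → ℂ := fun x => E.indicator (fun y => ((q : ℝ) : ℂ) * F y) x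
      + (S \ E).indicator (fun y => ((-p : ℝ) : ℂ) * F y) x with hG
  have hGint : Integrable G μ := (ind_int E hEm _).add (ind_int (S \ E) hDm _)
  set g : Lp ℂ 1 μ := hGint.toL1 G with hg
  have hgco : ⇑g =ᵐ[μ] G := hGint.coeFn_toL1
  -- decomposition of f itself
  have hf_rep : ⇑f =ᵐ[μ] fun x => E.indicator (fun y => (1:ℂ) * F y) x
      + (S \ E).indicator (fun y => (1:ℂ) * F y) x := by
    refine Filter.Eventually.of_forall fun x => ?_
    by_cases hxE : x ∈ E
    · have hxD : x ∉ S \ E := fun hc => hc.2 hxE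
      simp [hF, Set.indicator_of_mem hxE, Set.indicator_of_notMem hxD]
    · by_cases hxS : x ∈ S
      · have hxD : x ∈ S \ E := ⟨hxS, hxE⟩
        simp [hF, Set.indicator_of_notMem hxE, Set.indicator_of_mem hxD]
      · have hxD : x ∉ S \ E := fun hc => hxS hc.1
        have hz : ⇑f x = 0 := hFzero x hxS
        simp [Set.indicator_of_notMem hxE, Set.indicator_of_notMem hxD, hz]
  have hnormf : ‖f‖ = p + q := by
    have := norm_two_ind 1 1 f hf_rep
    simpa using this
  -- representation of f + c • g
  have hrep_fg : ∀ c : ℂ, ⇑(f + c • g) =ᵐ[μ]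
      fun x => E.indicator (fun y => (1 + c * (q:ℂ)) * F y) x
        + (S \ E).indicator (fun y => (1 - c * (p:ℂ)) * F y) x := by
    intro c
    filter_upwards [coeFn_add_smul f g c, hgco] with x h1 h2
    rw [h1, h2]
    by_cases hxE : x ∈ E
    · have hxD : x ∉ S \ E := fun hc => hc.2 hxE
      simp only [hG, Set.indicator_of_mem hxE, Set.indicator_of_notMem hxD, add_zero]
      ring
    · by_cases hxS : x ∈ S
      · have hxD : x ∈ S \ E := ⟨hxS, hxE⟩
        simp only [hG, Set.indicator_of_notMem hxE, Set.indicator_of_mem hxD, zero_add]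
        push_cast
        ring
      · have hxD : x ∉ S \ E := fun hc => hxS hc.1
        have hz : ⇑f x = 0 := hFzero x hxS
        simp [hG, Set.indicator_of_notMem hxE, Set.indicator_of_notMem hxD, hz]
  have horth : ∀ c : ℂ, ‖f‖ ≤ ‖f + c • g‖ := by
    intro c
    rw [hnormf, norm_two_ind _ _ _ (hrep_fg c)]
    have h1 : 1 + q * c.re ≤ ‖1 + c * (q:ℂ)‖ := by
      have := Complex.re_le_norm (1 + c * (q:ℂ))
      refine le_trans (le_of_eq ?_) this
      simp [Complex.add_re, Complex.mul_re]
      ring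
    have h2 : 1 - p * c.re ≤ ‖1 - c * (p:ℂ)‖ := by
      have := Complex.re_le_norm (1 - c * (p:ℂ))
      refine le_trans (le_of_eq ?_) this
      simp [Complex.sub_re, Complex.mul_re]
      ring
    nlinarith [mul_le_mul_of_nonneg_right h1 p0.le, mul_le_mul_of_nonneg_right h2 q0.le]
  have hLg := lsym g horth
  have hgnorm : ‖g‖ = 2 * (p * q) := by
    have := norm_two_ind ((q : ℝ) : ℂ) ((-p : ℝ) : ℂ) g hgco
    rw [this, Complex.norm_real, Complex.norm_real, Real.norm_eq_abs, Real.norm_eq_abs,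
      abs_of_pos q0, abs_of_neg (neg_lt_zero.mpr p0)]
    ring
  -- apply left symmetry at c = p and c = -q
  have hc1 := hLg ((p : ℝ) : ℂ)
  have hc2 := hLg ((-q : ℝ) : ℂ)
  have hrep1 : ⇑(g + ((p : ℝ) : ℂ) • f) =ᵐ[μ]
      fun x => E.indicator (fun y => (((q + p : ℝ)) : ℂ) * F y) x
        + (S \ E).indicator (fun y => (0 : ℂ) * F y) x := by
    filter_upwards [coeFn_add_smul g f ((p : ℝ) : ℂ), hgco] with x h1 h2
    rw [h1, h2]
    by_cases hxE : x ∈ E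
    · have hxD : x ∉ S \ E := fun hc => hc.2 hxE
      simp only [hG, Set.indicator_of_mem hxE, Set.indicator_of_notMem hxD, add_zero]
      push_cast
      ring
    · by_cases hxS : x ∈ S
      · have hxD : x ∈ S \ E := ⟨hxS, hxE⟩
        simp only [hG, Set.indicator_of_notMem hxE, Set.indicator_of_mem hxD, zero_add]
        push_cast
        ring
      · have hxD : x ∉ S \ E := fun hc => hxS hc.1
        have hz : ⇑f x = 0 := hFzero x hxS
        simp [hG, Set.indicator_of_notMem hxE, Set.indicator_of_notMem hxD, hz]
  have hrep2 : ⇑(g + ((-q : ℝ) : ℂ) • f) =ᵐ[μ]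
      fun x => E.indicator (fun y => (0 : ℂ) * F y) x
        + (S \ E).indicator (fun y => (((-(p + q) : ℝ)) : ℂ) * F y) x := by
    filter_upwards [coeFn_add_smul g f ((-q : ℝ) : ℂ), hgco] with x h1 h2
    rw [h1, h2]
    by_cases hxE : x ∈ E
    · have hxD : x ∉ S \ E := fun hc => hc.2 hxE
      simp only [hG, Set.indicator_of_mem hxE, Set.indicator_of_notMem hxD, add_zero]
      push_cast
      ring
    · by_cases hxS : x ∈ S
      · have hxD : x ∈ S \ E := ⟨hxS, hxE⟩
        simp only [hG, Set.indicator_of_notMem hxE, Set.indicator_of_mem hxD, zero_add]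
        push_cast
        ring
      · have hxD : x ∉ S \ E := fun hc => hxS hc.1
        have hz : ⇑f x = 0 := hFzero x hxS
        simp [hG, Set.indicator_of_notMem hxE, Set.indicator_of_notMem hxD, hz]
  have hn1 := norm_two_ind _ _ _ hrep1
  have hn2 := norm_two_ind _ _ _ hrep2
  rw [hgnorm, hn1] at hc1
  rw [hgnorm, hn2] at hc2
  rw [Complex.norm_real, Real.norm_eq_abs, abs_of_pos (by linarith : (0:ℝ) < q + p)] at hc1
  rw [Complex.norm_real, Real.norm_eq_abs, abs_of_neg (by linarith : (-(p+q):ℝ) < 0)] at hc2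
  simp only [norm_zero, zero_mul, add_zero, zero_add] at hc1 hc2
  -- hc1 : 2*(p*q) ≤ (q+p)*p ; hc2 : 2*(p*q) ≤ (p+q)*q
  have hle1 : q ≤ p := by
    by_contra hgt
    push_neg at hgt
    nlinarith
  have hle2 : p ≤ q := by
    by_contra hgt
    push_neg at hgt
    nlinarith
  linarith
end

section

variable {X : Type*} [MeasurableSpace X] {μ : Measure X}




lemma mp_dir (X : Type*) [MeasurableSpace X] (μ : Measure X)
    [SigmaFinite μ] (f : Lp ℂ 1 μ) :
    (∀ g : Lp ℂ 1 μ, (∀ c : ℂ, ‖f‖ ≤ ‖f + c • g‖) → (∀ c : ℂ, ‖g‖ ≤ ‖g + c • f‖)) →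
      (f = 0 ∨
        (0 < μ Set.univ ∧ (∀ A : Set X, MeasurableSet A → μ A = 0 ∨ μ Aᶜ = 0) ∧ f ≠ 0) ∨
        (∃ A B : Set X, IsMeasAtom μ A ∧ IsMeasAtom μ B ∧ Disjoint A B ∧
          μ A < ⊤ ∧ μ B < ⊤ ∧ μ (A ∪ B)ᶜ = 0 ∧
          ∃ a b : ℝ, 0 < a ∧ 0 < b ∧
            (∀ᵐ x ∂μ.restrict A, ‖f x‖ = a) ∧
            (∀ᵐ y ∂μ.restrict B, ‖f y‖ = b) ∧
            (μ A).toReal * a = (μ B).toReal * b)) := by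
  intro lsym
  by_cases hf0 : f = 0
  · exact Or.inl hf0
  right
  have hFm : Measurable (⇑f) := (Lp.stronglyMeasurable f).measurable
  have hfint : Integrable (⇑f) μ := L1.integrable_coeFn f
  have hSm : MeasurableSet {x | f x ≠ 0} := (hFm (measurableSet_singleton 0)).compl
  have hSc : μ {x | f x ≠ 0}ᶜ = 0 := step_compl_null f lsym hf0
  have hSpos : 0 < μ {x | f x ≠ 0} := by
    rcases eq_or_lt_of_le (show (0:ℝ≥0∞) ≤ μ {x | f x ≠ 0} from zero_le) with h | h
    · exfalso
      apply hf0
      apply Lp.ext (p := (1 : ℝ≥0∞)) (μ := μ)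
      have hae : ∀ᵐ x ∂μ, f x = 0 := by
        rw [ae_iff]
        exact h.symm
      filter_upwards [hae, Lp.coeFn_zero (E := ℂ) (p := (1:ℝ≥0∞)) (μ := μ)] with x h1 h2
      rw [h1, h2]; rfl
    · exact h
  -- the measure ν E = ∫_E ‖f‖ ; vanishing lemma
  have hνzero : ∀ E : Set X, MeasurableSet E → (∫ x in E, ‖f x‖ ∂μ) = 0 →
      μ (E ∩ {x | f x ≠ 0}) = 0 := by
    intro E hEm h0
    have hnn : 0 ≤ᵐ[μ.restrict E] fun x => ‖f x‖ :=
      Filter.Eventually.of_forall fun x => norm_nonneg _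
    have hae := (integral_eq_zero_iff_of_nonneg_ae hnn hfint.norm.integrableOn).mp h0
    have : μ.restrict E {x | f x ≠ 0} = 0 := by
      have he : {x | f x ≠ 0} ⊆ {x | ¬ (fun x => ‖f x‖) x = (0 : X → ℝ) x} := by
        intro x hx
        simp only [Set.mem_setOf_eq, Pi.zero_apply, norm_eq_zero]
        exact hx
      exact measure_mono_null he hae
    rw [Measure.restrict_apply hSm] at this
    rwa [Set.inter_comm]
  have hνnn : ∀ E : Set X, 0 ≤ ∫ x in E, ‖f x‖ ∂μ :=
    fun E => integral_nonneg fun x => norm_nonneg _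
  by_cases hsplit : ∃ E : Set X, MeasurableSet E ∧ E ⊆ {x | f x ≠ 0} ∧
      (∫ x in E, ‖f x‖ ∂μ) ≠ 0 ∧ (∫ x in {x | f x ≠ 0} \ E, ‖f x‖ ∂μ) ≠ 0
  · -- two-atom case
    right
    obtain ⟨E, hEm, hEsub, hpE, hqE⟩ := hsplit
    have hDm : MeasurableSet ({x | f x ≠ 0} \ E) := hSm.diff hEm
    have hbalEq := step_balance f lsym hEm hEsub hpE hqE
    set m : ℝ := ∫ x in E, ‖f x‖ ∂μ with hm
    have hm0 : 0 < m := lt_of_le_of_ne (hνnn E) (Ne.symm hpE)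
    -- additivity helper
    have hadd : ∀ {s t : Set X}, Disjoint s t → MeasurableSet t →
        (∫ x in s ∪ t, ‖f x‖ ∂μ) = (∫ x in s, ‖f x‖ ∂μ) + ∫ x in t, ‖f x‖ ∂μ :=
      fun hst ht => setIntegral_union hst ht hfint.norm.integrableOn hfint.norm.integrableOn
    -- atom proof for both sides, generic in (C ⊆ T), with S \ T on the other side
    have hatom : ∀ T : Set X, MeasurableSet T → T ⊆ {x | f x ≠ 0} →
        (∫ x in T, ‖f x‖ ∂μ) = m → (∫ x in {x | f x ≠ 0} \ T, ‖f x‖ ∂μ) = m →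
        IsMeasAtom μ T := by
      intro T hTm hTsub hνT hνT'
      refine ⟨hTm, ?_, ?_⟩
      · rcases eq_or_lt_of_le (show (0:ℝ≥0∞) ≤ μ T from zero_le) with h | h
        · exfalso
          have : (∫ x in T, ‖f x‖ ∂μ) = 0 := by
            rw [Measure.restrict_eq_zero.mpr h.symm, integral_zero_measure]
          rw [this] at hνT
          linarith
        · exact h
      · intro C hCsub hCm
        rcases eq_or_ne (∫ x in C, ‖f x‖ ∂μ) 0 with h | h
        · left
          have := hνzero C hCm h
          rwa [Set.inter_eq_self_of_subset_left (hCsub.trans hTsub)] at this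
        · rcases eq_or_ne (∫ x in T \ C, ‖f x‖ ∂μ) 0 with h' | h'
          · right
            have := hνzero (T \ C) (hTm.diff hCm) h'
            rwa [Set.inter_eq_self_of_subset_left
              ((Set.diff_subset).trans hTsub)] at this
          · exfalso
            -- ν C + ν (T\C) = m  and  ν (S\C) = ν (T\C) + ν (S\T)
            have hTdecomp : (∫ x in T, ‖f x‖ ∂μ)
                = (∫ x in C, ‖f x‖ ∂μ) + ∫ x in T \ C, ‖f x‖ ∂μ := by
              calc (∫ x in T, ‖f x‖ ∂μ)
                  = ∫ x in C ∪ (T \ C), ‖f x‖ ∂μ := by rw [Set.union_diff_cancel hCsub]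
                _ = _ := hadd Set.disjoint_sdiff_right (hTm.diff hCm)
            have hSdecomp : {x | f x ≠ 0} \ C = (T \ C) ∪ ({x | f x ≠ 0} \ T) := by
              ext x
              simp only [Set.mem_diff, Set.mem_union]
              constructor
              · intro ⟨hxS, hxC⟩
                by_cases hxT : x ∈ T
                · exact Or.inl ⟨hxT, hxC⟩
                · exact Or.inr ⟨hxS, hxT⟩
              · intro hx
                rcases hx with ⟨hxT, hxC⟩ | ⟨hxS, hxT⟩
                · exact ⟨hTsub hxT, hxC⟩
                · exact ⟨hxS, fun hc => hxT (hCsub hc)⟩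
            have hdisj2 : Disjoint (T \ C) ({x | f x ≠ 0} \ T) := by
              refine Set.disjoint_left.mpr ?_
              intro x hx1 hx2
              exact hx2.2 hx1.1
            have hSCval : (∫ x in {x | f x ≠ 0} \ C, ‖f x‖ ∂μ)
                = (∫ x in T \ C, ‖f x‖ ∂μ) + m := by
              rw [hSdecomp, hadd hdisj2 (hSm.diff hTm), hνT']
            have hSCne : (∫ x in {x | f x ≠ 0} \ C, ‖f x‖ ∂μ) ≠ 0 := by
              rw [hSCval]
              have := hνnn (T \ C)
              intro hcon
              linarith
            have hbalC := step_balance f lsym hCm (hCsub.trans hTsub) h hSCne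
            rw [hSCval] at hbalC
            have h1 := hνnn C
            have h2 := hνnn (T \ C)
            have h3 : (∫ x in C, ‖f x‖ ∂μ) ≤ m := by
              rw [← hνT, hTdecomp]; linarith
            have h4 : (∫ x in T \ C, ‖f x‖ ∂μ) = 0 := by linarith
            exact h' h4
    have hatomA : IsMeasAtom μ E := hatom E hEm hEsub hm.symm hbalEq.symm
    have hDsub : {x | f x ≠ 0} \ E ⊆ {x | f x ≠ 0} := Set.diff_subset
    have hSdiffD : {x | f x ≠ 0} \ ({x | f x ≠ 0} \ E) = E := by
      ext x
      simp only [Set.mem_diff, not_and, not_not]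
      constructor
      · intro ⟨hxS, hx⟩
        by_contra hxE
        exact hxE (by_contra fun hc => hc (hx hxS))
      · intro hxE
        exact ⟨hEsub hxE, fun _ => hxE⟩
    have hatomB : IsMeasAtom μ ({x | f x ≠ 0} \ E) := by
      refine hatom _ hDm hDsub hbalEq.symm ?_
      rw [hSdiffD]
    -- constants on each atom
    obtain ⟨c₁, hc₁⟩ := hatomA.ae_const hFm
    obtain ⟨c₂, hc₂⟩ := hatomB.ae_const hFm
    -- value of ν on the atoms
    have hval : ∀ T : Set X, MeasurableSet T → (cT : ℂ) →
        (∀ᵐ x ∂μ.restrict T, f x = cT) →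
        (∫ x in T, ‖f x‖ ∂μ) = (μ T).toReal * ‖cT‖ := by
      intro T hTm cT hcT
      have hcongr : (fun x => ‖f x‖) =ᵐ[μ.restrict T] fun _ => ‖cT‖ :=
        hcT.mono fun x hx => by simp only [hx]
      rw [integral_congr_ae hcongr, integral_const, measureReal_restrict_apply_univ, measureReal_def, smul_eq_mul]
    have hvalA := hval E hEm c₁ hc₁
    have hvalB := hval _ hDm c₂ hc₂
    have ha : 0 < ‖c₁‖ := by
      rcases eq_or_lt_of_le (norm_nonneg c₁) with h | h
      · exfalso
        have hmz : m = 0 := by rw [hm, hvalA, ← h, mul_zero]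
        linarith
      · exact h
    have hb : 0 < ‖c₂‖ := by
      rcases eq_or_lt_of_le (norm_nonneg c₂) with h | h
      · exfalso
        have hmz : m = 0 := by rw [hbalEq, hvalB, ← h, mul_zero]
        linarith
      · exact h
    -- finiteness
    have hfinT : ∀ T : Set X, MeasurableSet T → (cT : ℂ) → cT ≠ 0 →
        (∀ᵐ x ∂μ.restrict T, f x = cT) → μ T < ⊤ := by
      intro T hTm cT hcTne hcT
      have hion : IntegrableOn (⇑f) T μ := hfint.integrableOn
      have hconst : IntegrableOn (fun _ => cT) T μ := hion.congr_fun_ae hcT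
      rcases integrable_const_iff.mp hconst with h | h
      · exact absurd h hcTne
      · have h := h.measure_univ_lt_top
        rwa [Measure.restrict_apply_univ] at h
    have hAfin := hfinT E hEm c₁ (fun h => by rw [h, norm_zero] at ha; exact lt_irrefl _ ha) hc₁
    have hBfin := hfinT _ hDm c₂ (fun h => by rw [h, norm_zero] at hb; exact lt_irrefl _ hb) hc₂
    refine ⟨E, {x | f x ≠ 0} \ E, hatomA, hatomB, disjoint_sdiff_self_right, hAfin, hBfin, ?_, ‖c₁‖, ‖c₂‖, ha, hb, ?_, ?_, ?_⟩
    · rw [Set.union_diff_cancel hEsub]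
      exact hSc
    · exact hc₁.mono fun x hx => by rw [hx]
    · exact hc₂.mono fun x hx => by rw [hx]
    · rw [← hvalA, ← hvalB, ← hm]
      exact hbalEq
  · -- trivial σ-algebra case
    left
    refine ⟨lt_of_lt_of_le hSpos (measure_mono (Set.subset_univ _)), ?_, hf0⟩
    intro A hAm
    push_neg at hsplit
    have hEm : MeasurableSet (A ∩ {x | f x ≠ 0}) := hAm.inter hSm
    have hEsub : A ∩ {x | f x ≠ 0} ⊆ {x | f x ≠ 0} := Set.inter_subset_right
    rcases eq_or_ne (∫ x in A ∩ {x | f x ≠ 0}, ‖f x‖ ∂μ) 0 with h | h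
    · left
      have h0 := hνzero _ hEm h
      rw [Set.inter_assoc, Set.inter_self] at h0
      have : A ⊆ (A ∩ {x | f x ≠ 0}) ∪ {x | f x ≠ 0}ᶜ := by
        intro x hx
        by_cases hxS : x ∈ {x | f x ≠ 0}
        · exact Set.mem_union_left _ ⟨hx, hxS⟩
        · exact Set.mem_union_right _ hxS
      exact measure_mono_null this (measure_union_null h0 hSc)
    · right
      have h2 := hsplit _ hEm hEsub h
      have h0 := hνzero _ (hSm.diff hEm) h2
      rw [Set.inter_eq_self_of_subset_left Set.diff_subset] at h0
      have hident : {x | f x ≠ 0} \ (A ∩ {x | f x ≠ 0}) = {x | f x ≠ 0} ∩ Aᶜ := by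
        ext x
        simp only [Set.mem_diff, Set.mem_inter_iff, Set.mem_compl_iff]
        tauto
      rw [hident] at h0
      have : Aᶜ ⊆ ({x | f x ≠ 0} ∩ Aᶜ) ∪ {x | f x ≠ 0}ᶜ := by
        intro x hx
        by_cases hxS : x ∈ {x | f x ≠ 0}
        · exact Set.mem_union_left _ ⟨hxS, hx⟩
        · exact Set.mem_union_right _ hxS
      exact measure_mono_null this (measure_union_null h0 hSc)
end


/-- **Left-symmetric points of `L¹`.** For a σ-finite measure space, `f ∈ L¹(X, μ)` is a
left-symmetric point for Birkhoff-James orthogonality iff `f = 0`, or the σ-algebra is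
μ-trivial (and `μ X > 0`, `f ≠ 0`), or `X` is (up to a null set) the union of two disjoint
finite-measure `μ`-atoms `A, B` with `|f| = a` a.e. on `A`, `|f| = b` a.e. on `B` and
`μ(A)·a = μ(B)·b`. -/
theorem left_symmetric_points_L1 (X : Type*) [MeasurableSpace X] (μ : Measure X)
    [SigmaFinite μ] (f : Lp ℂ 1 μ) :
    (∀ g : Lp ℂ 1 μ, (∀ c : ℂ, ‖f‖ ≤ ‖f + c • g‖) → (∀ c : ℂ, ‖g‖ ≤ ‖g + c • f‖)) ↔
      (f = 0 ∨
        (0 < μ Set.univ ∧ (∀ A : Set X, MeasurableSet A → μ A = 0 ∨ μ Aᶜ = 0) ∧ f ≠ 0) ∨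
        (∃ A B : Set X, IsMeasAtom μ A ∧ IsMeasAtom μ B ∧ Disjoint A B ∧
          μ A < ⊤ ∧ μ B < ⊤ ∧ μ (A ∪ B)ᶜ = 0 ∧
          ∃ a b : ℝ, 0 < a ∧ 0 < b ∧
            (∀ᵐ x ∂μ.restrict A, ‖f x‖ = a) ∧
            (∀ᵐ y ∂μ.restrict B, ‖f y‖ = b) ∧
            (μ A).toReal * a = (μ B).toReal * b)) := by
  constructor
  · exact mp_dir X μ f
  · exact mpr_dir X μ f
end
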